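/- arXiv:2008.05391 — 12 statements merged into one kernel-verified Lean document; each statement's English description precedes it below -/
import Mathlib

section
/- There exists a unique real number α ∈ (0,1) satisfying (1−α)·ln(1−α) + (2 − 1/e)·(1 − 2α) = 0, and this root satisfies α > 0.405. -/
open Real Set

private lemma aux_c_lb : (1.6321 : ℝ) < 2 - 1 / Real.exp 1 := by
  have he := Real.exp_one_gt_d9
  have hepos : (0:ℝ) < Real.exp 1 := Real.exp_pos 1
  have : 1 / Real.exp 1 < 0.3679 := by
    rw [div_lt_iff₀ hepos]; nlinarith
  linarith

private lemma aux_c_ub : 2 - 1 / Real.exp 1 < 1.63213 := by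
  have he := Real.exp_one_lt_d9
  have hepos : (0:ℝ) < Real.exp 1 := Real.exp_pos 1
  have : (0.36787 : ℝ) < 1 / Real.exp 1 := by
    rw [lt_div_iff₀ hepos]; nlinarith
  linarith

private lemma aux_log595 : (-0.5207 : ℝ) < Real.log 0.595 := by
  rw [Real.lt_log_iff_exp_lt (by norm_num : (0:ℝ) < 0.595)]
  have hs : (1.6828 : ℝ) ≤ Real.exp 0.5207 := by
    have h := Real.sum_le_exp_of_nonneg (by norm_num : (0:ℝ) ≤ 0.5207) 5
    norm_num [Finset.sum_range_succ, Nat.factorial] at h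
    linarith
  have h2 : Real.exp (-0.5207) * Real.exp 0.5207 = 1 := by
    rw [← Real.exp_add]; norm_num
  nlinarith [Real.exp_pos (-0.5207 : ℝ)]

private lemma aux_log55 : Real.log 0.55 < -0.3 := by
  rw [Real.log_lt_iff_lt_exp (by norm_num : (0:ℝ) < 0.55)]
  have := Real.add_one_le_exp (-0.3 : ℝ)
  linarith

private lemma aux_deriv (c : ℝ) {x : ℝ} (hx : x < 1) :
    HasDerivAt (fun α : ℝ => (1 - α) * Real.log (1 - α) + c * (1 - 2 * α))
      (-Real.log (1 - x) - 1 - 2 * c) x := by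
  have h0 : (1:ℝ) - x ≠ 0 := ne_of_gt (by linarith)
  have h1 : HasDerivAt (fun α : ℝ => 1 - α) (-1) x := by
    simpa using (hasDerivAt_id x).const_sub 1
  have h2 : HasDerivAt (fun α : ℝ => Real.log (1 - α)) (-1 / (1 - x)) x := h1.log h0
  have h3 : HasDerivAt (fun α : ℝ => c * (1 - 2 * α)) (c * (-2)) x := by
    have h4 : HasDerivAt (fun α : ℝ => 1 - 2 * α) (-2) x := by
      simpa using ((hasDerivAt_id x).const_mul 2).const_sub 1
    simpa using h4.const_mul c
  have h := (h1.mul h2).add h3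
  refine h.congr_deriv ?_
  have h5 : (1 - x) * (-1 / (1 - x)) = -1 := by
    rw [mul_div_assoc', mul_neg_one, neg_div, div_self h0]
  rw [h5]
  ring

private lemma aux_cont (c : ℝ) :
    ContinuousOn (fun α : ℝ => (1 - α) * Real.log (1 - α) + c * (1 - 2 * α))
      (Set.Icc 0 (1/2)) := by
  apply ContinuousOn.add
  · exact ((continuous_const.sub continuous_id).continuousOn).mul
      (((continuous_const.sub continuous_id).continuousOn).log
        (fun x hx => by simp only [Set.mem_Icc] at hx; intro h; simp at h; linarith [hx.2]))
  · exact (continuous_const.mul (continuous_const.sub (continuous_const.mul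
      continuous_id))).continuousOn

private lemma aux_anti :
    StrictAntiOn (fun α : ℝ => (1 - α) * Real.log (1 - α) +
      (2 - 1 / Real.exp 1) * (1 - 2 * α)) (Set.Icc 0 (1/2)) := by
  apply strictAntiOn_of_deriv_neg (convex_Icc _ _) (aux_cont _)
  intro x hx
  rw [interior_Icc, Set.mem_Ioo] at hx
  rw [(aux_deriv _ (by linarith [hx.2] : x < 1)).deriv]
  have hlog : Real.log (1/2) ≤ Real.log (1 - x) := by
    apply Real.log_le_log (by norm_num)
    linarith [hx.2]
  have h2 : Real.log (1/2) = -Real.log 2 := by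
    rw [one_div, Real.log_inv]
  have hl2 : Real.log 2 < 0.6931471808 := Real.log_two_lt_d9
  have hc := aux_c_lb
  linarith

/-- There exists a unique real number α ∈ (0,1) satisfying
(1−α)·ln(1−α) + (2 − 1/e)·(1 − 2α) = 0, and this root satisfies α > 0.405. -/
theorem stmt0 :
    (∃! α : ℝ, α ∈ Set.Ioo (0 : ℝ) 1 ∧
      (1 - α) * Real.log (1 - α) + (2 - 1 / Real.exp 1) * (1 - 2 * α) = 0) ∧
    (∀ α : ℝ, α ∈ Set.Ioo (0 : ℝ) 1 →
      (1 - α) * Real.log (1 - α) + (2 - 1 / Real.exp 1) * (1 - 2 * α) = 0 →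
      0.405 < α) := by
  set f : ℝ → ℝ := fun α => (1 - α) * Real.log (1 - α) + (2 - 1 / Real.exp 1) * (1 - 2 * α)
    with hf
  have hc1 := aux_c_lb
  have hc2 := aux_c_ub
  -- f(0.405) > 0
  have hpos : 0 < f 0.405 := by
    have h1 : f 0.405 = 0.595 * Real.log 0.595 + (2 - 1 / Real.exp 1) * 0.19 := by
      simp only [hf]; norm_num
    have := aux_log595
    nlinarith
  -- f(0.45) < 0
  have hneg : f 0.45 < 0 := by
    have h1 : f 0.45 = 0.55 * Real.log 0.55 + (2 - 1 / Real.exp 1) * 0.1 := by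
      simp only [hf]; norm_num
    have := aux_log55
    nlinarith
  -- any root in (0,1) is < 1/2
  have hhalf : ∀ α ∈ Set.Ioo (0:ℝ) 1, f α = 0 → α < 1/2 := by
    intro α hα hroot
    by_contra h
    push_neg at h
    have hl : Real.log (1 - α) < 0 :=
      Real.log_neg (by linarith [hα.2]) (by linarith [hα.1])
    have h1 : (1 - α) * Real.log (1 - α) < 0 :=
      mul_neg_of_pos_of_neg (by linarith [hα.2]) hl
    have h2 : (2 - 1 / Real.exp 1) * (1 - 2 * α) ≤ 0 :=
      mul_nonpos_of_nonneg_of_nonpos (by linarith) (by linarith)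
    simp only [hf] at hroot
    linarith
  -- any root in (0,1) is > 0.405
  have hgt : ∀ α ∈ Set.Ioo (0:ℝ) 1, f α = 0 → 0.405 < α := by
    intro α hα hroot
    by_contra h
    push_neg at h
    have hmem : α ∈ Set.Icc (0:ℝ) (1/2) := ⟨le_of_lt hα.1, by linarith⟩
    have hmem' : (0.405:ℝ) ∈ Set.Icc (0:ℝ) (1/2) := by norm_num
    rcases lt_or_eq_of_le h with h' | h'
    · have h5 : f 0.405 < f α := aux_anti hmem hmem' h'
      rw [hroot] at h5
      linarith
    · rw [h'] at hroot
      linarith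
  -- existence via IVT
  have hsub : Set.Icc (0.405:ℝ) 0.45 ⊆ Set.Icc (0:ℝ) (1/2) := by
    intro x hx; exact ⟨by linarith [hx.1], by linarith [hx.2]⟩
  have hivt := intermediate_value_Icc' (by norm_num : (0.405:ℝ) ≤ 0.45)
    ((aux_cont (2 - 1 / Real.exp 1)).mono hsub)
  have h0mem : (0:ℝ) ∈ Set.Icc (f 0.45) (f 0.405) := ⟨le_of_lt hneg, le_of_lt hpos⟩
  obtain ⟨α₀, hα₀mem, hα₀⟩ := hivt h0mem
  have hα₀Ioo : α₀ ∈ Set.Ioo (0:ℝ) 1 :=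
    ⟨by linarith [hα₀mem.1], by linarith [hα₀mem.2]⟩
  refine ⟨⟨α₀, ⟨hα₀Ioo, hα₀⟩, ?_⟩, hgt⟩
  rintro β ⟨hβIoo, hβ⟩
  have hβmem : β ∈ Set.Icc (0:ℝ) (1/2) := ⟨le_of_lt hβIoo.1, le_of_lt (hhalf β hβIoo hβ)⟩
  have hα₀mem' : α₀ ∈ Set.Icc (0:ℝ) (1/2) :=
    ⟨le_of_lt hα₀Ioo.1, le_of_lt (hhalf α₀ hα₀Ioo hα₀)⟩
  have hinj := aux_anti.injOn
  exact hinj hβmem hα₀mem' (hβ.trans hα₀.symm)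
end

section
/- Let u_1, …, u_s be distinct elements of V with prefix sets S_i := {u_1, …, u_i} (S_0 = ∅), and let T ⊆ V be a finset with c(T) > 0 such that for every 0 ≤ i < s and every v ∈ T \ S_i one has f(u_{i+1} ∣ S_i) · c v ≥ f(v ∣ S_i) · c (u_{i+1}). Then f(S_s) ≥ (1 − exp(−c(S_s)/c(T))) · f(T). -/
open Finset

lemma aux_sub' {V : Type*} [DecidableEq V] (f : Finset V → ℝ)
    (hsub : ∀ S T : Finset V, f (S ∪ T) + f (S ∩ T) ≤ f S + f T) :
    ∀ (B A : Finset V), f (A ∪ B) ≤ f A + ∑ v ∈ B \ A, (f (insert v A) - f A) := by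
  intro B
  induction B using Finset.induction_on with
  | empty => intro A; simp
  | @insert b B' hb ih =>
    intro A
    by_cases hbA : b ∈ A
    · have h1 : A ∪ insert b B' = A ∪ B' := by
        ext x; simp only [mem_union, mem_insert]
        constructor
        · rintro (h | rfl | h) <;> tauto
        · tauto
      have h2 : insert b B' \ A = B' \ A := by
        ext x; simp only [mem_sdiff, mem_insert]
        constructor
        · rintro ⟨rfl | h, hA⟩ <;> tauto
        · tauto
      rw [h1, h2]; exact ih A
    · have h1 : A ∪ insert b B' = insert b (A ∪ B') := by
        ext x; simp only [mem_union, mem_insert]; tauto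
      have h2 : insert b B' \ A = insert b (B' \ A) := by
        ext x; simp only [mem_sdiff, mem_insert]
        constructor
        · rintro ⟨rfl | h, hA⟩ <;> tauto
        · rintro (rfl | ⟨h, hA⟩) <;> tauto
      have hbnot : b ∉ B' \ A := by simp [hb]
      have hsm := hsub (insert b A) (A ∪ B')
      have hint : insert b A ∩ (A ∪ B') = A := by
        ext x; simp only [mem_inter, mem_insert, mem_union]
        constructor
        · rintro ⟨rfl | h, hA | hB⟩ <;> tauto
        · tauto
      have hun : insert b A ∪ (A ∪ B') = insert b (A ∪ B') := by
        ext x; simp only [mem_union, mem_insert]; tauto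
      rw [hint, hun] at hsm
      have hih := ih A
      rw [h1, h2, Finset.sum_insert hbnot]
      linarith

/-- Lemma 3.1: if u_1,…,u_s are distinct with prefix sets S_i and the greedy rule
holds against every element of T not yet picked, then
f(S_s) ≥ (1 − exp(−c(S_s)/c(T))) · f(T). -/
theorem stmt2 {V : Type*} [Fintype V] [DecidableEq V]
    (f : Finset V → ℝ) (c : V → ℝ)
    (hf0 : f ∅ = 0)
    (hmono : ∀ S T : Finset V, S ⊆ T → f S ≤ f T)
    (hsub : ∀ S T : Finset V, f (S ∪ T) + f (S ∩ T) ≤ f S + f T)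
    (hcpos : ∀ v : V, 0 < c v)
    (s : ℕ) (u : ℕ → V)
    (hinj : ∀ i j : ℕ, i < s → j < s → u i = u j → i = j)
    (S : ℕ → Finset V) (hS : ∀ i : ℕ, S i = (Finset.range i).image u)
    (T : Finset V) (hT : 0 < ∑ v ∈ T, c v)
    (hrule : ∀ i : ℕ, i < s → ∀ v ∈ T \ S i,
      (f (insert (u i) (S i)) - f (S i)) * c v ≥
      (f (insert v (S i)) - f (S i)) * c (u i)) :
    f (S s) ≥ (1 - Real.exp (-(∑ v ∈ S s, c v) / (∑ v ∈ T, c v))) * f T := by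
  set C := ∑ v ∈ T, c v with hC
  have hfT : 0 ≤ f T := by
    have h := hmono ∅ T (Finset.empty_subset T); linarith [hf0 ▸ h]
  have hSsucc : ∀ i, S (i+1) = insert (u i) (S i) := by
    intro i; rw [hS, hS, Finset.range_add_one, Finset.image_insert]
  have hnotmem : ∀ i, i < s → u i ∉ S i := by
    intro i hi hmem
    rw [hS] at hmem
    simp only [Finset.mem_image, Finset.mem_range] at hmem
    obtain ⟨j, hj, hji⟩ := hmem
    have := hinj j i (hj.trans hi) hi hji
    omega
  have key : ∀ i, i ≤ s → f T - f (S i) ≤ Real.exp (-(∑ v ∈ S i, c v) / C) * f T := by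
    intro i
    induction i with
    | zero =>
      intro _
      rw [hS]
      simp [hf0]
    | succ i ih =>
      intro hi1
      have hi : i < s := hi1
      have hprev := ih (le_of_lt hi)
      have hmarg : f T - f (S i) ≤ ∑ v ∈ T \ S i, (f (insert v (S i)) - f (S i)) := by
        have h1 := aux_sub' f hsub T (S i)
        have h2 := hmono T (S i ∪ T) Finset.subset_union_right
        linarith
      set δ := f (S (i+1)) - f (S i) with hδ
      have hδ0 : 0 ≤ δ := by
        have := hmono (S i) (S (i+1)) (by rw [hSsucc]; exact Finset.subset_insert _ _)
        linarith
      have hsum1 : (∑ v ∈ T \ S i, (f (insert v (S i)) - f (S i))) * c (u i)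
          ≤ δ * ∑ v ∈ T \ S i, c v := by
        rw [Finset.sum_mul, Finset.mul_sum]
        apply Finset.sum_le_sum
        intro v hv
        have := hrule i hi v hv
        rw [hδ, hSsucc]
        linarith
      have hsum2 : ∑ v ∈ T \ S i, c v ≤ C := by
        apply Finset.sum_le_sum_of_subset_of_nonneg (Finset.sdiff_subset)
        intro v _ _; exact (hcpos v).le
      have hgc : (f T - f (S i)) * c (u i) ≤ δ * C := by
        calc (f T - f (S i)) * c (u i)
            ≤ (∑ v ∈ T \ S i, (f (insert v (S i)) - f (S i))) * c (u i) := by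
              apply mul_le_mul_of_nonneg_right hmarg (hcpos (u i)).le
          _ ≤ δ * ∑ v ∈ T \ S i, c v := hsum1
          _ ≤ δ * C := mul_le_mul_of_nonneg_left hsum2 hδ0
      have hcsum : (∑ v ∈ S (i+1), c v) = (∑ v ∈ S i, c v) + c (u i) := by
        rw [hSsucc, Finset.sum_insert (hnotmem i hi)]; ring
      set g := f T - f (S i) with hg
      have hgoal : f T - f (S (i+1)) = g - δ := by rw [hg, hδ]; ring
      rw [hgoal, hcsum]
      have hexp : Real.exp (-((∑ v ∈ S i, c v) + c (u i)) / C)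
          = Real.exp (-(∑ v ∈ S i, c v) / C) * Real.exp (-(c (u i)) / C) := by
        rw [← Real.exp_add]; congr 1; field_simp; ring
      rw [hexp]
      rcases le_or_gt g 0 with hgle | hgpos
      · have : 0 ≤ Real.exp (-(∑ v ∈ S i, c v) / C) * Real.exp (-(c (u i)) / C) * f T :=
          mul_nonneg (mul_nonneg (Real.exp_pos _).le (Real.exp_pos _).le) hfT
        linarith
      · have hdiv : g * (c (u i) / C) ≤ δ := by
          rw [mul_div_assoc'] at *
          rw [div_le_iff₀ hT]
          linarith
        have h1x : 1 - c (u i) / C ≤ Real.exp (-(c (u i)) / C) := by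
          have := Real.add_one_le_exp (-(c (u i)) / C)
          have hrw : -(c (u i)) / C = -(c (u i) / C) := by ring
          rw [hrw] at this ⊢
          linarith
        calc g - δ ≤ g * (1 - c (u i) / C) := by nlinarith
          _ ≤ g * Real.exp (-(c (u i)) / C) :=
              mul_le_mul_of_nonneg_left h1x hgpos.le
          _ ≤ (Real.exp (-(∑ v ∈ S i, c v) / C) * f T) * Real.exp (-(c (u i)) / C) :=
              mul_le_mul_of_nonneg_right hprev (Real.exp_pos _).le
          _ = Real.exp (-(∑ v ∈ S i, c v) / C) * Real.exp (-(c (u i)) / C) * f T := by ring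
  have hfinal := key s le_rfl
  rw [sub_mul, one_mul]
  linarith
end

section
/- Let u_1, …, u_s be distinct elements of V with prefix sets S_i := {u_1, …, u_i} (S_0 = ∅), let b > 0, and let T ⊆ V be a finset with 0 < c(T) ≤ b such that for every 0 ≤ i < s and every v ∈ T \ S_i one has f(u_{i+1} ∣ S_i) · c v ≥ f(v ∣ S_i) · c (u_{i+1}). Then for every finset S' with S_s ⊆ S', it holds that f(S') ≥ (1 − exp(−c(S_s)/b)) · f(T). -/
open Finset

private lemma sum_marginal_aux {V : Type*} [DecidableEq V]
    (f : Finset V → ℝ)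
    (hsub : ∀ S T : Finset V, f (S ∪ T) + f (S ∩ T) ≤ f S + f T) :
    ∀ (D A : Finset V), f (A ∪ D) - f A ≤ ∑ v ∈ D, (f (insert v A) - f A) := by
  intro D
  induction D using Finset.induction_on with
  | empty => simp
  | @insert w D' hw ih =>
    intro A
    have h1 : A ∪ insert w D' = insert w (A ∪ D') := by
      ext x; simp
    have h2 : (insert w A) ∪ (A ∪ D') = insert w (A ∪ D') := by
      ext x; simp
    have h3 : (insert w A) ∩ (A ∪ D') = A := by
      ext x
      simp only [Finset.mem_inter, Finset.mem_insert, Finset.mem_union]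
      constructor
      · rintro ⟨h | h, h' | h'⟩ <;> first
        | assumption
        | (exfalso; exact hw (h ▸ h'))
      · tauto
    have hs := hsub (insert w A) (A ∪ D')
    rw [h2, h3] at hs
    have hi := ih A
    rw [Finset.sum_insert hw, h1]
    linarith

/-- Corollary 3.2 style statement: under the greedy rule against T (with 0 < c(T) ≤ b),
every superset S' of S_s satisfies f(S') ≥ (1 − exp(−c(S_s)/b)) · f(T). -/
theorem stmt3 {V : Type*} [Fintype V] [DecidableEq V]
    (f : Finset V → ℝ) (c : V → ℝ) (b : ℝ)
    (hf0 : f ∅ = 0)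
    (hmono : ∀ S T : Finset V, S ⊆ T → f S ≤ f T)
    (hsub : ∀ S T : Finset V, f (S ∪ T) + f (S ∩ T) ≤ f S + f T)
    (hcpos : ∀ v : V, 0 < c v)
    (hb : 0 < b)
    (s : ℕ) (u : ℕ → V)
    (hinj : ∀ i j : ℕ, i < s → j < s → u i = u j → i = j)
    (S : ℕ → Finset V) (hS : ∀ i : ℕ, S i = (Finset.range i).image u)
    (T : Finset V) (hTpos : 0 < ∑ v ∈ T, c v) (hTb : ∑ v ∈ T, c v ≤ b)
    (hrule : ∀ i : ℕ, i < s → ∀ v ∈ T \ S i,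
      (f (insert (u i) (S i)) - f (S i)) * c v ≥
      (f (insert v (S i)) - f (S i)) * c (u i)) :
    ∀ S' : Finset V, S s ⊆ S' →
      f S' ≥ (1 - Real.exp (-(∑ v ∈ S s, c v) / b)) * f T := by
  have hfT : 0 ≤ f T := hf0 ▸ hmono ∅ T (Finset.empty_subset T)
  -- monotonicity of f along S i
  have key : ∀ i : ℕ, i ≤ s →
      f T - f (S i) ≤ Real.exp (-(∑ v ∈ S i, c v) / b) * f T := by
    intro i
    induction i with
    | zero =>
      intro _
      have h0 : S 0 = ∅ := by rw [hS 0]; simp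
      rw [h0, hf0]
      simp
    | succ i ih =>
      intro his
      have hi : i < s := his
      have ihi := ih (le_of_lt hi)
      have hnot : u i ∉ S i := by
        rw [hS i]
        simp only [Finset.mem_image, Finset.mem_range]
        rintro ⟨j, hj, hju⟩
        exact absurd (hinj j i (lt_trans hj hi) hi hju) (Nat.ne_of_lt hj)
      have hSi1 : S (i + 1) = insert (u i) (S i) := by
        rw [hS (i + 1), hS i, Finset.range_add_one, Finset.image_insert]
      have csum : ∑ v ∈ S (i + 1), c v = c (u i) + ∑ v ∈ S i, c v := by
        rw [hSi1, Finset.sum_insert hnot]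
      set M : ℝ := f (insert (u i) (S i)) - f (S i) with hM
      have hMnn : 0 ≤ M :=
        sub_nonneg.mpr (hmono _ _ (Finset.subset_insert _ _))
      have hcu : 0 < c (u i) := hcpos (u i)
      have hexp1 : (0:ℝ) < Real.exp (-(∑ v ∈ S i, c v) / b) := Real.exp_pos _
      have hexp2 : (0:ℝ) < Real.exp (-(c (u i)) / b) := Real.exp_pos _
      have hexpcomb : Real.exp (-(∑ v ∈ S (i+1), c v) / b)
          = Real.exp (-(c (u i)) / b) * Real.exp (-(∑ v ∈ S i, c v) / b) := by
        rw [← Real.exp_add, csum]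
        ring_nf
      by_cases hX : f T - f (S i) ≤ 0
      · have hmono' : f (S i) ≤ f (S (i+1)) := by
          rw [hSi1]; exact hmono _ _ (Finset.subset_insert _ _)
        have : 0 ≤ Real.exp (-(∑ v ∈ S (i+1), c v) / b) * f T :=
          mul_nonneg (le_of_lt (Real.exp_pos _)) hfT
        linarith
      · push_neg at hX
        -- submodular bound
        have hsm : f T - f (S i) ≤
            ∑ v ∈ T \ S i, (f (insert v (S i)) - f (S i)) := by
          have h1 := sum_marginal_aux f hsub (T \ S i) (S i)
          have h2 : f T ≤ f (S i ∪ (T \ S i)) :=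
            hmono _ _ (by intro x hx; simp [hx, Finset.mem_union])
          linarith
        -- per-term bound via the greedy rule
        have hterm : ∀ v ∈ T \ S i,
            f (insert v (S i)) - f (S i) ≤ (M / c (u i)) * c v := by
          intro v hv
          have hr := hrule i hi v hv
          rw [div_mul_eq_mul_div, le_div_iff₀ hcu, hM]
          linarith [hr]
        have hsum2 : ∑ v ∈ T \ S i, (f (insert v (S i)) - f (S i))
            ≤ (M / c (u i)) * ∑ v ∈ T \ S i, c v := by
          rw [Finset.mul_sum]
          exact Finset.sum_le_sum hterm
        have hcsub : ∑ v ∈ T \ S i, c v ≤ b := by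
          have : ∑ v ∈ T \ S i, c v ≤ ∑ v ∈ T, c v :=
            Finset.sum_le_sum_of_subset_of_nonneg (Finset.sdiff_subset)
              (fun v _ _ => le_of_lt (hcpos v))
          linarith
        have hMd : 0 ≤ M / c (u i) := div_nonneg hMnn (le_of_lt hcu)
        have hbound : f T - f (S i) ≤ (M / c (u i)) * b := by
          calc f T - f (S i) ≤ ∑ v ∈ T \ S i, (f (insert v (S i)) - f (S i)) := hsm
            _ ≤ (M / c (u i)) * ∑ v ∈ T \ S i, c v := hsum2
            _ ≤ (M / c (u i)) * b := by
                exact mul_le_mul_of_nonneg_left hcsub hMd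
        -- hence M ≥ (c (u i) / b) * (f T - f (S i))
        have hMge : (c (u i) / b) * (f T - f (S i)) ≤ M := by
          have h1 : c (u i) / b * (f T - f (S i)) ≤ c (u i) / b * (M / c (u i) * b) :=
            mul_le_mul_of_nonneg_left hbound (by positivity)
          have h2 : c (u i) / b * (M / c (u i) * b) = M := by
            field_simp
          linarith
        have hstep : f T - f (S (i+1)) ≤ (1 - c (u i) / b) * (f T - f (S i)) := by
          rw [hSi1]
          have : f T - f (insert (u i) (S i)) = (f T - f (S i)) - M := by
            rw [hM]; ring
          rw [this]
          nlinarith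
        have hone : 1 - c (u i) / b ≤ Real.exp (-(c (u i)) / b) := by
          have := Real.add_one_le_exp (-(c (u i) / b))
          rw [neg_div]
          linarith [this]
        calc f T - f (S (i+1)) ≤ (1 - c (u i) / b) * (f T - f (S i)) := hstep
          _ ≤ Real.exp (-(c (u i)) / b) * (f T - f (S i)) :=
              mul_le_mul_of_nonneg_right hone (le_of_lt hX)
          _ ≤ Real.exp (-(c (u i)) / b) *
              (Real.exp (-(∑ v ∈ S i, c v) / b) * f T) :=
              mul_le_mul_of_nonneg_left ihi (le_of_lt hexp2)
          _ = Real.exp (-(∑ v ∈ S (i+1), c v) / b) * f T := by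
              rw [hexpcomb]; ring
  intro S' hS'
  have hks := key s le_rfl
  have hm := hmono (S s) S' hS'
  linarith
end

section
/- Let u_1, …, u_q be distinct elements of V with prefix sets S_i := {u_1, …, u_i} (S_0 = ∅), let p ≤ q and put Q := S_p and Q' := S_q. Let OPT ⊆ V be a finset, let o, o' ∈ OPT, and put OPT' := OPT \ (Q ∪ {o}). Assume: (i) for every p ≤ i < q and every v ∈ OPT' \ S_i, f(u_{i+1} ∣ S_i) · c v ≥ f(v ∣ S_i) · c (u_{i+1}); (ii) c(OPT') + c(o) ≤ b; (iii) c(Q) + c(o) > b; (iv) c(Q') + c(o') > b; (v) c(Q) > 0. Then f(Q') ≥ f(Q) + (1 − exp((c(Q) + c(o') − b)/c(Q))) · (f(Q ∪ OPT') − f(Q)). -/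
open Finset

lemma submod_telescope' {V : Type*} [DecidableEq V] (f : Finset V → ℝ)
    (hsub : ∀ S T : Finset V, f (S ∪ T) + f (S ∩ T) ≤ f S + f T)
    (A : Finset V) (T : Finset V) :
    f (A ∪ T) ≤ f A + ∑ v ∈ T \ A, (f (insert v A) - f A) := by
  induction T using Finset.induction with
  | empty => simp
  | @insert a T' haT' ih =>
    by_cases haA : a ∈ A
    · rw [Finset.union_insert, Finset.insert_eq_self.2 (Finset.mem_union_left _ haA),
        Finset.insert_sdiff_of_mem _ haA]
      exact ih
    · have h1 := hsub (insert a A) (A ∪ T')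
      have h2 : insert a A ∪ (A ∪ T') = A ∪ insert a T' := by
        ext x; simp [or_comm, or_assoc, or_left_comm]
      have h3 : insert a A ∩ (A ∪ T') = A := by
        ext x
        simp only [Finset.mem_inter, Finset.mem_insert, Finset.mem_union]
        constructor
        · rintro ⟨rfl | h, h' | h'⟩ <;>
            first | exact h' | exact absurd h' haT' | exact h
        · intro h; exact ⟨Or.inr h, Or.inl h⟩
      rw [h2, h3] at h1
      have h4 : (insert a T') \ A = insert a (T' \ A) := Finset.insert_sdiff_of_notMem _ haA
      have h5 : a ∉ T' \ A := fun h => haT' (Finset.mem_sdiff.1 h).1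
      rw [h4, Finset.sum_insert h5]
      linarith


/-- Corollary 3.4: relation between Q' = S_q, Q = S_p and the optimal solution:
f(Q') ≥ f(Q) + (1 − exp((c(Q) + c(o') − b)/c(Q))) · (f(Q ∪ OPT') − f(Q)). -/
theorem stmt5 {V : Type*} [Fintype V] [DecidableEq V]
    (f : Finset V → ℝ) (c : V → ℝ) (b : ℝ)
    (hf0 : f ∅ = 0)
    (hmono : ∀ S T : Finset V, S ⊆ T → f S ≤ f T)
    (hsub : ∀ S T : Finset V, f (S ∪ T) + f (S ∩ T) ≤ f S + f T)
    (hcpos : ∀ v : V, 0 < c v)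
    (hb : 0 < b)
    (q : ℕ) (u : ℕ → V)
    (hinj : ∀ i j : ℕ, i < q → j < q → u i = u j → i = j)
    (S : ℕ → Finset V) (hS : ∀ i : ℕ, S i = (Finset.range i).image u)
    (p : ℕ) (hpq : p ≤ q)
    (OPT : Finset V) (o o' : V) (ho : o ∈ OPT) (ho' : o' ∈ OPT)
    (hrule : ∀ i : ℕ, p ≤ i → i < q →
      ∀ v ∈ (OPT \ (S p ∪ {o})) \ S i,
        (f (insert (u i) (S i)) - f (S i)) * c v ≥
        (f (insert v (S i)) - f (S i)) * c (u i))
    (hOPT' : (∑ v ∈ OPT \ (S p ∪ {o}), c v) + c o ≤ b)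
    (hQo : (∑ v ∈ S p, c v) + c o > b)
    (hQ'o' : (∑ v ∈ S q, c v) + c o' > b)
    (hQpos : 0 < ∑ v ∈ S p, c v) :
    f (S q) ≥ f (S p) +
      (1 - Real.exp (((∑ v ∈ S p, c v) + c o' - b) / (∑ v ∈ S p, c v))) *
        (f (S p ∪ (OPT \ (S p ∪ {o}))) - f (S p)) := by
  set OPT' := OPT \ (S p ∪ {o}) with hOPT'def
  set C : ℝ := ∑ v ∈ OPT', c v with hCdef
  set cQ : ℝ := ∑ v ∈ S p, c v with hcQdef
  -- basic facts about S
  have hSsub : ∀ i j : ℕ, i ≤ j → S i ⊆ S j := by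
    intro i j hij
    rw [hS, hS]
    exact Finset.image_subset_image (Finset.range_subset_range.2 hij)
  have hSsucc : ∀ i : ℕ, S (i + 1) = insert (u i) (S i) := by
    intro i
    rw [hS, hS, Finset.range_add_one, Finset.image_insert]
  have hu_not : ∀ i : ℕ, i < q → u i ∉ S i := by
    intro i hi h
    rw [hS] at h
    obtain ⟨j, hj, hji⟩ := Finset.mem_image.1 h
    rw [Finset.mem_range] at hj
    exact absurd (hinj j i (hj.trans hi) hi hji) (Nat.ne_of_lt hj)
  have hcsum : ∀ i : ℕ, i < q →
      ∑ v ∈ S (i + 1), c v = (∑ v ∈ S i, c v) + c (u i) := by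
    intro i hi
    rw [hSsucc, Finset.sum_insert (hu_not i hi)]
    ring
  -- trivial case : f (S p ∪ OPT') ≤ f (S p)
  by_cases hΔtriv : f (S p ∪ OPT') ≤ f (S p)
  · have heq : f (S p ∪ OPT') = f (S p) :=
      le_antisymm hΔtriv (hmono _ _ Finset.subset_union_left)
    rw [heq, sub_self, mul_zero, add_zero]
    exact hmono _ _ (hSsub p q hpq)
  push_neg at hΔtriv
  set Δp : ℝ := f (S p ∪ OPT') - f (S p) with hΔpdef
  have hΔppos : 0 < Δp := by simp [hΔpdef]; linarith
  -- C > 0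
  have hCpos : 0 < C := by
    rcases Finset.eq_empty_or_nonempty OPT' with h | h
    · rw [h, Finset.union_empty] at hΔtriv; linarith
    · exact Finset.sum_pos (fun v _ => hcpos v) h
  -- main induction
  have key : ∀ i : ℕ, p ≤ i → i ≤ q →
      f (S p ∪ OPT') - f (S i) ≤
        Real.exp (-(((∑ v ∈ S i, c v) - cQ) / C)) * Δp := by
    intro i hpi
    induction i, hpi using Nat.le_induction with
    | base =>
      intro _
      rw [← hcQdef, sub_self, zero_div, neg_zero, Real.exp_zero, one_mul]
    | succ i hpi ih =>
      intro hi1q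
      have hiq : i < q := hi1q
      have ih' := ih (le_of_lt hiq)
      set g : ℝ := f (S (i + 1)) - f (S i) with hgdef
      have hgnn : 0 ≤ g := by
        have := hmono (S i) (S (i+1)) (hSsub i (i+1) (Nat.le_succ i))
        simp [hgdef]; linarith
      have hw : 0 < c (u i) := hcpos (u i)
      -- the key per-step inequality : Δ i * c (u i) ≤ g * C
      have hstep : (f (S p ∪ OPT') - f (S i)) * c (u i) ≤ g * C := by
        have h1 : f (S p ∪ OPT') - f (S i) ≤ f (S i ∪ OPT') - f (S i) := by
          have := hmono (S p ∪ OPT') (S i ∪ OPT')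
            (Finset.union_subset_union_left (hSsub p i hpi))
          linarith
        have h2 : f (S i ∪ OPT') - f (S i) ≤
            ∑ v ∈ OPT' \ S i, (f (insert v (S i)) - f (S i)) := by
          have := submod_telescope' f hsub (S i) OPT'
          linarith
        have h3 : (∑ v ∈ OPT' \ S i, (f (insert v (S i)) - f (S i))) * c (u i)
            ≤ g * C := by
          rw [Finset.sum_mul]
          calc ∑ v ∈ OPT' \ S i, (f (insert v (S i)) - f (S i)) * c (u i)
              ≤ ∑ v ∈ OPT' \ S i, g * c v := by
                apply Finset.sum_le_sum
                intro v hv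
                rw [hgdef, hSsucc]
                exact hrule i hpi hiq v hv
            _ = g * ∑ v ∈ OPT' \ S i, c v := by rw [Finset.mul_sum]
            _ ≤ g * C := by
                apply mul_le_mul_of_nonneg_left _ hgnn
                exact Finset.sum_le_sum_of_subset_of_nonneg
                  (Finset.sdiff_subset) (fun v _ _ => (hcpos v).le)
        calc (f (S p ∪ OPT') - f (S i)) * c (u i)
            ≤ (f (S i ∪ OPT') - f (S i)) * c (u i) :=
              mul_le_mul_of_nonneg_right h1 hw.le
          _ ≤ (∑ v ∈ OPT' \ S i, (f (insert v (S i)) - f (S i))) * c (u i) :=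
              mul_le_mul_of_nonneg_right h2 hw.le
          _ ≤ g * C := h3
      by_cases hΔi : f (S p ∪ OPT') - f (S i) ≤ 0
      · have : f (S p ∪ OPT') - f (S (i + 1)) ≤ 0 := by
          simp only [hgdef] at hgnn; linarith
        have : 0 < Real.exp (-(((∑ v ∈ S (i+1), c v) - cQ) / C)) * Δp :=
          mul_pos (Real.exp_pos _) hΔppos
        linarith
      · push_neg at hΔi
        set Δi : ℝ := f (S p ∪ OPT') - f (S i) with hΔidef
        have hg' : c (u i) / C * Δi ≤ g := by
          rw [div_mul_eq_mul_div, div_le_iff₀ hCpos, mul_comm (c (u i)) Δi]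
          exact hstep
        have h4 : f (S p ∪ OPT') - f (S (i + 1)) ≤ (1 - c (u i) / C) * Δi := by
          have : f (S p ∪ OPT') - f (S (i + 1)) = Δi - g := by
            simp [hΔidef, hgdef]
          rw [this]
          nlinarith
        have h5 : (1 - c (u i) / C) * Δi ≤ Real.exp (-(c (u i) / C)) * Δi := by
          apply mul_le_mul_of_nonneg_right _ hΔi.le
          have := Real.add_one_le_exp (-(c (u i) / C))
          linarith
        have h6 : Real.exp (-(c (u i) / C)) * Δi ≤
            Real.exp (-(c (u i) / C)) *
              (Real.exp (-(((∑ v ∈ S i, c v) - cQ) / C)) * Δp) :=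
          mul_le_mul_of_nonneg_left ih' (Real.exp_pos _).le
        have h7 : Real.exp (-(c (u i) / C)) *
              (Real.exp (-(((∑ v ∈ S i, c v) - cQ) / C)) * Δp) =
            Real.exp (-(((∑ v ∈ S (i+1), c v) - cQ) / C)) * Δp := by
          rw [← mul_assoc, ← Real.exp_add, hcsum i hiq]
          ring_nf
        linarith [h4, h5, h6, h7.le, h7.ge]
  have hfinal := key q hpq (le_refl q)
  -- exponent comparison
  have hCle : C ≤ cQ := by
    have hco := hcpos o
    linarith
  have hA : (0:ℝ) ≤ (∑ v ∈ S q, c v) - cQ := by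
    have : cQ ≤ ∑ v ∈ S q, c v :=
      Finset.sum_le_sum_of_subset_of_nonneg (hSsub p q hpq) (fun v _ _ => (hcpos v).le)
    linarith
  have hexp : -(((∑ v ∈ S q, c v) - cQ) / C) ≤ (cQ + c o' - b) / cQ := by
    have h1 : ((∑ v ∈ S q, c v) - cQ) / cQ ≤ ((∑ v ∈ S q, c v) - cQ) / C :=
      div_le_div_of_nonneg_left hA hCpos hCle
    have h2 : (b - c o' - cQ) / cQ ≤ ((∑ v ∈ S q, c v) - cQ) / cQ := by
      gcongr
      linarith
    have h3 : (cQ + c o' - b) / cQ = -((b - c o' - cQ) / cQ) := by ring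
    linarith
  have hexp' : Real.exp (-(((∑ v ∈ S q, c v) - cQ) / C)) ≤
      Real.exp ((cQ + c o' - b) / cQ) := Real.exp_le_exp.2 hexp
  have hmul : Real.exp (-(((∑ v ∈ S q, c v) - cQ) / C)) * Δp ≤
      Real.exp ((cQ + c o' - b) / cQ) * Δp :=
    mul_le_mul_of_nonneg_right hexp' hΔppos.le
  simp only [hΔpdef] at hfinal hmul
  linarith
end

section
/- Let u_1, …, u_{j+1} be distinct elements of V with prefix sets S_i := {u_1, …, u_i} (S_0 = ∅), and let T ⊆ V be a finset with c(T) > 0 such that for every 0 ≤ i ≤ j and every v ∈ T \ S_i one has f(u_{i+1} ∣ S_i) · c v ≥ f(v ∣ S_i) · c (u_{i+1}). Then for every real x with c(S_j) < x ≤ c(S_{j+1}), it holds that f(S_j) + f(u_{j+1} ∣ S_j) · (x − c(S_j))/c(u_{j+1}) ≥ (1 − exp(−x/c(T))) · f(T). -/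
open Finset

lemma tele {V : Type*} [DecidableEq V] (f : Finset V → ℝ)
    (hsub : ∀ S T : Finset V, f (S ∪ T) + f (S ∩ T) ≤ f S + f T) :
    ∀ (A S : Finset V), f (S ∪ A) - f S ≤ ∑ v ∈ A \ S, (f (insert v S) - f S) := by
  intro A
  induction A using Finset.induction with
  | empty => simp
  | @insert a A' ha ih =>
    intro S
    by_cases haS : a ∈ S
    · have h1 : S ∪ insert a A' = S ∪ A' := by
        rw [Finset.union_insert, Finset.insert_eq_self.2 (Finset.mem_union_left _ haS)]
      have h2 : insert a A' \ S = A' \ S := Finset.insert_sdiff_of_mem A' haS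
      rw [h1, h2]; exact ih S
    · have hinter : (insert a S) ∩ (S ∪ A') = S := by
        ext x
        simp only [Finset.mem_inter, Finset.mem_insert, Finset.mem_union]
        constructor
        · rintro ⟨rfl | hx, hx2⟩
          · rcases hx2 with h | h
            · exact absurd h haS
            · exact absurd h ha
          · exact hx
        · intro hx; exact ⟨Or.inr hx, Or.inl hx⟩
      have hunion : (insert a S) ∪ (S ∪ A') = S ∪ insert a A' := by
        ext x
        simp only [Finset.mem_union, Finset.mem_insert]
        tauto
      have hs := hsub (insert a S) (S ∪ A')
      rw [hinter, hunion] at hs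
      have h2 : insert a A' \ S = insert a (A' \ S) := by
        rw [Finset.insert_sdiff_of_notMem A' haS]
      have hna : a ∉ A' \ S := by simp [ha]
      rw [h2, Finset.sum_insert hna]
      have := ih S
      linarith

/-- Lemma 3.5 (continuous extension): for c(S_j) < x ≤ c(S_{j+1}),
F(x) = f(S_j) + f(u_{j+1}∣S_j)·(x − c(S_j))/c(u_{j+1}) ≥ (1 − exp(−x/c(T)))·f(T). -/
theorem stmt6 {V : Type*} [Fintype V] [DecidableEq V]
    (f : Finset V → ℝ) (c : V → ℝ)
    (hf0 : f ∅ = 0)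
    (hmono : ∀ S T : Finset V, S ⊆ T → f S ≤ f T)
    (hsub : ∀ S T : Finset V, f (S ∪ T) + f (S ∩ T) ≤ f S + f T)
    (hcpos : ∀ v : V, 0 < c v)
    (j : ℕ) (u : ℕ → V)
    (hinj : ∀ i i' : ℕ, i < j + 1 → i' < j + 1 → u i = u i' → i = i')
    (S : ℕ → Finset V) (hS : ∀ i : ℕ, S i = (Finset.range i).image u)
    (T : Finset V) (hT : 0 < ∑ v ∈ T, c v)
    (hrule : ∀ i : ℕ, i ≤ j → ∀ v ∈ T \ S i,
      (f (insert (u i) (S i)) - f (S i)) * c v ≥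
      (f (insert v (S i)) - f (S i)) * c (u i)) :
    ∀ x : ℝ, (∑ v ∈ S j, c v) < x → x ≤ ∑ v ∈ S (j + 1), c v →
      f (S j) + (f (insert (u j) (S j)) - f (S j)) * (x - ∑ v ∈ S j, c v) / c (u j) ≥
        (1 - Real.exp (-x / (∑ v ∈ T, c v))) * f T := by
  set cT : ℝ := ∑ v ∈ T, c v with hcT
  have hfT : 0 ≤ f T := hf0 ▸ hmono ∅ T (Finset.empty_subset T)
  -- u i ∉ S i for i ≤ j
  have hnot : ∀ i : ℕ, i ≤ j → u i ∉ S i := by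
    intro i hi h
    rw [hS] at h
    obtain ⟨k, hk, hku⟩ := Finset.mem_image.1 h
    rw [Finset.mem_range] at hk
    have := hinj k i (by omega) (by omega) hku
    omega
  -- S (i+1) = insert (u i) (S i)
  have hSsucc : ∀ i : ℕ, S (i + 1) = insert (u i) (S i) := by
    intro i
    rw [hS, hS, Finset.range_add_one, Finset.image_insert]
  -- marginal gains nonneg
  have hdel : ∀ i : ℕ, 0 ≤ f (insert (u i) (S i)) - f (S i) := by
    intro i
    have := hmono (S i) (insert (u i) (S i)) (Finset.subset_insert _ _)
    linarith
  -- key inequality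
  have hkey : ∀ i : ℕ, i ≤ j →
      (f T - f (S i)) * c (u i) ≤ (f (insert (u i) (S i)) - f (S i)) * cT := by
    intro i hi
    have h1 : f T - f (S i) ≤ ∑ v ∈ T \ S i, (f (insert v (S i)) - f (S i)) := by
      have := tele f hsub T (S i)
      have hsub2 : f T ≤ f (S i ∪ T) := hmono T _ (Finset.subset_union_right)
      linarith
    have h2 : (∑ v ∈ T \ S i, (f (insert v (S i)) - f (S i))) * c (u i)
        ≤ (f (insert (u i) (S i)) - f (S i)) * cT := by
      rw [Finset.sum_mul]
      calc ∑ v ∈ T \ S i, (f (insert v (S i)) - f (S i)) * c (u i)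
          ≤ ∑ v ∈ T \ S i, (f (insert (u i) (S i)) - f (S i)) * c v := by
            apply Finset.sum_le_sum
            intro v hv
            exact hrule i hi v hv
        _ = (f (insert (u i) (S i)) - f (S i)) * ∑ v ∈ T \ S i, c v := by
            rw [Finset.mul_sum]
        _ ≤ (f (insert (u i) (S i)) - f (S i)) * cT := by
            apply mul_le_mul_of_nonneg_left _ (hdel i)
            apply Finset.sum_le_sum_of_subset_of_nonneg (Finset.sdiff_subset)
            intro v _ _
            exact (hcpos v).le
    calc (f T - f (S i)) * c (u i)
        ≤ (∑ v ∈ T \ S i, (f (insert v (S i)) - f (S i))) * c (u i) :=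
          mul_le_mul_of_nonneg_right h1 (hcpos (u i)).le
      _ ≤ _ := h2
  -- exponential induction at breakpoints
  have hind : ∀ i : ℕ, i ≤ j →
      f T - f (S i) ≤ f T * Real.exp (-(∑ v ∈ S i, c v) / cT) := by
    intro i
    induction i with
    | zero =>
      intro _
      have h0 : S 0 = ∅ := by rw [hS]; simp
      rw [h0, hf0]
      simp
    | succ n ihn =>
      intro hn
      have hn' : n ≤ j := Nat.le_of_succ_le hn
      have ih := ihn hn'
      have hnm := hnot n hn'
      have hsum : (∑ v ∈ S (n + 1), c v) = c (u n) + ∑ v ∈ S n, c v := by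
        rw [hSsucc, Finset.sum_insert hnm]
      have hfsucc : f (S (n + 1)) = f (insert (u n) (S n)) := by rw [hSsucc]
      set δ : ℝ := f (insert (u n) (S n)) - f (S n) with hδ
      have hδ0 : 0 ≤ δ := hdel n
      set A : ℝ := f T - f (S n) with hA
      have hkn : A * c (u n) ≤ δ * cT := by rw [hA, hδ]; exact hkey n hn'
      have hexp : Real.exp (-(∑ v ∈ S (n + 1), c v) / cT)
          = Real.exp (-c (u n) / cT) * Real.exp (-(∑ v ∈ S n, c v) / cT) := by
        rw [← Real.exp_add, hsum]
        ring_nf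
      rw [hfsucc, hexp]
      by_cases hAp : 0 < A
      · have hδA : A * c (u n) / cT ≤ δ := by
          rw [div_le_iff₀ hT]
          linarith [hkn]
        have h1 : f T - f (insert (u n) (S n)) = A - δ := by rw [hA, hδ]; ring
        rw [h1]
        have h2 : A - δ ≤ A * (1 - c (u n) / cT) := by
          have heq : A * (1 - c (u n) / cT) = A - A * c (u n) / cT := by ring
          rw [heq]
          linarith [hδA]
        have h3 : A * (1 - c (u n) / cT) ≤ A * Real.exp (-c (u n) / cT) := by
          apply mul_le_mul_of_nonneg_left _ hAp.le
          calc 1 - c (u n) / cT = -c (u n) / cT + 1 := by ring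
            _ ≤ Real.exp (-c (u n) / cT) := Real.add_one_le_exp _
        have h4 : A * Real.exp (-c (u n) / cT)
            ≤ f T * Real.exp (-(∑ v ∈ S n, c v) / cT) * Real.exp (-c (u n) / cT) :=
          mul_le_mul_of_nonneg_right ih (Real.exp_nonneg _)
        calc A - δ ≤ A * (1 - c (u n) / cT) := h2
          _ ≤ A * Real.exp (-c (u n) / cT) := h3
          _ ≤ f T * Real.exp (-(∑ v ∈ S n, c v) / cT) * Real.exp (-c (u n) / cT) := h4
          _ = f T * (Real.exp (-c (u n) / cT) * Real.exp (-(∑ v ∈ S n, c v) / cT)) := by ring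
      · push_neg at hAp
        have : f T - f (insert (u n) (S n)) = A - δ := by rw [hA, hδ]; ring
        rw [this]
        have hpos : 0 ≤ f T * (Real.exp (-c (u n) / cT) * Real.exp (-(∑ v ∈ S n, c v) / cT)) :=
          mul_nonneg hfT (mul_nonneg (Real.exp_nonneg _) (Real.exp_nonneg _))
        linarith
  -- final assembly
  intro x hx1 hx2
  have hjnot := hnot j le_rfl
  have hsum : (∑ v ∈ S (j + 1), c v) = c (u j) + ∑ v ∈ S j, c v := by
    rw [hSsucc, Finset.sum_insert hjnot]
  set δ : ℝ := f (insert (u j) (S j)) - f (S j) with hδ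
  have hδ0 : 0 ≤ δ := hdel j
  set t : ℝ := x - ∑ v ∈ S j, c v with ht
  have ht0 : 0 < t := by rw [ht]; linarith
  have htc : t ≤ c (u j) := by rw [ht]; rw [hsum] at hx2; linarith
  set A : ℝ := f T - f (S j) with hA
  have hkn : A * c (u j) ≤ δ * cT := by rw [hA, hδ]; exact hkey j le_rfl
  have hindj := hind j le_rfl
  have hcu : 0 < c (u j) := hcpos (u j)
  rw [ge_iff_le, sub_mul, one_mul]
  -- goal: exp(-x/cT) * fT bound ...
  have hgoal : f T - f (S j) - δ * t / c (u j) ≤ Real.exp (-x / cT) * f T → 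
      f T - Real.exp (-x / cT) * f T ≤ f (S j) + δ * t / c (u j) := by
    intro h; linarith
  apply hgoal
  have hxdecomp : -x / cT = -t / cT + (-(∑ v ∈ S j, c v) / cT) := by
    rw [ht]; ring
  rw [hxdecomp, Real.exp_add]
  by_cases hAp : 0 < A
  · have hstep : A * t / cT ≤ δ * t / c (u j) := by
      rw [div_le_div_iff₀ hT hcu]
      nlinarith [mul_le_mul_of_nonneg_right hkn ht0.le]
    have h2 : A - δ * t / c (u j) ≤ A * (1 - t / cT) := by
      have heq : A * (1 - t / cT) = A - A * t / cT := by ring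
      rw [heq]
      linarith [hstep]
    have h3 : A * (1 - t / cT) ≤ A * Real.exp (-t / cT) := by
      apply mul_le_mul_of_nonneg_left _ hAp.le
      calc 1 - t / cT = -t / cT + 1 := by ring
        _ ≤ Real.exp (-t / cT) := Real.add_one_le_exp _
    have h4 : A * Real.exp (-t / cT)
        ≤ f T * Real.exp (-(∑ v ∈ S j, c v) / cT) * Real.exp (-t / cT) :=
      mul_le_mul_of_nonneg_right hindj (Real.exp_nonneg _)
    have hfin : f T - f (S j) - δ * t / c (u j) = A - δ * t / c (u j) := by rw [hA]
    rw [hfin]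
    calc A - δ * t / c (u j) ≤ A * (1 - t / cT) := h2
      _ ≤ A * Real.exp (-t / cT) := h3
      _ ≤ f T * Real.exp (-(∑ v ∈ S j, c v) / cT) * Real.exp (-t / cT) := h4
      _ = Real.exp (-t / cT) * Real.exp (-(∑ v ∈ S j, c v) / cT) * f T := by ring
  · push_neg at hAp
    have hpos : 0 ≤ Real.exp (-t / cT) * Real.exp (-(∑ v ∈ S j, c v) / cT) * f T :=
      mul_nonneg (mul_nonneg (Real.exp_nonneg _) (Real.exp_nonneg _)) hfT
    have : f T - f (S j) - δ * t / c (u j) ≤ A := by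
      rw [hA]
      have : 0 ≤ δ * t / c (u j) := div_nonneg (mul_nonneg hδ0 ht0.le) hcu.le
      linarith
    linarith
end

section
/- Let α, x1, x2, x3, x4, x5, x6 ∈ [0,1] be reals satisfying: α ≥ x1; (x4 > 0 → α ≥ x1 + (1 − exp((x4 + x6 − 1)/x4))·x3); α ≥ x2; (x5 > 0 → x1 ≥ (1 − 1/e)·(1 − 2α) + (x4 + x5 + x6 − 1)·x2/x5); x1 ≥ 1 − exp(−x4); x1 + x2 + x3 ≥ 1; (x5 > 0 → x1 + x2/x5 ≥ 1); and x4 + x5 ≥ 1. Then for every real α⊥ with 0.405 < α⊥ < 1 and (1 − α⊥)·ln(1 − α⊥) + (2 − 1/e)·(1 − 2·α⊥) = 0, it holds that α ≥ α⊥. -/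
/-- Monotonicity of x ↦ -(x log x) type expression: for 1/2-ish range,
    -(B log B) ≤ -(A log A) when 0 < A ≤ B ≤ 1 and A + B ≥ 1. -/
lemma psi_mono (A B : ℝ) (hA0 : 0 < A) (hAB : A ≤ B) (hB1 : B ≤ 1)
    (hsum : 1 ≤ A + B) : -(B * Real.log B) ≤ -(A * Real.log A) := by
  have hB0 : (0:ℝ) < B := lt_of_lt_of_le hA0 hAB
  have e1 : -(B * Real.log B) ≤ 1 - B := by
    have h := Real.log_le_sub_one_of_pos (show (0:ℝ) < B⁻¹ by positivity)
    rw [Real.log_inv] at h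
    have h' := mul_le_mul_of_nonneg_left h (le_of_lt hB0)
    have hid : B * (B⁻¹ - 1) = 1 - B := by field_simp
    rw [hid] at h'
    linarith
  have e2 : B * Real.log A - B * Real.log B ≤ A - B := by
    have h := Real.log_le_sub_one_of_pos (show (0:ℝ) < A / B by positivity)
    rw [Real.log_div (ne_of_gt hA0) (ne_of_gt hB0)] at h
    have h' := mul_le_mul_of_nonneg_left h (le_of_lt hB0)
    have hid : B * (A / B - 1) = A - B := by field_simp
    rw [hid] at h'
    linarith
  have key : B * (A * Real.log A) ≤ B * (B * Real.log B) := by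
    have t1 := mul_le_mul_of_nonneg_left e2 (le_of_lt hA0)
    have t2 : (A - B) * (B * Real.log B) ≤ (A - B) * (B - 1) :=
      mul_le_mul_of_nonpos_left (by linarith) (by linarith)
    have t3 : (A - B) * (A + B - 1) ≤ 0 :=
      mul_nonpos_of_nonpos_of_nonneg (by linarith) (by linarith)
    linarith [t1, t2, t3]
  have := le_of_mul_le_mul_left key hB0
  linarith

/-- Step B: strict positivity of f at α, from f(αb)=0, α < αb, via tangent line of x log x. -/
lemma f_pos (α αb : ℝ) (hα0 : 0 ≤ α) (hcon : α < αb) (hbhalf : αb < 1/2)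
    (he2 : (2:ℝ) < Real.exp 1)
    (heq : (1 - αb) * Real.log (1 - αb) + (2 - 1 / Real.exp 1) * (1 - 2 * αb) = 0) :
    0 < (1 - α) * Real.log (1 - α) + (2 - 1 / Real.exp 1) * (1 - 2 * α) := by
  have hepos : (0:ℝ) < Real.exp 1 := Real.exp_pos 1
  have hinv2 : 1 / Real.exp 1 < 1/2 := by
    rw [div_lt_div_iff₀ hepos (by norm_num)]; linarith
  have hA0 : (0:ℝ) < 1 - αb := by linarith
  have hB0 : (0:ℝ) < 1 - α := by linarith
  have hlogA : -1 < Real.log (1 - αb) := by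
    have h := Real.log_le_sub_one_of_pos (show (0:ℝ) < (1 - αb)⁻¹ by positivity)
    rw [Real.log_inv] at h
    have : (1 - αb)⁻¹ < 2 := by
      rw [inv_lt_comm₀ hA0 (by norm_num)]; linarith
    linarith
  have htan : (1 - α) * Real.log (1 - αb) - (1 - α) * Real.log (1 - α) ≤
      (1 - αb) - (1 - α) := by
    have h := Real.log_le_sub_one_of_pos (show (0:ℝ) < (1 - αb)/(1 - α) by positivity)
    rw [Real.log_div (by linarith) (by linarith)] at h
    have h' := mul_le_mul_of_nonneg_left h (le_of_lt hB0)
    have hid : (1 - α) * ((1 - αb)/(1 - α) - 1) = (1 - αb) - (1 - α) := by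
      field_simp
    rw [hid] at h'
    linarith
  linarith [mul_pos (show (0:ℝ) < αb - α by linarith)
      (show (0:ℝ) < Real.log (1 - αb) + 1 + 2*(2 - 1/Real.exp 1) by linarith)]

/-- Lemma 3.8: any feasible point of the constructed optimization problem satisfies
α ≥ α⊥, where α⊥ ∈ (0.405, 1) is the root of (1−α)ln(1−α) + (2 − 1/e)(1 − 2α) = 0. -/
theorem stmt9 (α x1 x2 x3 x4 x5 x6 : ℝ)
    (hα : α ∈ Set.Icc (0 : ℝ) 1)
    (hx1 : x1 ∈ Set.Icc (0 : ℝ) 1) (hx2 : x2 ∈ Set.Icc (0 : ℝ) 1)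
    (hx3 : x3 ∈ Set.Icc (0 : ℝ) 1) (hx4 : x4 ∈ Set.Icc (0 : ℝ) 1)
    (hx5 : x5 ∈ Set.Icc (0 : ℝ) 1) (hx6 : x6 ∈ Set.Icc (0 : ℝ) 1)
    (h1 : α ≥ x1)
    (h2 : 0 < x4 → α ≥ x1 + (1 - Real.exp ((x4 + x6 - 1) / x4)) * x3)
    (h3 : α ≥ x2)
    (h4 : 0 < x5 → x1 ≥ (1 - 1 / Real.exp 1) * (1 - 2 * α) +
      (x4 + x5 + x6 - 1) * x2 / x5)
    (h5 : x1 ≥ 1 - Real.exp (-x4))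
    (h6 : x1 + x2 + x3 ≥ 1)
    (h7 : 0 < x5 → x1 + x2 / x5 ≥ 1)
    (h8 : x4 + x5 ≥ 1) :
    ∀ αb : ℝ, 0.405 < αb → αb < 1 →
      (1 - αb) * Real.log (1 - αb) + (2 - 1 / Real.exp 1) * (1 - 2 * αb) = 0 →
      α ≥ αb := by
  obtain ⟨hα0, hα1⟩ := hα
  obtain ⟨h10, h11⟩ := hx1
  obtain ⟨h20, h21⟩ := hx2
  obtain ⟨h30, h31⟩ := hx3
  obtain ⟨h40, h41⟩ := hx4
  obtain ⟨h50, h51⟩ := hx5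
  obtain ⟨h60, h61⟩ := hx6
  intro αb hb1 hb2 heq
  by_contra hcon
  push_neg at hcon
  have he2 : (2:ℝ) < Real.exp 1 := by
    have := Real.exp_one_gt_d9; linarith
  have hepos : (0:ℝ) < Real.exp 1 := Real.exp_pos 1
  have hinv : (0:ℝ) < 1 / Real.exp 1 := by positivity
  have hinv2 : 1 / Real.exp 1 < 1/2 := by
    rw [div_lt_div_iff₀ hepos (by norm_num)]; linarith
  -- Step A : αb < 1/2
  have hbhalf : αb < 1/2 := by
    by_contra hb
    push_neg at hb
    have hA0 : (0:ℝ) < 1 - αb := by linarith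
    have hlog : Real.log (1 - αb) < 0 := Real.log_neg hA0 (by linarith)
    have ht1 : (1 - αb) * Real.log (1 - αb) < 0 := mul_neg_of_pos_of_neg hA0 hlog
    have ht2 : (2 - 1 / Real.exp 1) * (1 - 2 * αb) ≤ 0 :=
      mul_nonpos_of_nonneg_of_nonpos (by linarith) (by linarith)
    linarith
  have hαhalf : α < 1/2 := lt_trans hcon hbhalf
  have hf := f_pos α αb hα0 hcon hbhalf he2 heq
  clear heq hb1 hb2 hbhalf hcon
  -- Main chain
  have hBp : (0:ℝ) < 1 - x1 := by linarith
  have h1ax : (0:ℝ) < 1 - α - x1 := by linarith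
  have h12a : (0:ℝ) < 1 - 2*α := by linarith
  -- x4 ≤ -log(1-x1) < 1
  have hx4L : x4 ≤ -Real.log (1 - x1) := by
    have hle : 1 - x1 ≤ Real.exp (-x4) := by linarith
    have := Real.log_le_log hBp hle
    rw [Real.log_exp] at this
    linarith
  have hlogp : -Real.log (1 - x1) < 1 := by
    have h := Real.log_le_sub_one_of_pos (show (0:ℝ) < (1 - x1)⁻¹ by positivity)
    rw [Real.log_inv] at h
    have : (1 - x1)⁻¹ < 2 := by
      rw [inv_lt_comm₀ hBp (by norm_num)]; linarith
    linarith
  have hx5pos : 0 < x5 := by linarith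
  have h4' := h4 hx5pos
  have h7' := h7 hx5pos
  clear h4 h7 h5
  -- key : x1 ≥ W + x6*(1-x1)
  have ht : 1 - x1 ≤ x2 / x5 := by linarith
  have hkey : x1 ≥ (1 - 1/Real.exp 1) * (1 - 2*α) + x6 * (1 - x1) := by
    have hS : x6 ≤ x4 + x5 + x6 - 1 := by linarith
    have hprod : x6 * (1 - x1) ≤ (x4 + x5 + x6 - 1) * (x2 / x5) :=
      mul_le_mul hS ht (le_of_lt hBp) (by linarith)
    rw [mul_div_assoc] at h4'
    linarith
  -- dispose x4 = 0 case
  rcases le_or_gt x4 0 with hx4le | hx4pos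
  · have hx40 : x4 = 0 := le_antisymm hx4le h40
    have hx51 : x5 = 1 := le_antisymm h51 (by linarith)
    rw [hx51] at h7'
    simp at h7'
    linarith
  have h2' := h2 hx4pos
  clear h2 h4' ht
  -- ψ monotone
  have hpsi : -((1 - x1) * Real.log (1 - x1)) ≤ -((1 - α) * Real.log (1 - α)) :=
    psi_mono (1 - α) (1 - x1) (by linarith) (by linarith) (by linarith) (by linarith)
  have hT : -((1 - α) * Real.log (1 - α)) < (2 - 1/Real.exp 1) * (1 - 2*α) := by linarith
  have hlin : (2 - 1/Real.exp 1) * (1 - α - x1) ≤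
      1 + (1 - 1/Real.exp 1) * (1 - 2*α) - 2*x1 := by
    have hid : (1 + (1 - 1/Real.exp 1) * (1 - 2*α) - 2*x1)
        - (2 - 1/Real.exp 1) * (1 - α - x1) = (α - x1) / Real.exp 1 := by
      field_simp; ring
    have hpos : (0:ℝ) ≤ (α - x1) / Real.exp 1 := div_nonneg (by linarith) (le_of_lt hepos)
    linarith
  have hstep3 : 1 + (1 - 1/Real.exp 1) * (1 - 2*α) - 2*x1 ≤ (1 - x6) * (1 - x1) := by
    linarith [hkey]
  have hI : (-Real.log (1 - x1)) * ((1 - α - x1) * (1 - x1)) <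
      (1 - 2*α) * ((1 - x6) * (1 - x1)) := by
    have s1 : (-((1 - x1) * Real.log (1 - x1))) * (1 - α - x1) <
        ((2 - 1/Real.exp 1) * (1 - 2*α)) * (1 - α - x1) := by
      apply mul_lt_mul_of_pos_right _ h1ax
      linarith
    have s2 : ((2 - 1/Real.exp 1) * (1 - 2*α)) * (1 - α - x1) ≤
        (1 - 2*α) * ((1 - x6) * (1 - x1)) := by
      have hm := mul_le_mul_of_nonneg_left (le_trans hlin hstep3) (le_of_lt h12a)
      calc ((2 - 1/Real.exp 1) * (1 - 2*α)) * (1 - α - x1)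
          = (1 - 2*α) * ((2 - 1/Real.exp 1) * (1 - α - x1)) := by ring
        _ ≤ (1 - 2*α) * ((1 - x6) * (1 - x1)) := hm
    calc (-Real.log (1 - x1)) * ((1 - α - x1) * (1 - x1))
        = (-((1 - x1) * Real.log (1 - x1))) * (1 - α - x1) := by ring
      _ < ((2 - 1/Real.exp 1) * (1 - 2*α)) * (1 - α - x1) := s1
      _ ≤ (1 - 2*α) * ((1 - x6) * (1 - x1)) := s2
  clear hpsi hT hlin hstep3 hkey hf
  -- hE : x4*(1-α-x1) < (1-x6)*(1-2α)
  have hE : x4 * (1 - α - x1) < (1 - x6) * (1 - 2*α) := by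
    have hL : x4 * (1 - α - x1) ≤ (-Real.log (1 - x1)) * (1 - α - x1) :=
      mul_le_mul_of_nonneg_right hx4L (le_of_lt h1ax)
    have hd : (-Real.log (1 - x1)) * (1 - α - x1) < (1 - 2*α) * (1 - x6) := by
      have := (mul_lt_mul_iff_of_pos_right hBp).mp (by
        calc (-Real.log (1 - x1)) * (1 - α - x1) * (1 - x1)
            = (-Real.log (1 - x1)) * ((1 - α - x1) * (1 - x1)) := by ring
          _ < (1 - 2*α) * ((1 - x6) * (1 - x1)) := hI
          _ = (1 - 2*α) * (1 - x6) * (1 - x1) := by ring)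
      exact this
    linarith [hd]
  clear hI hx4L hlogp
  -- hEdiv
  have hEdiv : (x4 + x6 - 1) / x4 < (x1 - α) / (1 - 2*α) := by
    rw [div_lt_div_iff₀ hx4pos h12a]
    linarith [hE]
  clear hE
  -- hexp : exp E * (1-α-x1) < 1-2α
  have hzid : (x1 - α) / (1 - 2*α) = -((α - x1) / (1 - 2*α)) := by ring
  have hzpos : (0:ℝ) ≤ (α - x1) / (1 - 2*α) :=
    div_nonneg (by linarith) (le_of_lt h12a)
  have hexpz : Real.exp ((x1 - α)/(1 - 2*α)) ≤ (1 + (α - x1)/(1 - 2*α))⁻¹ := by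
    rw [hzid, Real.exp_neg]
    exact inv_anti₀ (by linarith)
      (by linarith [Real.add_one_le_exp ((α - x1)/(1 - 2*α))])
  have hexp : Real.exp ((x4 + x6 - 1)/x4) * (1 - α - x1) < 1 - 2*α := by
    have hlt : Real.exp ((x4 + x6 - 1)/x4) < (1 - α - x1)⁻¹ * (1 - 2*α) := by
      calc Real.exp ((x4 + x6 - 1)/x4) < Real.exp ((x1 - α)/(1 - 2*α)) :=
            Real.exp_lt_exp.mpr hEdiv
        _ ≤ (1 + (α - x1)/(1 - 2*α))⁻¹ := hexpz
        _ = (1 - α - x1)⁻¹ * (1 - 2*α) := by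
            rw [show 1 + (α - x1)/(1 - 2*α) = (1 - α - x1)/(1 - 2*α) by
                rw [eq_div_iff (ne_of_gt h12a), add_mul, div_mul_cancel₀ _ (ne_of_gt h12a)]; ring,
              inv_div]
            field_simp
    have hm := mul_lt_mul_of_pos_right hlt h1ax
    calc Real.exp ((x4 + x6 - 1)/x4) * (1 - α - x1)
        < (1 - α - x1)⁻¹ * (1 - 2*α) * (1 - α - x1) := hm
      _ = 1 - 2*α := by field_simp
  clear hEdiv hexpz hzid hzpos
  -- final contradiction
  have hexpE1 : Real.exp ((x4 + x6 - 1)/x4) < 1 := by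
    have hm : Real.exp ((x4 + x6 - 1)/x4) * (1 - α - x1) < 1 * (1 - α - x1) := by
      calc Real.exp ((x4 + x6 - 1)/x4) * (1 - α - x1) < 1 - 2*α := hexp
        _ ≤ 1 * (1 - α - x1) := by linarith
    exact lt_of_mul_lt_mul_right hm (le_of_lt h1ax)
  have hx3b : 1 - x1 - α ≤ x3 := by linarith
  have hc : (0:ℝ) ≤ 1 - Real.exp ((x4 + x6 - 1)/x4) := by linarith
  have hprod := mul_le_mul_of_nonneg_left hx3b hc
  linarith [hexp, h2', hprod]
end

section
/- For every run of the modified greedy algorithm, every OPT ⊆ V with c(OPT) ≤ b, and every real α' with 0.357 < α' < 1 and (1 − α')·(ln(1 − α') + 2) − 1 = 0, it holds that f(OPT) ≤ Λ and α' · Λ ≤ f(S_m), where Λ := min over 0 ≤ i ≤ n of ( f(A i) + Δ(b∣A i) ). -/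
set_option maxHeartbeats 1000000


open Finset

/-- Theorem 4.1: with Λ := min_i ( f(A i) + Δ(b∣A i) ) computed over the run of
MGreedy, f(OPT) ≤ Λ and α'·Λ ≤ f(S_m), where α' ∈ (0.357, 1) is the root of
(1 − α')·(ln(1 − α') + 2) − 1 = 0. -/
theorem stmt11 {V : Type*} [Fintype V] [DecidableEq V] [Nonempty V]
    (f : Finset V → ℝ) (c : V → ℝ) (b : ℝ)
    (hf0 : f ∅ = 0)
    (hmono : ∀ S T : Finset V, S ⊆ T → f S ≤ f T)
    (hsub : ∀ S T : Finset V, f (S ∪ T) + f (S ∩ T) ≤ f S + f T)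
    (hcpos : ∀ v : V, 0 < c v)
    (hb : 0 < b)
    (hcb : ∀ v : V, c v ≤ b)
    (u : Fin (Fintype.card V) → V) (hu : Function.Bijective u)
    (A : Fin (Fintype.card V + 1) → Finset V)
    (hA0 : A 0 = ∅)
    (hstep : ∀ i : Fin (Fintype.card V),
      ((∑ v ∈ A i.castSucc, c v) + c (u i) ≤ b →
        A i.succ = insert (u i) (A i.castSucc)) ∧
      (¬ ((∑ v ∈ A i.castSucc, c v) + c (u i) ≤ b) →
        A i.succ = A i.castSucc))
    (hgreedy : ∀ i j : Fin (Fintype.card V), i ≤ j →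
      (f (insert (u i) (A i.castSucc)) - f (A i.castSucc)) * c (u j) ≥
      (f (insert (u j) (A i.castSucc)) - f (A i.castSucc)) * c (u i))
    (OPT : Finset V) (hOPT : ∑ v ∈ OPT, c v ≤ b)
    (α : ℝ) (hα1 : 0.357 < α) (hα2 : α < 1)
    (hαroot : (1 - α) * (Real.log (1 - α) + 2) - 1 = 0) :
    f OPT ≤ Finset.univ.inf' Finset.univ_nonempty
      (fun i : Fin (Fintype.card V + 1) => f (A i) + sSup {y : ℝ | ∃ x : V → ℝ,
        (∀ v : V, 0 ≤ x v ∧ x v ≤ 1) ∧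
        (∑ v : V, c v * x v ≤ b) ∧
        y = ∑ v ∈ Finset.univ \ A i, (f (insert v (A i)) - f (A i)) * x v}) ∧
    α * Finset.univ.inf' Finset.univ_nonempty
      (fun i : Fin (Fintype.card V + 1) => f (A i) + sSup {y : ℝ | ∃ x : V → ℝ,
        (∀ v : V, 0 ≤ x v ∧ x v ≤ 1) ∧
        (∑ v : V, c v * x v ≤ b) ∧
        y = ∑ v ∈ Finset.univ \ A i, (f (insert v (A i)) - f (A i)) * x v}) ≤
    max (f (A (Fin.last (Fintype.card V))))
      (Finset.univ.sup' Finset.univ_nonempty fun v : V => f {v}) := by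
  classical
  set L := Finset.univ.inf' Finset.univ_nonempty
      (fun i : Fin (Fintype.card V + 1) => f (A i) + sSup {y : ℝ | ∃ x : V → ℝ,
        (∀ v : V, 0 ≤ x v ∧ x v ≤ 1) ∧
        (∑ v : V, c v * x v ≤ b) ∧
        y = ∑ v ∈ Finset.univ \ A i, (f (insert v (A i)) - f (A i)) * x v}) with hLdef
  -- basic facts about f
  have hfnn : ∀ S : Finset V, 0 ≤ f S := fun S => hf0 ▸ hmono ∅ S (empty_subset S)
  have hmarg : ∀ (S : Finset V) (v : V), 0 ≤ f (insert v S) - f S :=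
    fun S v => sub_nonneg.2 (hmono _ _ (subset_insert _ _))
  have hsubm : ∀ (S T : Finset V) (a : V), S ⊆ T →
      f (insert a T) - f T ≤ f (insert a S) - f S := by
    intro S T a hST
    have h1 := hsub (insert a S) T
    have h2 : insert a S ∪ T = insert a T := by
      rw [insert_union, union_eq_right.mpr hST]
    have h4 := hmono _ _ (subset_inter (subset_insert a S) hST)
    rw [h2] at h1; linarith
  have expand : ∀ (T S : Finset V),
      f (S ∪ T) ≤ f S + ∑ v ∈ T \ S, (f (insert v S) - f S) := by
    intro T
    induction T using Finset.induction_on with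
    | empty => intro S; simp
    | insert a T ha _ =>
      intro S
      by_cases haS : a ∈ S
      · rw [union_insert, insert_eq_self.mpr (mem_union_left T haS),
          insert_sdiff_of_mem _ haS]
        exact ‹∀ S : Finset V, f (S ∪ T) ≤ f S + ∑ v ∈ T \ S, (f (insert v S) - f S)› S
      · rw [union_insert, insert_sdiff_of_notMem _ haS,
          sum_insert (by simp [ha])]
        have h5 := hsubm S (S ∪ T) a subset_union_left
        have h6 := ‹∀ S : Finset V, f (S ∪ T) ≤ f S + ∑ v ∈ T \ S, (f (insert v S) - f S)› S
        linarith
  -- facts about the sSup sets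
  have hmem0 : ∀ i : Fin (Fintype.card V + 1), (0:ℝ) ∈ {y : ℝ | ∃ x : V → ℝ,
        (∀ v : V, 0 ≤ x v ∧ x v ≤ 1) ∧
        (∑ v : V, c v * x v ≤ b) ∧
        y = ∑ v ∈ Finset.univ \ A i, (f (insert v (A i)) - f (A i)) * x v} := by
    intro i
    exact ⟨fun _ => 0, fun v => ⟨le_refl _, zero_le_one⟩, by simpa using hb.le, by simp⟩
  have hbdd : ∀ i : Fin (Fintype.card V + 1), BddAbove {y : ℝ | ∃ x : V → ℝ,
        (∀ v : V, 0 ≤ x v ∧ x v ≤ 1) ∧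
        (∑ v : V, c v * x v ≤ b) ∧
        y = ∑ v ∈ Finset.univ \ A i, (f (insert v (A i)) - f (A i)) * x v} := by
    intro i
    refine ⟨∑ v ∈ Finset.univ \ A i, (f (insert v (A i)) - f (A i)), ?_⟩
    rintro y ⟨x, hx01, hxb, rfl⟩
    refine Finset.sum_le_sum fun v hv => ?_
    have := (hx01 v).2
    nlinarith [hmarg (A i) v, (hx01 v).1]
  have hterm : ∀ i : Fin (Fintype.card V + 1), L ≤ f (A i) + sSup {y : ℝ | ∃ x : V → ℝ,
        (∀ v : V, 0 ≤ x v ∧ x v ≤ 1) ∧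
        (∑ v : V, c v * x v ≤ b) ∧
        y = ∑ v ∈ Finset.univ \ A i, (f (insert v (A i)) - f (A i)) * x v} := by
    intro i
    rw [hLdef]
    exact Finset.inf'_le _ (Finset.mem_univ i)
  have hL0 : 0 ≤ L := by
    rw [hLdef]
    refine Finset.le_inf' _ _ fun i _ => ?_
    have := le_csSup (hbdd i) (hmem0 i)
    have := hfnn (A i)
    linarith
  -- Part 1
  have part1 : f OPT ≤ L := by
    rw [hLdef]
    refine Finset.le_inf' _ _ fun i _ => ?_
    set g : V → ℝ := fun v => f (insert v (A i)) - f (A i) with hg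
    have hmem : (∑ v ∈ OPT \ A i, g v) ∈ {y : ℝ | ∃ x : V → ℝ,
        (∀ v : V, 0 ≤ x v ∧ x v ≤ 1) ∧
        (∑ v : V, c v * x v ≤ b) ∧
        y = ∑ v ∈ Finset.univ \ A i, (f (insert v (A i)) - f (A i)) * x v} := by
      refine ⟨fun v => if v ∈ OPT then 1 else 0,
        fun v => by by_cases h : v ∈ OPT <;> simp [h], ?_, ?_⟩
      · have : (∑ v : V, c v * if v ∈ OPT then (1:ℝ) else 0) = ∑ v ∈ OPT, c v := by
          simp only [mul_ite, mul_one, mul_zero, Finset.sum_ite_mem, univ_inter]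
        rw [this]; exact hOPT
      · have : (∑ v ∈ Finset.univ \ A i, (f (insert v (A i)) - f (A i)) *
            if v ∈ OPT then (1:ℝ) else 0) = ∑ v ∈ OPT \ A i, g v := by
          simp only [mul_ite, mul_one, mul_zero, Finset.sum_ite_mem]
          congr 1
          ext v; simp only [mem_inter, mem_sdiff, mem_univ, true_and]; tauto
        exact this.symm
    have h1 : f OPT ≤ f (A i) + ∑ v ∈ OPT \ A i, g v := by
      have := expand OPT (A i)
      have := hmono OPT (A i ∪ OPT) subset_union_right
      linarith
    have h2 := le_csSup (hbdd i) hmem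
    linarith
  refine ⟨part1, ?_⟩

  -- step subset facts
  have hAsub : ∀ i : Fin (Fintype.card V), A i.castSucc ⊆ A i.succ := by
    intro i
    by_cases hc : (∑ v ∈ A i.castSucc, c v) + c (u i) ≤ b
    · rw [(hstep i).1 hc]; exact subset_insert _ _
    · rw [(hstep i).2 hc]
  have hAsub' : ∀ i : Fin (Fintype.card V), A i.succ ⊆ insert (u i) (A i.castSucc) := by
    intro i
    by_cases hc : (∑ v ∈ A i.castSucc, c v) + c (u i) ≤ b
    · rw [(hstep i).1 hc]
    · rw [(hstep i).2 hc]; exact subset_insert _ _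
  have memEarlier : ∀ k : Fin (Fintype.card V + 1), ∀ j : Fin (Fintype.card V),
      u j ∈ A k → j.val < k.val := by
    intro k
    induction k using Fin.induction with
    | zero => intro j hj; rw [hA0] at hj; exact absurd hj (notMem_empty _)
    | succ i ih =>
      intro j hj
      rcases mem_insert.mp (hAsub' i hj) with h | h
      · have hji : j = i := hu.1 h
        subst hji
        simp [Fin.val_succ]
      · have := ih j h
        simp only [Fin.coe_castSucc] at this
        simp only [Fin.val_succ]
        omega
  have cInv : ∀ k : Fin (Fintype.card V + 1), ∑ v ∈ A k, c v ≤ b := by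
    intro k
    induction k using Fin.induction with
    | zero => rw [hA0]; simpa using hb.le
    | succ i ih =>
      by_cases hc : (∑ v ∈ A i.castSucc, c v) + c (u i) ≤ b
      · rw [(hstep i).1 hc]
        by_cases hui : u i ∈ A i.castSucc
        · rwa [insert_eq_self.mpr hui]
        · rw [sum_insert hui]; linarith
      · rwa [(hstep i).2 hc]
  have accMem : ∀ m : ℕ, ∀ hmn : m < Fintype.card V + 1,
      (∀ j : Fin (Fintype.card V), j.val < m → (∑ v ∈ A j.castSucc, c v) + c (u j) ≤ b) →
      ∀ j : Fin (Fintype.card V), j.val < m → u j ∈ A ⟨m, hmn⟩ := by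
    intro m
    induction m with
    | zero => intro _ _ j hj; omega
    | succ m ih =>
      intro hmn hacc j hj
      have hmn' : m < Fintype.card V := by omega
      have hstepA : A (⟨m, hmn'⟩ : Fin (Fintype.card V)).succ =
          insert (u ⟨m, hmn'⟩) (A (⟨m, hmn'⟩ : Fin (Fintype.card V)).castSucc) :=
        (hstep _).1 (hacc ⟨m, hmn'⟩ (by simp))
      have hsucc : (⟨m+1, hmn⟩ : Fin (Fintype.card V + 1)) =
          (⟨m, hmn'⟩ : Fin (Fintype.card V)).succ := rfl
      rw [hsucc, hstepA]
      rcases Nat.lt_succ_iff_lt_or_eq.mp hj with h | h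
      · have hmem := ih (by omega) (fun k hk => hacc k (by omega)) j h
        exact mem_insert_of_mem hmem
      · have hje : j = ⟨m, hmn'⟩ := Fin.ext h
        rw [hje]; exact mem_insert_self _ _
  have Achain : ∀ m : ℕ, ∀ hm : m < Fintype.card V + 1, ∀ k : ℕ, ∀ hk : k ≤ m,
      A ⟨k, by omega⟩ ⊆ A ⟨m, hm⟩ := by
    intro m
    induction m with
    | zero =>
      intro hm k hk
      have : k = 0 := by omega
      subst this; exact subset_rfl
    | succ m ih =>
      intro hm k hk
      have hmn : m < Fintype.card V := by omega
      rcases Nat.lt_succ_iff_lt_or_eq.mp (Nat.lt_succ_of_le hk) with h | h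
      · refine subset_trans (ih (by omega) k (by omega)) ?_
        exact hAsub ⟨m, hmn⟩
      · exact le_of_eq (congrArg A (Fin.ext h))
  have keyStep : ∀ i : Fin (Fintype.card V),
      (∀ j : Fin (Fintype.card V), j.val < i.val →
        (∑ v ∈ A j.castSucc, c v) + c (u j) ≤ b) →
      (L - f (A i.castSucc)) * c (u i) ≤
        b * (f (insert (u i) (A i.castSucc)) - f (A i.castSucc)) := by
    intro i hacc
    set m := f (insert (u i) (A i.castSucc)) - f (A i.castSucc) with hm
    have hm0 : 0 ≤ m := hmarg _ _
    have hci : 0 < c (u i) := hcpos (u i)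
    have hrem : ∀ v ∈ Finset.univ \ A i.castSucc,
        (f (insert v (A i.castSucc)) - f (A i.castSucc)) * c (u i) ≤ m * c v := by
      intro v hv
      obtain ⟨j, rfl⟩ := hu.2 v
      by_cases hj : j.val < i.val
      · exfalso
        have hmem := accMem i.val (by omega) hacc j hj
        have hcast : (⟨i.val, by omega⟩ : Fin (Fintype.card V + 1)) = i.castSucc := rfl
        rw [hcast] at hmem
        exact (mem_sdiff.mp hv).2 hmem
      · exact hgreedy i j (by rw [Fin.le_def]; omega)
    have hDle : sSup {y : ℝ | ∃ x : V → ℝ,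
        (∀ v : V, 0 ≤ x v ∧ x v ≤ 1) ∧
        (∑ v : V, c v * x v ≤ b) ∧
        y = ∑ v ∈ Finset.univ \ A i.castSucc,
          (f (insert v (A i.castSucc)) - f (A i.castSucc)) * x v} ≤ b * (m / c (u i)) := by
      refine csSup_le ⟨0, hmem0 i.castSucc⟩ ?_
      rintro y ⟨x, hx01, hxb, rfl⟩
      have hmc : 0 ≤ m / c (u i) := div_nonneg hm0 hci.le
      calc ∑ v ∈ Finset.univ \ A i.castSucc,
            (f (insert v (A i.castSucc)) - f (A i.castSucc)) * x v
          ≤ ∑ v ∈ Finset.univ \ A i.castSucc, (m / c (u i)) * (c v * x v) := by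
            refine Finset.sum_le_sum fun v hv => ?_
            have h1 : f (insert v (A i.castSucc)) - f (A i.castSucc) ≤ m / c (u i) * c v := by
              rw [div_mul_eq_mul_div, le_div_iff₀ hci]
              exact hrem v hv
            nlinarith [(hx01 v).1, (hx01 v).2]
        _ = (m / c (u i)) * ∑ v ∈ Finset.univ \ A i.castSucc, c v * x v := by
            rw [Finset.mul_sum]
        _ ≤ (m / c (u i)) * ∑ v : V, c v * x v := by
            refine mul_le_mul_of_nonneg_left ?_ hmc
            exact Finset.sum_le_sum_of_subset_of_nonneg Finset.sdiff_subset
              (fun v _ _ => mul_nonneg (hcpos v).le (hx01 v).1)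
        _ ≤ (m / c (u i)) * b := mul_le_mul_of_nonneg_left hxb hmc
        _ = b * (m / c (u i)) := mul_comm _ _
    have h3 := hterm i.castSucc
    have h4 : L - f (A i.castSucc) ≤ b * (m / c (u i)) := by linarith
    calc (L - f (A i.castSucc)) * c (u i) ≤ (b * (m / c (u i))) * c (u i) :=
          mul_le_mul_of_nonneg_right h4 hci.le
      _ = b * m := by field_simp
  by_cases hacc : ∀ i : Fin (Fintype.card V), (∑ v ∈ A i.castSucc, c v) + c (u i) ≤ b
  · -- no item was ever rejected : A n = univ
    have hAl : A (Fin.last (Fintype.card V)) = Finset.univ := by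
      refine Finset.eq_univ_of_forall fun v => ?_
      obtain ⟨j, rfl⟩ := hu.2 v
      exact accMem (Fintype.card V) (by omega) (fun k _ => hacc k) j j.isLt
    have hDl : sSup {y : ℝ | ∃ x : V → ℝ,
        (∀ v : V, 0 ≤ x v ∧ x v ≤ 1) ∧
        (∑ v : V, c v * x v ≤ b) ∧
        y = ∑ v ∈ Finset.univ \ A (Fin.last (Fintype.card V)),
          (f (insert v (A (Fin.last (Fintype.card V)))) - f (A (Fin.last (Fintype.card V)))) * x v}
          ≤ 0 := by
      refine csSup_le ⟨0, hmem0 _⟩ ?_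
      rintro y ⟨x, hx01, hxb, rfl⟩
      rw [hAl]
      simp
    have h5 := hterm (Fin.last (Fintype.card V))
    have h6 : α * L ≤ L := by nlinarith
    refine le_trans (by linarith) (le_max_left _ _)
  · -- some item was rejected; take the first one
    push_neg at hacc
    obtain ⟨i0, hi0⟩ := hacc
    have hex : ∃ m : ℕ, ∃ h : m < Fintype.card V,
        b < (∑ v ∈ A (⟨m, h⟩ : Fin (Fintype.card V)).castSucc, c v) + c (u ⟨m, h⟩) :=
      ⟨i0.val, i0.isLt, hi0⟩
    obtain ⟨hℓn, hrej⟩ := Nat.find_spec hex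
    have haccb : ∀ j : Fin (Fintype.card V), j.val < Nat.find hex →
        (∑ v ∈ A j.castSucc, c v) + c (u j) ≤ b := by
      intro j hj
      have h7 := Nat.find_min hex hj
      push_neg at h7
      exact h7 j.isLt
    set ℓ := Nat.find hex with hℓdef
    set i : Fin (Fintype.card V) := ⟨ℓ, hℓn⟩ with hidef
    have expBound : ∀ m : ℕ, m ≤ ℓ → ∀ hm1 : m < Fintype.card V + 1,
        L - f (A ⟨m, hm1⟩) ≤ L * Real.exp (-(∑ v ∈ A ⟨m, hm1⟩, c v) / b) := by
      intro m
      induction m with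
      | zero =>
        intro _ hm1
        have h0 : (⟨0, hm1⟩ : Fin (Fintype.card V + 1)) = 0 := rfl
        rw [h0, hA0, hf0]
        simp
      | succ m ih =>
        intro hm hm1
        have hmn : m < Fintype.card V := by omega
        set j : Fin (Fintype.card V) := ⟨m, hmn⟩ with hjdef
        have hjval : j.val = m := rfl
        have haccj : (∑ v ∈ A j.castSucc, c v) + c (u j) ≤ b := haccb j (by omega)
        have hstepA : A j.succ = insert (u j) (A j.castSucc) := (hstep j).1 haccj
        have hnm : u j ∉ A j.castSucc := by
          intro h
          have := memEarlier j.castSucc j h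
          simp only [Fin.coe_castSucc] at this
          omega
        have hkey := keyStep j (fun k hk => haccb k (by omega))
        have hcsum : ∑ v ∈ A j.succ, c v = (∑ v ∈ A j.castSucc, c v) + c (u j) := by
          rw [hstepA, sum_insert hnm]; ring
        have ihm := ih (by omega) (by omega)
        have e1 : (⟨m, by omega⟩ : Fin (Fintype.card V + 1)) = j.castSucc := rfl
        have e2 : (⟨m+1, hm1⟩ : Fin (Fintype.card V + 1)) = j.succ := rfl
        rw [e1] at ihm
        rw [e2, hcsum]
        have hF'F : f (A j.castSucc) ≤ f (A j.succ) := hmono _ _ (hAsub j)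
        have hMge : (L - f (A j.castSucc)) * c (u j) ≤
            b * (f (A j.succ) - f (A j.castSucc)) := by
          rw [hstepA]; exact hkey
        have hcc : 0 < c (u j) := hcpos _
        have hccb : c (u j) ≤ b := hcb _
        rcases le_or_gt (L - f (A j.castSucc)) 0 with hLF | hLF
        · have hpos : 0 ≤ L * Real.exp (-((∑ v ∈ A j.castSucc, c v) + c (u j)) / b) :=
            mul_nonneg hL0 (Real.exp_pos _).le
          linarith
        · have e3 : L - f (A j.succ) ≤ (L - f (A j.castSucc)) * (1 - c (u j) / b) := by
            have h8 : (L - f (A j.castSucc)) * c (u j) / b ≤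
                f (A j.succ) - f (A j.castSucc) := by
              rw [div_le_iff₀ hb]; nlinarith
            have h9 : (L - f (A j.castSucc)) * (1 - c (u j) / b) =
                (L - f (A j.castSucc)) - (L - f (A j.castSucc)) * c (u j) / b := by ring
            linarith
          have e4 : (1 : ℝ) - c (u j) / b ≤ Real.exp (-(c (u j) / b)) := by
            have := Real.add_one_le_exp (-(c (u j) / b)); linarith
          have e5 : (0:ℝ) ≤ 1 - c (u j) / b := by
            have : c (u j) / b ≤ 1 := (div_le_one hb).mpr hccb
            linarith
          calc L - f (A j.succ) ≤ (L - f (A j.castSucc)) * (1 - c (u j) / b) := e3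
            _ ≤ (L * Real.exp (-(∑ v ∈ A j.castSucc, c v) / b)) * (1 - c (u j) / b) :=
                mul_le_mul_of_nonneg_right ihm e5
            _ ≤ (L * Real.exp (-(∑ v ∈ A j.castSucc, c v) / b)) * Real.exp (-(c (u j) / b)) :=
                mul_le_mul_of_nonneg_left e4 (mul_nonneg hL0 (Real.exp_pos _).le)
            _ = L * Real.exp (-((∑ v ∈ A j.castSucc, c v) + c (u j)) / b) := by
                rw [mul_assoc, ← Real.exp_add]
                congr 1
                ring
    have hkeyl := keyStep i haccb
    have hexpl := expBound ℓ le_rfl (by omega)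
    have el : (⟨ℓ, by omega⟩ : Fin (Fintype.card V + 1)) = i.castSucc := rfl
    rw [el] at hexpl
    have hCb : ∑ v ∈ A i.castSucc, c v ≤ b := cInv i.castSucc
    have hFmax : f (A i.castSucc) ≤ max (f (A (Fin.last (Fintype.card V))))
        (Finset.univ.sup' Finset.univ_nonempty fun v : V => f {v}) := by
      refine le_trans ?_ (le_max_left _ _)
      refine hmono _ _ ?_
      have h10 := Achain (Fintype.card V) (by omega) ℓ (by omega)
      have e6 : (⟨Fintype.card V, by omega⟩ : Fin (Fintype.card V + 1)) =
          Fin.last (Fintype.card V) := rfl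
      rw [e6] at h10
      exact h10
    have hMmax : f (insert (u i) (A i.castSucc)) - f (A i.castSucc) ≤
        max (f (A (Fin.last (Fintype.card V))))
        (Finset.univ.sup' Finset.univ_nonempty fun v : V => f {v}) := by
      have h11 := hsubm ∅ (A i.castSucc) (u i) (empty_subset _)
      rw [hf0] at h11
      have h12 : f (insert (u i) ∅) = f {u i} := by norm_num
      have h13 : f {u i} ≤ Finset.univ.sup' Finset.univ_nonempty fun v : V => f {v} :=
        Finset.le_sup' (fun v : V => f {v}) (mem_univ (u i))
      refine le_trans ?_ (le_trans h13 (le_max_right _ _))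
      linarith
    rcases eq_or_lt_of_le hL0 with hL | hL
    · rw [← hL, mul_zero]
      exact le_trans (hfnn _) (le_max_left _ _)
    rcases le_or_gt (α * L) (f (A i.castSucc)) with hc1 | hc1
    · exact le_trans hc1 hFmax
    · have h1α : (0:ℝ) < 1 - α := by linarith
      have hprod : (1 - α) * Real.log (1 - α) = 2 * α - 1 := by linear_combination hαroot
      have hlog1 : 0 < 1 + Real.log (1 - α) := by nlinarith
      have hE : 1 - α < Real.exp (-(∑ v ∈ A i.castSucc, c v) / b) := by
        have h2 : (1 - α) * L < L - f (A i.castSucc) := by nlinarith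
        refine lt_of_mul_lt_mul_right ?_ hL0
        calc (1 - α) * L < L - f (A i.castSucc) := h2
          _ ≤ L * Real.exp (-(∑ v ∈ A i.castSucc, c v) / b) := hexpl
          _ = Real.exp (-(∑ v ∈ A i.castSucc, c v) / b) * L := mul_comm _ _
      have hlogC : Real.log (1 - α) < -(∑ v ∈ A i.castSucc, c v) / b :=
        (Real.log_lt_iff_lt_exp h1α).mpr hE
      have hClb : ∑ v ∈ A i.castSucc, c v < -Real.log (1 - α) * b := by
        have h14 : (∑ v ∈ A i.castSucc, c v) / b < -Real.log (1 - α) := by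
          rw [neg_div] at hlogC; linarith
        rw [div_lt_iff₀ hb] at h14
        linarith
      have hrej2 : b < (∑ v ∈ A i.castSucc, c v) + c (u i) := hrej
      have hcub : b * (1 + Real.log (1 - α)) < c (u i) := by nlinarith [hrej2, hClb]
      have h6 : ((1 - α) * L) * (b * (1 + Real.log (1 - α))) <
          (L - f (A i.castSucc)) * c (u i) := by
        refine mul_lt_mul'' (by nlinarith) hcub (by nlinarith) (by nlinarith)
      have h7 : ((1 - α) * L) * (b * (1 + Real.log (1 - α))) = α * L * b := by
        linear_combination (L * b) * hαroot
      have h15 : α * L * b < b * (f (insert (u i) (A i.castSucc)) - f (A i.castSucc)) := by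
        linarith
      have h16 : α * L < f (insert (u i) (A i.castSucc)) - f (A i.castSucc) := by
        refine lt_of_mul_lt_mul_right ?_ hb.le
        calc α * L * b < b * (f (insert (u i) (A i.castSucc)) - f (A i.castSucc)) := h15
          _ = (f (insert (u i) (A i.castSucc)) - f (A i.castSucc)) * b := mul_comm _ _
      linarith
end

section
/- For every run of the greedy heuristic and every finset T ⊆ V, it holds that f(S_g) ≥ (1 − c(T)/b) · f(T). -/
open Finset

section Aux
variable {V : Type*} [DecidableEq V]

/-- decreasing marginals from submodularity -/
lemma aux_marg_mono (f : Finset V → ℝ)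
    (hsub : ∀ S T : Finset V, f (S ∪ T) + f (S ∩ T) ≤ f S + f T)
    {S S' : Finset V} (h : S ⊆ S') {v : V} (hv : v ∉ S') :
    f (insert v S') - f S' ≤ f (insert v S) - f S := by
  have h1 := hsub (insert v S) S'
  have hU : insert v S ∪ S' = insert v S' := by
    rw [Finset.insert_union, Finset.union_eq_right.2 h]
  have hI : insert v S ∩ S' = S := by
    ext a
    simp only [Finset.mem_inter, Finset.mem_insert]
    constructor
    · rintro ⟨(rfl | ha), ha'⟩
      · exact absurd ha' hv
      · exact ha
    · intro ha; exact ⟨Or.inr ha, h ha⟩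
  rw [hU, hI] at h1
  linarith

/-- subadditive expansion -/
lemma aux_expand (f : Finset V → ℝ)
    (hsub : ∀ S T : Finset V, f (S ∪ T) + f (S ∩ T) ≤ f S + f T)
    (S : Finset V) :
    ∀ D : Finset V, (∀ v ∈ D, v ∉ S) →
      f (S ∪ D) ≤ f S + ∑ v ∈ D, (f (insert v S) - f S) := by
  intro D
  induction D using Finset.induction_on with
  | empty => simp
  | @insert a D' ha ih =>
    intro hD
    have ha' : a ∉ S ∪ D' := by
      simp only [Finset.mem_union, not_or]
      exact ⟨hD a (Finset.mem_insert_self a D'), ha⟩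
    have h1 : f (insert a (S ∪ D')) - f (S ∪ D') ≤ f (insert a S) - f S :=
      aux_marg_mono f hsub Finset.subset_union_left ha'
    have h2 := ih (fun v hv => hD v (Finset.mem_insert_of_mem hv))
    have hU : S ∪ insert a D' = insert a (S ∪ D') := by
      rw [Finset.union_insert]
    rw [hU, Finset.sum_insert ha]
    linarith

end Aux

/-- Lemma 5.2: for every run of the greedy heuristic and every finset T,
f(S_g) ≥ (1 − c(T)/b) · f(T). -/
theorem stmt14 {V : Type*} [Fintype V] [DecidableEq V]
    (f : Finset V → ℝ) (c : V → ℝ) (b : ℝ)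
    (hf0 : f ∅ = 0)
    (hmono : ∀ S T : Finset V, S ⊆ T → f S ≤ f T)
    (hsub : ∀ S T : Finset V, f (S ∪ T) + f (S ∩ T) ≤ f S + f T)
    (hcpos : ∀ v : V, 0 < c v)
    (hb : 0 < b)
    (hcb : ∀ v : V, c v ≤ b)
    (u : Fin (Fintype.card V) → V) (hu : Function.Bijective u)
    (A : Fin (Fintype.card V + 1) → Finset V)
    (hA0 : A 0 = ∅)
    (hstep : ∀ i : Fin (Fintype.card V),
      ((∑ v ∈ A i.castSucc, c v) + c (u i) ≤ b →
        A i.succ = insert (u i) (A i.castSucc)) ∧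
      (¬ ((∑ v ∈ A i.castSucc, c v) + c (u i) ≤ b) →
        A i.succ = A i.castSucc))
    (hgreedy : ∀ i j : Fin (Fintype.card V), i ≤ j →
      (f (insert (u i) (A i.castSucc)) - f (A i.castSucc)) * c (u j) ≥
      (f (insert (u j) (A i.castSucc)) - f (A i.castSucc)) * c (u i))
    (T : Finset V) :
    f (A (Fin.last (Fintype.card V))) ≥ (1 - (∑ v ∈ T, c v) / b) * f T := by
  classical
  have hfnn : ∀ S : Finset V, 0 ≤ f S := fun S => hf0 ▸ hmono ∅ S (Finset.empty_subset S)
  have hCnn : 0 ≤ ∑ v ∈ T, c v := Finset.sum_nonneg fun v _ => (hcpos v).le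
  -- one-step monotonicity
  have hstep' : ∀ i : Fin (Fintype.card V), A i.castSucc ⊆ A i.succ := by
    intro i
    by_cases hc : (∑ v ∈ A i.castSucc, c v) + c (u i) ≤ b
    · rw [(hstep i).1 hc]; exact Finset.subset_insert _ _
    · rw [(hstep i).2 hc]
  -- nat-indexed monotonicity
  have mono' : ∀ l (hl : l ≤ Fintype.card V), ∀ k (hk : k ≤ l),
      A ⟨k, by omega⟩ ⊆ A ⟨l, by omega⟩ := by
    intro l
    induction l with
    | zero =>
      intro _ k hk
      have : k = 0 := Nat.le_zero.1 hk
      subst this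
      exact Finset.Subset.refl _
    | succ m ih =>
      intro hl k hk
      rcases Nat.eq_or_lt_of_le hk with h | h
      · subst h; exact Finset.Subset.refl _
      · refine (ih (by omega) k (by omega)).trans ?_
        exact hstep' ⟨m, by omega⟩
  have hAmono : ∀ i j : Fin (Fintype.card V + 1), i ≤ j → A i ⊆ A j := by
    intro i j hij
    have := mono' j.val (by omega) i.val hij
    simpa using this

  -- every member of A l was listed before step l
  have hAidx : ∀ l (hl : l ≤ Fintype.card V), ∀ v ∈ A ⟨l, by omega⟩,
      ∃ j : Fin (Fintype.card V), (j : ℕ) < l ∧ u j = v := by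
    intro l
    induction l with
    | zero =>
      intro _ v hv
      have h0 : (⟨0, by omega⟩ : Fin (Fintype.card V + 1)) = 0 := by
        ext; simp
      rw [h0, hA0] at hv
      exact absurd hv (Finset.notMem_empty v)
    | succ m ih =>
      intro hl v hv
      have hm : m < Fintype.card V := by omega
      set i : Fin (Fintype.card V) := ⟨m, hm⟩ with hi
      have hsucc : (⟨m + 1, by omega⟩ : Fin (Fintype.card V + 1)) = i.succ := rfl
      rw [hsucc] at hv
      by_cases hc : (∑ w ∈ A i.castSucc, c w) + c (u i) ≤ b
      · rw [(hstep i).1 hc] at hv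
        rcases Finset.mem_insert.1 hv with h | h
        · exact ⟨i, by simp [hi], h.symm⟩
        · obtain ⟨j, hj1, hj2⟩ := ih (by omega) v h
          exact ⟨j, by omega, hj2⟩
      · rw [(hstep i).2 hc] at hv
        obtain ⟨j, hj1, hj2⟩ := ih (by omega) v hv
        exact ⟨j, by omega, hj2⟩
  have hnotmem : ∀ i : Fin (Fintype.card V), u i ∉ A i.castSucc := by
    intro i hmem
    obtain ⟨j, hj1, hj2⟩ := hAidx i.val (by omega) (u i) (by exact hmem)
    have : j = i := hu.1 hj2
    omega
  -- trivial case : T ⊆ Sg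
  by_cases hTS : T \ A (Fin.last (Fintype.card V)) = ∅
  · have hsub' : T ⊆ A (Fin.last (Fintype.card V)) := by
      intro v hv
      by_contra h
      exact (Finset.eq_empty_iff_forall_notMem.1 hTS v) (Finset.mem_sdiff.2 ⟨hv, h⟩)
    have h1 : f T ≤ f (A (Fin.last (Fintype.card V))) := hmono _ _ hsub'
    have h2 : 0 ≤ f T := hfnn T
    have h3 : 0 ≤ (∑ v ∈ T, c v) / b := div_nonneg hCnn hb.le
    nlinarith
  -- trivial case : c(T) ≥ b
  by_cases hCb : b ≤ ∑ v ∈ T, c v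
  · have h1 : (1 : ℝ) ≤ (∑ v ∈ T, c v) / b := (one_le_div hb).2 hCb
    have h2 : (1 - (∑ v ∈ T, c v) / b) * f T ≤ 0 :=
      mul_nonpos_of_nonpos_of_nonneg (by linarith) (hfnn T)
    exact le_trans h2 (hfnn _)
  push_neg at hCb
  -- the set of rejected indices of T
  have hTSne : (T \ A (Fin.last (Fintype.card V))).Nonempty :=
    Finset.nonempty_iff_ne_empty.2 hTS
  set J : Finset (Fin (Fintype.card V)) :=
    Finset.univ.filter (fun j => u j ∈ T \ A (Fin.last (Fintype.card V))) with hJdef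
  have hJne : J.Nonempty := by
    obtain ⟨v, hv⟩ := hTSne
    obtain ⟨j, hj⟩ := hu.2 v
    refine ⟨j, ?_⟩
    simp only [hJdef, Finset.mem_filter, Finset.mem_univ, true_and, hj]
    exact hv
  set j0 := J.min' hJne with hj0def
  have hj0mem : j0 ∈ J := J.min'_mem hJne
  -- every j in J was rejected
  have hrej : ∀ j ∈ J, ¬ ((∑ v ∈ A j.castSucc, c v) + c (u j) ≤ b) := by
    intro j hj hc
    have h1 : u j ∈ A j.succ := by
      rw [(hstep j).1 hc]; exact Finset.mem_insert_self _ _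
    have h2 : A j.succ ⊆ A (Fin.last (Fintype.card V)) :=
      hAmono _ _ (Fin.le_last _)
    have h3 : u j ∈ T \ A (Fin.last (Fintype.card V)) := by
      simpa [hJdef] using hj
    exact (Finset.mem_sdiff.1 h3).2 (h2 h1)
  -- chain inequality
  have chain : ∀ jv ∈ J, ∀ k (hk : k ≤ (j0 : ℕ)),
      (f (insert (u jv) (A j0.castSucc)) - f (A j0.castSucc)) *
        (∑ w ∈ A ⟨k, by omega⟩, c w) ≤ f (A ⟨k, by omega⟩) * c (u jv) := by
    intro jv hjv
    have hj0jv : j0 ≤ jv := J.min'_le jv hjv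
    have hvnotSg : u jv ∉ A (Fin.last (Fintype.card V)) := by
      have h3 : u jv ∈ T \ A (Fin.last (Fintype.card V)) := by
        simpa [hJdef] using hjv
      exact (Finset.mem_sdiff.1 h3).2
    have hvnot : u jv ∉ A j0.castSucc := fun h =>
      hvnotSg (hAmono _ _ (Fin.le_last _) h)
    intro k
    induction k with
    | zero =>
      intro _
      have h0 : (⟨0, by omega⟩ : Fin (Fintype.card V + 1)) = 0 := by ext; simp
      rw [h0, hA0, hf0]
      simp
    | succ m ih =>
      intro hk
      have hm : m < Fintype.card V := by omega
      set i : Fin (Fintype.card V) := ⟨m, hm⟩ with hi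
      have hcast : (⟨m, by omega⟩ : Fin (Fintype.card V + 1)) = i.castSucc := rfl
      have hsucc : (⟨m + 1, by omega⟩ : Fin (Fintype.card V + 1)) = i.succ := rfl
      rw [hsucc]
      by_cases hc : (∑ w ∈ A i.castSucc, c w) + c (u i) ≤ b
      · rw [(hstep i).1 hc]
        have hnm : u i ∉ A i.castSucc := hnotmem i
        rw [Finset.sum_insert hnm]
        have hij : i ≤ jv := by
          have : (i : ℕ) < (j0 : ℕ) := by simp [hi]; omega
          have : (i : ℕ) ≤ (jv : ℕ) := le_trans this.le hj0jv
          exact this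
        have hgr := hgreedy i jv hij
        have hsm : f (insert (u jv) (A j0.castSucc)) - f (A j0.castSucc) ≤
            f (insert (u jv) (A i.castSucc)) - f (A i.castSucc) := by
          apply aux_marg_mono f hsub _ hvnot
          have : (i : ℕ) ≤ (j0 : ℕ) := by simp [hi]; omega
          exact mono' j0.val (by omega) i.val this
        have hih := ih (by omega)
        rw [hcast] at hih
        have hcui : 0 < c (u i) := hcpos (u i)
        have hcujv : 0 < c (u jv) := hcpos (u jv)
        have hmargnn : 0 ≤ f (insert (u jv) (A i.castSucc)) - f (A i.castSucc) := by
          have := hmono (A i.castSucc) (insert (u jv) (A i.castSucc))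
            (Finset.subset_insert _ _)
          linarith
        nlinarith [hgr, hsm, hih, hcui.le, hcujv.le, hmargnn]
      · rw [(hstep i).2 hc]
        have hih := ih (by omega)
        rw [hcast] at hih
        exact hih
  -- instantiate chain at k = j0
  have hchain : ∀ jv ∈ J,
      (f (insert (u jv) (A j0.castSucc)) - f (A j0.castSucc)) *
        (∑ w ∈ A j0.castSucc, c w) ≤ f (A j0.castSucc) * c (u jv) := by
    intro jv hjv
    have := chain jv hjv j0.val le_rfl
    have hcast : (⟨(j0 : ℕ), by omega⟩ : Fin (Fintype.card V + 1)) = j0.castSucc := rfl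
    rwa [hcast] at this
  -- budget facts
  have hcA : b - ∑ v ∈ T, c v < ∑ w ∈ A j0.castSucc, c w := by
    have h1 := hrej j0 hj0mem
    push_neg at h1
    have h2 : u j0 ∈ T := by
      have h3 : u j0 ∈ T \ A (Fin.last (Fintype.card V)) := by
        simpa [hJdef] using hj0mem
      exact (Finset.mem_sdiff.1 h3).1
    have h4 : c (u j0) ≤ ∑ v ∈ T, c v :=
      Finset.single_le_sum (fun v _ => (hcpos v).le) h2
    linarith
  have hcApos : 0 < ∑ w ∈ A j0.castSucc, c w := by linarith
  have hfA : f (A j0.castSucc) ≤ f (A (Fin.last (Fintype.card V))) :=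
    hmono _ _ (hAmono _ _ (Fin.le_last _))
  -- expansion
  have hexp : f T ≤ f (A (Fin.last (Fintype.card V))) +
      ∑ v ∈ T \ A (Fin.last (Fintype.card V)),
        (f (insert v (A (Fin.last (Fintype.card V)))) - f (A (Fin.last (Fintype.card V)))) := by
    have h1 : T ⊆ A (Fin.last (Fintype.card V)) ∪ (T \ A (Fin.last (Fintype.card V))) := by
      intro v hv
      by_cases h : v ∈ A (Fin.last (Fintype.card V))
      · exact Finset.mem_union_left _ h
      · exact Finset.mem_union_right _ (Finset.mem_sdiff.2 ⟨hv, h⟩)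
    have h2 := aux_expand f hsub (A (Fin.last (Fintype.card V)))
      (T \ A (Fin.last (Fintype.card V)))
      (fun v hv => (Finset.mem_sdiff.1 hv).2)
    exact le_trans (hmono _ _ h1) h2
  -- per-element bound
  have hper : ∀ v ∈ T \ A (Fin.last (Fintype.card V)),
      (f (insert v (A (Fin.last (Fintype.card V)))) - f (A (Fin.last (Fintype.card V)))) *
        (∑ w ∈ A j0.castSucc, c w) ≤ f (A (Fin.last (Fintype.card V))) * c v := by
    intro v hv
    obtain ⟨jv, hjveq⟩ := hu.2 v
    subst hjveq
    have hjvJ : jv ∈ J := by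
      simp only [hJdef, Finset.mem_filter, Finset.mem_univ, true_and]
      exact hv
    have h1 := hchain jv hjvJ
    have h2 : f (insert (u jv) (A (Fin.last (Fintype.card V)))) -
        f (A (Fin.last (Fintype.card V))) ≤
        f (insert (u jv) (A j0.castSucc)) - f (A j0.castSucc) := by
      apply aux_marg_mono f hsub (hAmono _ _ (Fin.le_last _)) (Finset.mem_sdiff.1 hv).2
    have h3 : 0 < c (u jv) := hcpos (u jv)
    nlinarith [hfA, h3.le, hcApos]
  -- sum the per-element bounds
  have hsumper : (∑ v ∈ T \ A (Fin.last (Fintype.card V)),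
      (f (insert v (A (Fin.last (Fintype.card V)))) - f (A (Fin.last (Fintype.card V))))) *
        (∑ w ∈ A j0.castSucc, c w) ≤
      f (A (Fin.last (Fintype.card V))) * (∑ v ∈ T, c v) := by
    rw [Finset.sum_mul]
    calc ∑ v ∈ T \ A (Fin.last (Fintype.card V)),
          (f (insert v (A (Fin.last (Fintype.card V)))) - f (A (Fin.last (Fintype.card V)))) *
            (∑ w ∈ A j0.castSucc, c w)
        ≤ ∑ v ∈ T \ A (Fin.last (Fintype.card V)),
            f (A (Fin.last (Fintype.card V))) * c v := Finset.sum_le_sum hper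
      _ = f (A (Fin.last (Fintype.card V))) *
            ∑ v ∈ T \ A (Fin.last (Fintype.card V)), c v := by rw [Finset.mul_sum]
      _ ≤ f (A (Fin.last (Fintype.card V))) * (∑ v ∈ T, c v) := by
          apply mul_le_mul_of_nonneg_left _ (hfnn _)
          apply Finset.sum_le_sum_of_subset_of_nonneg (Finset.sdiff_subset)
          intro v _ _
          exact (hcpos v).le
  -- final arithmetic
  set s := f (A (Fin.last (Fintype.card V))) with hs
  set t := f T with ht
  set C := ∑ v ∈ T, c v with hC
  set cA := ∑ w ∈ A j0.castSucc, c w with hcAdef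
  have key : (b - C) * t ≤ s * b := by
    rcases le_or_gt t s with h | h
    · nlinarith [hfnn T, hCnn]
    · have h1 : (t - s) * cA ≤ s * C := by nlinarith [hexp, hsumper, hcApos.le]
      nlinarith [hcA, h1]
  rw [ge_iff_le, show (1 : ℝ) - C / b = (b - C) / b by field_simp,
    div_mul_eq_mul_div, div_le_iff₀ hb]
  linarith [key]
end

section
/- Consider a run of the greedy heuristic and a finset OPT ⊆ V with c(OPT) ≤ b. Suppose t < n is the first index at which an element of OPT is considered but rejected, i.e., u t ∈ OPT, c(A t) + c(u t) > b, and for every s < t with u s ∈ OPT one has c(A s) + c(u s) ≤ b. Put o := u t, Q := A t, and OPT' := OPT \ (Q ∪ {o}). Then (b − c(Q)) · (f(S_g) − f(Q)) ≥ (b − 2·c(Q)) · (f(Q ∪ OPT') − f(Q)); equivalently, when c(Q) < b, f(S_g) ≥ f(Q) + (1 − c(Q)/(b − c(Q))) · (f(Q ∪ OPT') − f(Q)). -/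
open Finset

set_option maxHeartbeats 1000000

/-- Corollary 5.3: with o the first element of OPT rejected by the greedy heuristic,
Q the set constructed at that point, and OPT' := OPT \ (Q ∪ {o}),
(b − c(Q))·(f(S_g) − f(Q)) ≥ (b − 2c(Q))·(f(Q ∪ OPT') − f(Q)); equivalently, when
c(Q) < b, f(S_g) ≥ f(Q) + (1 − c(Q)/(b − c(Q)))·(f(Q ∪ OPT') − f(Q)). -/
theorem stmt15 {V : Type*} [Fintype V] [DecidableEq V]
    (f : Finset V → ℝ) (c : V → ℝ) (b : ℝ)
    (hf0 : f ∅ = 0)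
    (hmono : ∀ S T : Finset V, S ⊆ T → f S ≤ f T)
    (hsub : ∀ S T : Finset V, f (S ∪ T) + f (S ∩ T) ≤ f S + f T)
    (hcpos : ∀ v : V, 0 < c v)
    (hb : 0 < b)
    (hcb : ∀ v : V, c v ≤ b)
    (u : Fin (Fintype.card V) → V) (hu : Function.Bijective u)
    (A : Fin (Fintype.card V + 1) → Finset V)
    (hA0 : A 0 = ∅)
    (hstep : ∀ i : Fin (Fintype.card V),
      ((∑ v ∈ A i.castSucc, c v) + c (u i) ≤ b →
        A i.succ = insert (u i) (A i.castSucc)) ∧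
      (¬ ((∑ v ∈ A i.castSucc, c v) + c (u i) ≤ b) →
        A i.succ = A i.castSucc))
    (hgreedy : ∀ i j : Fin (Fintype.card V), i ≤ j →
      (f (insert (u i) (A i.castSucc)) - f (A i.castSucc)) * c (u j) ≥
      (f (insert (u j) (A i.castSucc)) - f (A i.castSucc)) * c (u i))
    (OPT : Finset V) (hOPT : ∑ v ∈ OPT, c v ≤ b)
    (t : Fin (Fintype.card V))
    (htO : u t ∈ OPT)
    (htrej : (∑ v ∈ A t.castSucc, c v) + c (u t) > b)
    (htfirst : ∀ s : Fin (Fintype.card V), s < t → u s ∈ OPT →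
      (∑ v ∈ A s.castSucc, c v) + c (u s) ≤ b) :
    (b - ∑ v ∈ A t.castSucc, c v) *
        (f (A (Fin.last (Fintype.card V))) - f (A t.castSucc)) ≥
      (b - 2 * ∑ v ∈ A t.castSucc, c v) *
        (f (A t.castSucc ∪ (OPT \ (A t.castSucc ∪ {u t}))) - f (A t.castSucc)) ∧
    ((∑ v ∈ A t.castSucc, c v) < b →
      f (A (Fin.last (Fintype.card V))) ≥ f (A t.castSucc) +
        (1 - (∑ v ∈ A t.castSucc, c v) / (b - ∑ v ∈ A t.castSucc, c v)) *
          (f (A t.castSucc ∪ (OPT \ (A t.castSucc ∪ {u t}))) - f (A t.castSucc))) := by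
  classical
  -- marginal monotonicity (submodularity in marginal form)
  have marg : ∀ (S T : Finset V) (v : V), S ⊆ T →
      f (insert v T) - f T ≤ f (insert v S) - f S := by
    intro S T v hST
    have h := hsub (insert v S) T
    have h1 : insert v S ∪ T = insert v T := by
      ext x
      simp only [mem_union, mem_insert]
      constructor
      · rintro (( rfl | hx) | hx)
        · exact Or.inl rfl
        · exact Or.inr (hST hx)
        · exact Or.inr hx
      · rintro (rfl | hx)
        · exact Or.inl (Or.inl rfl)
        · exact Or.inr hx
    have h2 : f S ≤ f (insert v S ∩ T) :=
      hmono _ _ (subset_inter (subset_insert _ _) hST)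
    rw [h1] at h
    linarith
  -- one-step inclusion
  have Astep : ∀ i : Fin (Fintype.card V), A i.castSucc ⊆ A i.succ := by
    intro i
    by_cases h : (∑ v ∈ A i.castSucc, c v) + c (u i) ≤ b
    · rw [(hstep i).1 h]; exact subset_insert _ _
    · rw [(hstep i).2 h]
  -- monotonicity of A
  have Amono : ∀ j i : Fin (Fintype.card V + 1), i ≤ j → A i ⊆ A j := by
    intro j
    induction j using Fin.induction with
    | zero =>
      intro i hi
      have : i = 0 := le_antisymm hi (Fin.zero_le _)
      rw [this]
    | succ j ih =>
      intro i hi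
      rcases eq_or_lt_of_le hi with h | h
      · rw [h]
      · have hle : i ≤ j.castSucc := by
          rw [Fin.le_def]
          rw [Fin.lt_def] at h
          simp only [Fin.val_succ, Fin.coe_castSucc] at *
          omega
        exact (ih i hle).trans (Astep j)
  -- budget invariant
  have Abudget : ∀ j : Fin (Fintype.card V + 1), ∑ v ∈ A j, c v ≤ b := by
    intro j
    induction j using Fin.induction with
    | zero => rw [hA0]; simp [le_of_lt hb]
    | succ j ih =>
      by_cases h : (∑ v ∈ A j.castSucc, c v) + c (u j) ≤ b
      · rw [(hstep j).1 h]
        by_cases hm : u j ∈ A j.castSucc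
        · rw [insert_eq_self.2 hm]; exact ih
        · rw [sum_insert hm]; linarith
      · rw [(hstep j).2 h]; exact ih
  -- everything in A j comes from an accepted earlier index
  have Aimage : ∀ j : Fin (Fintype.card V + 1), ∀ v ∈ A j,
      ∃ s : Fin (Fintype.card V), s.castSucc < j ∧ u s = v ∧
        (∑ w ∈ A s.castSucc, c w) + c (u s) ≤ b := by
    intro j
    induction j using Fin.induction with
    | zero => rw [hA0]; intro v hv; exact absurd hv (notMem_empty v)
    | succ j ih =>
      intro v hv
      by_cases h : (∑ w ∈ A j.castSucc, c w) + c (u j) ≤ b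
      · rw [(hstep j).1 h] at hv
        rcases mem_insert.1 hv with rfl | hv'
        · exact ⟨j, by simp [Fin.lt_def], rfl, h⟩
        · obtain ⟨s, hs1, hs2, hs3⟩ := ih v hv'
          refine ⟨s, ?_, hs2, hs3⟩
          rw [Fin.lt_def] at *
          simp only [Fin.coe_castSucc, Fin.val_succ] at *
          omega
      · rw [(hstep j).2 h] at hv
        obtain ⟨s, hs1, hs2, hs3⟩ := ih v hv
        refine ⟨s, ?_, hs2, hs3⟩
        rw [Fin.lt_def] at *
        simp only [Fin.coe_castSucc, Fin.val_succ] at *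
        omega
  -- u i not yet in A i
  have notInA : ∀ i : Fin (Fintype.card V), u i ∉ A i.castSucc := by
    intro i hmem
    obtain ⟨s, hs1, hs2, -⟩ := Aimage i.castSucc (u i) hmem
    have : s = i := hu.1 hs2
    rw [this] at hs1
    exact lt_irrefl _ hs1
  -- accepted elements end up in the greedy output
  have memSg : ∀ s : Fin (Fintype.card V),
      (∑ w ∈ A s.castSucc, c w) + c (u s) ≤ b →
      u s ∈ A (Fin.last (Fintype.card V)) := by
    intro s h
    have h1 : u s ∈ A s.succ := by rw [(hstep s).1 h]; exact mem_insert_self _ _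
    exact Amono (Fin.last _) s.succ (Fin.le_last _) h1
  have memSg_iff : ∀ s : Fin (Fintype.card V),
      u s ∈ A (Fin.last (Fintype.card V)) ↔
      (∑ w ∈ A s.castSucc, c w) + c (u s) ≤ b := by
    intro s
    constructor
    · intro h
      obtain ⟨s', -, hs2, hs3⟩ := Aimage _ _ h
      rwa [hu.1 hs2] at hs3
    · exact memSg s
  -- index of an element
  set e : Fin (Fintype.card V) ≃ V := Equiv.ofBijective u hu with he
  have hue : ∀ v : V, u (e.symm v) = v := by
    intro v
    have : e (e.symm v) = v := e.apply_symm_apply v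
    exact this
  have hes : ∀ s : Fin (Fintype.card V), e.symm (u s) = s := by
    intro s
    have : e.symm (e s) = s := e.symm_apply_apply s
    exact this
  -- the sets
  set Q : Finset V := A t.castSucc with hQ
  set Sg : Finset V := A (Fin.last (Fintype.card V)) with hSg
  set O' : Finset V := OPT \ (Q ∪ {u t}) with hO'
  set R : Finset V := O'.filter (fun v => v ∉ Sg) with hR
  set m : V → ℝ :=
    fun r => f (insert r (A (e.symm r).castSucc)) - f (A (e.symm r).castSucc) with hm
  set q : ℝ := ∑ v ∈ Q, c v with hq
  -- every element of O' is considered strictly after t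
  have idx_gt : ∀ v ∈ O', t < e.symm v := by
    intro v hv
    rw [hO', mem_sdiff, mem_union, mem_singleton] at hv
    obtain ⟨hvO, hvn⟩ := hv
    push_neg at hvn
    rcases lt_trichotomy (e.symm v) t with h | h | h
    · exfalso
      have hbud := htfirst (e.symm v) h (by rwa [hue v])
      have h1 : u (e.symm v) ∈ A (e.symm v).succ := by
        rw [(hstep (e.symm v)).1 hbud]; exact mem_insert_self _ _
      have h2 : (e.symm v).succ ≤ t.castSucc := by
        rw [Fin.le_def]
        rw [Fin.lt_def] at h
        simp only [Fin.val_succ, Fin.coe_castSucc] at *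
        omega
      have := Amono t.castSucc (e.symm v).succ h2 h1
      rw [hue v] at this
      exact hvn.1 this
    · exfalso
      apply hvn.2
      rw [← hue v, h]
    · exact h
  -- elements of R were rejected at their turn
  have rej_R : ∀ r ∈ R, ¬ ((∑ w ∈ A (e.symm r).castSucc, c w) + c r ≤ b) := by
    intro r hr hcon
    rw [hR, mem_filter] at hr
    apply hr.2
    have := memSg (e.symm r) (by rwa [hue r])
    rwa [hue r] at this
  have m_nonneg : ∀ r : V, 0 ≤ m r := by
    intro r
    have := hmono _ _ (subset_insert r (A (e.symm r).castSucc))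
    simp only [hm]
    linarith
  have hq0 : 0 ≤ q := sum_nonneg (fun v _ => (hcpos v).le)
  have hqb : q ≤ b := Abudget t.castSucc
  -- key per-element bound
  have h3 : ∀ r ∈ R, m r * (b - q - c r) ≤ c r * (f Sg - f Q) := by
    intro r hr
    have hrO : r ∈ O' := (mem_filter.1 (by rwa [hR] at hr)).1
    have htr : t < e.symm r := idx_gt r hrO
    -- inner induction
    have inner : ∀ i : Fin (Fintype.card V + 1), t.castSucc ≤ i →
        i ≤ (e.symm r).castSucc →
        m r * ((∑ v ∈ A i, c v) - q) ≤ c r * (f (A i) - f Q) := by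
      intro i
      induction i using Fin.induction with
      | zero =>
        intro h1 h2
        have h0 : t.castSucc = 0 := le_antisymm (by exact_mod_cast h1) (Fin.zero_le _)
        rw [hq, hQ, h0]
        simp
      | succ i ih =>
        intro h1 h2
        by_cases hti : t.castSucc ≤ i.castSucc
        · have h2' : i.castSucc ≤ (e.symm r).castSucc := by
            rw [Fin.le_def] at *
            simp only [Fin.coe_castSucc, Fin.val_succ] at *
            omega
          have IH := ih hti h2'
          by_cases hacc : (∑ v ∈ A i.castSucc, c v) + c (u i) ≤ b
          · have hA' := (hstep i).1 hacc
            have hni := notInA i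
            have hilt : i ≤ e.symm r := by
              rw [Fin.le_def] at h2 ⊢
              simp only [Fin.val_succ, Fin.coe_castSucc] at h2
              omega
            have hgr := hgreedy i (e.symm r) hilt
            rw [hue r] at hgr
            have hsubm : m r ≤ f (insert r (A i.castSucc)) - f (A i.castSucc) := by
              simp only [hm]
              exact marg _ _ r (Amono _ _ h2')
            have hkey : m r * c (u i) ≤
                (f (insert (u i) (A i.castSucc)) - f (A i.castSucc)) * c r := by
              have hc1 : 0 < c (u i) := hcpos (u i)
              have hc2 : 0 < c r := hcpos r
              nlinarith [hgr, hsubm]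
            rw [hA', sum_insert hni]
            nlinarith [IH, hkey]
          · rw [(hstep i).2 hacc]
            exact IH
        · -- i.succ = t.castSucc
          have h0 : i.succ = t.castSucc := by
            have hv1 : ((t.castSucc : Fin (Fintype.card V + 1)) : ℕ) ≤ (i.succ : ℕ) :=
              Fin.le_def.mp h1
            have hv2 : ¬ (((t.castSucc : Fin (Fintype.card V + 1)) : ℕ) ≤ (i.castSucc : ℕ)) :=
              fun hh => hti (Fin.le_def.mpr hh)
            apply Fin.ext
            simp only [Fin.val_succ, Fin.coe_castSucc] at hv1 hv2 ⊢
            omega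
          rw [h0, ← hq, ← hQ]
          simp
    have hts : t.castSucc ≤ (e.symm r).castSucc := by
      rw [Fin.le_def]
      rw [Fin.lt_def] at htr
      simp only [Fin.coe_castSucc] at *
      omega
    have hin := inner (e.symm r).castSucc hts le_rfl
    have hrej := rej_R r hr
    push_neg at hrej
    have hfle : f (A (e.symm r).castSucc) ≤ f Sg :=
      hmono _ _ (Amono _ _ (Fin.le_last _))
    have hfQle : f Q ≤ f (A (e.symm r).castSucc) := hmono _ _ (Amono _ _ hts)
    have hcr : 0 < c r := hcpos r
    nlinarith [m_nonneg r, hin, hrej, hfle, hfQle]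
  -- potential function induction
  have pot : ∀ j : Fin (Fintype.card V + 1), t.castSucc ≤ j →
      f (Q ∪ O') - ∑ r ∈ R.filter (fun v => ((e.symm v : ℕ) < (j : ℕ))), m r ≤
      f (A j ∪ O'.filter (fun v => ((j : ℕ) ≤ (e.symm v : ℕ)))) := by
    intro j
    induction j using Fin.induction with
    | zero =>
      intro h1
      have h0 : t.castSucc = (0 : Fin (Fintype.card V + 1)) :=
        le_antisymm h1 (Fin.zero_le _)
      have hd : R.filter (fun v => ((e.symm v : ℕ) <
          ((0 : Fin (Fintype.card V + 1)) : ℕ))) = ∅ := by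
        apply filter_false_of_mem
        intro x _
        simp
      have hr : O'.filter (fun v => (((0 : Fin (Fintype.card V + 1)) : ℕ) ≤
          (e.symm v : ℕ))) = O' := by
        apply filter_true_of_mem
        intro x _
        simp
      rw [hd, hr, sum_empty, hQ, h0, sub_zero]
    | succ j ih =>
      intro h1
      by_cases hti : t.castSucc ≤ j.castSucc
      · have IH := ih hti
        have hvs : (j.succ : ℕ) = (j : ℕ) + 1 := rfl
        have hvc : ((j.castSucc : Fin (Fintype.card V + 1)) : ℕ) = (j : ℕ) := rfl
        by_cases hacc : (∑ v ∈ A j.castSucc, c v) + c (u j) ≤ b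
        · -- accepted step
          have hA' := (hstep j).1 hacc
          have huS : u j ∈ Sg := memSg j hacc
          have hdone : R.filter (fun v => ((e.symm v : ℕ) < (j.succ : ℕ))) =
              R.filter (fun v => ((e.symm v : ℕ) < ((j.castSucc :
                Fin (Fintype.card V + 1)) : ℕ))) := by
            apply filter_congr
            intro x hx
            have hxne : (e.symm x : ℕ) ≠ (j : ℕ) := by
              intro hcon
              have : e.symm x = j := Fin.ext hcon
              have hxu : x = u j := by rw [← hue x, this]
              rw [hR, mem_filter] at hx
              rw [hxu] at hx
              exact hx.2 huS
            rw [hvs, hvc]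
            constructor <;> intro hh <;> [skip; omega]
            omega
          have hsubs : A j.castSucc ∪
              O'.filter (fun v => (((j.castSucc : Fin (Fintype.card V + 1)) : ℕ) ≤
                (e.symm v : ℕ))) ⊆
              A j.succ ∪ O'.filter (fun v => ((j.succ : ℕ) ≤ (e.symm v : ℕ))) := by
            intro x hx
            rcases mem_union.1 hx with hx1 | hx2
            · exact mem_union_left _ (Astep j hx1)
            · rw [mem_filter] at hx2
              rcases eq_or_lt_of_le hx2.2 with heq | hlt
              · have : e.symm x = j := Fin.ext heq.symm
                have hxu : x = u j := by rw [← hue x, this]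
                apply mem_union_left
                rw [hA', hxu]
                exact mem_insert_self _ _
              · apply mem_union_right
                rw [mem_filter]
                exact ⟨hx2.1, by rw [hvs]; omega⟩
          calc f (Q ∪ O') - ∑ r ∈ R.filter (fun v => ((e.symm v : ℕ) < (j.succ : ℕ))), m r
              = f (Q ∪ O') - ∑ r ∈ R.filter (fun v => ((e.symm v : ℕ) <
                ((j.castSucc : Fin (Fintype.card V + 1)) : ℕ))), m r := by rw [hdone]
            _ ≤ f (A j.castSucc ∪ O'.filter (fun v =>
                (((j.castSucc : Fin (Fintype.card V + 1)) : ℕ) ≤ (e.symm v : ℕ)))) := IH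
            _ ≤ f (A j.succ ∪ O'.filter (fun v => ((j.succ : ℕ) ≤ (e.symm v : ℕ)))) :=
                hmono _ _ hsubs
        · -- rejected step
          have hA' := (hstep j).2 hacc
          by_cases hO : u j ∈ O'
          · have hnS : u j ∉ Sg := by
              intro hc
              exact hacc ((memSg_iff j).1 hc)
            have hjR : u j ∈ R := by rw [hR, mem_filter]; exact ⟨hO, hnS⟩
            have hjj : (e.symm (u j) : ℕ) = (j : ℕ) := by rw [hes j]
            have hrest : O'.filter (fun v => (((j.castSucc :
                Fin (Fintype.card V + 1)) : ℕ) ≤ (e.symm v : ℕ))) =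
                insert (u j) (O'.filter (fun v => ((j.succ : ℕ) ≤ (e.symm v : ℕ)))) := by
              ext x
              simp only [mem_insert, mem_filter, Fin.val_succ, Fin.coe_castSucc]
              constructor
              · rintro ⟨hx1, hx2⟩
                rcases eq_or_lt_of_le hx2 with heq | hlt
                · left
                  have : e.symm x = j := Fin.ext heq.symm
                  rw [← hue x, this]
                · right; exact ⟨hx1, hlt⟩
              · rintro (rfl | ⟨hx1, hx2⟩)
                · exact ⟨hO, by omega⟩
                · exact ⟨hx1, by omega⟩
            have hnotin : u j ∉ O'.filter (fun v => ((j.succ : ℕ) ≤ (e.symm v : ℕ))) := by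
              rw [mem_filter]
              rintro ⟨-, hc⟩
              rw [hjj, hvs] at hc
              omega
            have hdone2 : R.filter (fun v => ((e.symm v : ℕ) < (j.succ : ℕ))) =
                insert (u j) (R.filter (fun v => ((e.symm v : ℕ) <
                  ((j.castSucc : Fin (Fintype.card V + 1)) : ℕ)))) := by
              ext x
              simp only [mem_insert, mem_filter, Fin.val_succ, Fin.coe_castSucc]
              constructor
              · rintro ⟨hx1, hx2⟩
                rcases Nat.lt_succ_iff_lt_or_eq.1 hx2 with hlt | heq
                · right; exact ⟨hx1, hlt⟩
                · left
                  have : e.symm x = j := Fin.ext heq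
                  rw [← hue x, this]
              · rintro (rfl | ⟨hx1, hx2⟩)
                · exact ⟨hjR, by omega⟩
                · exact ⟨hx1, by omega⟩
            have hnotin2 : u j ∉ R.filter (fun v => ((e.symm v : ℕ) <
                ((j.castSucc : Fin (Fintype.card V + 1)) : ℕ))) := by
              rw [mem_filter]
              rintro ⟨-, hc⟩
              rw [hjj, hvc] at hc
              omega
            have hsum : ∑ r ∈ R.filter (fun v => ((e.symm v : ℕ) < (j.succ : ℕ))), m r =
                m (u j) + ∑ r ∈ R.filter (fun v => ((e.symm v : ℕ) <
                  ((j.castSucc : Fin (Fintype.card V + 1)) : ℕ))), m r := by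
              rw [hdone2, sum_insert hnotin2]
            -- submodular drop
            have hmuj : m (u j) = f (insert (u j) (A j.castSucc)) - f (A j.castSucc) := by
              simp only [hm, hes j]
            have hkey := hsub (A j.castSucc ∪ O'.filter (fun v =>
              ((j.succ : ℕ) ≤ (e.symm v : ℕ)))) (insert (u j) (A j.castSucc))
            have hueq : (A j.castSucc ∪ O'.filter (fun v =>
                ((j.succ : ℕ) ≤ (e.symm v : ℕ)))) ∪ insert (u j) (A j.castSucc) =
                A j.castSucc ∪ O'.filter (fun v => (((j.castSucc :
                  Fin (Fintype.card V + 1)) : ℕ) ≤ (e.symm v : ℕ))) := by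
              rw [hrest]
              ext x
              simp only [mem_union, mem_insert]
              tauto
            have hieq : f (A j.castSucc) ≤ f ((A j.castSucc ∪ O'.filter (fun v =>
                ((j.succ : ℕ) ≤ (e.symm v : ℕ)))) ∩ insert (u j) (A j.castSucc)) := by
              apply hmono
              exact subset_inter subset_union_left (subset_insert _ _)
            rw [hueq] at hkey
            have hdrop : f (A j.castSucc ∪ O'.filter (fun v =>
                (((j.castSucc : Fin (Fintype.card V + 1)) : ℕ) ≤ (e.symm v : ℕ)))) -
                m (u j) ≤ f (A j.castSucc ∪ O'.filter (fun v =>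
                ((j.succ : ℕ) ≤ (e.symm v : ℕ)))) := by
              rw [hmuj]
              linarith
            rw [hA', hsum]
            linarith
          · -- rejected, not in O'
            have hrest : O'.filter (fun v => ((j.succ : ℕ) ≤ (e.symm v : ℕ))) =
                O'.filter (fun v => (((j.castSucc : Fin (Fintype.card V + 1)) : ℕ) ≤
                  (e.symm v : ℕ))) := by
              apply filter_congr
              intro x hx
              have hxne : (e.symm x : ℕ) ≠ (j : ℕ) := by
                intro hcon
                have : e.symm x = j := Fin.ext hcon
                exact hO (by rw [← hue x, this] at hx; exact hx)
              rw [hvs, hvc]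
              constructor <;> intro hh <;> omega
            have hdone : R.filter (fun v => ((e.symm v : ℕ) < (j.succ : ℕ))) =
                R.filter (fun v => ((e.symm v : ℕ) < ((j.castSucc :
                  Fin (Fintype.card V + 1)) : ℕ))) := by
              apply filter_congr
              intro x hx
              have hxO : x ∈ O' := (mem_filter.1 (by rwa [hR] at hx)).1
              have hxne : (e.symm x : ℕ) ≠ (j : ℕ) := by
                intro hcon
                have : e.symm x = j := Fin.ext hcon
                exact hO (by rw [← hue x, this] at hxO; exact hxO)
              rw [hvs, hvc]
              constructor <;> intro hh <;> omega
            rw [hA', hrest, hdone]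
            exact IH
      · -- base at t
        have h0 : j.succ = t.castSucc := by
          have hv1 : ((t.castSucc : Fin (Fintype.card V + 1)) : ℕ) ≤ (j.succ : ℕ) :=
            Fin.le_def.mp h1
          have hv2 : ¬ (((t.castSucc : Fin (Fintype.card V + 1)) : ℕ) ≤ (j.castSucc : ℕ)) :=
            fun hh => hti (Fin.le_def.mpr hh)
          apply Fin.ext
          simp only [Fin.val_succ, Fin.coe_castSucc] at hv1 hv2 ⊢
          omega
        have hvt : ((t.castSucc : Fin (Fintype.card V + 1)) : ℕ) = (t : ℕ) := rfl
        have hd : R.filter (fun v => ((e.symm v : ℕ) < ((t.castSucc :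
            Fin (Fintype.card V + 1)) : ℕ))) = ∅ := by
          apply filter_false_of_mem
          intro x hx
          have hxO : x ∈ O' := (mem_filter.1 (by rwa [hR] at hx)).1
          have := idx_gt x hxO
          rw [Fin.lt_def] at this
          rw [hvt]
          omega
        have hr : O'.filter (fun v => (((t.castSucc : Fin (Fintype.card V + 1)) : ℕ) ≤
            (e.symm v : ℕ))) = O' := by
          apply filter_true_of_mem
          intro x hx
          have := idx_gt x hx
          rw [Fin.lt_def] at this
          rw [hvt]
          omega
        rw [h0, hd, hr, sum_empty, hQ, sub_zero]
  -- conclusion of potential argument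
  have h4 : f (Q ∪ O') - ∑ r ∈ R, m r ≤ f Sg := by
    have hp := pot (Fin.last (Fintype.card V)) (Fin.le_last _)
    have hvl : ((Fin.last (Fintype.card V) : Fin (Fintype.card V + 1)) : ℕ) =
        Fintype.card V := rfl
    have hd : R.filter (fun v => ((e.symm v : ℕ) < ((Fin.last (Fintype.card V) :
        Fin (Fintype.card V + 1)) : ℕ))) = R := by
      apply filter_true_of_mem
      intro x _
      rw [hvl]
      exact (e.symm x).isLt
    have hr : O'.filter (fun v => (((Fin.last (Fintype.card V) :
        Fin (Fintype.card V + 1)) : ℕ) ≤ (e.symm v : ℕ))) = ∅ := by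
      apply filter_false_of_mem
      intro x _
      rw [hvl]
      push_neg
      exact (e.symm x).isLt
    rw [hd, hr, union_empty] at hp
    exact hp
  -- basic inequalities
  have hΔ0 : f Q ≤ f (Q ∪ O') := hmono _ _ subset_union_left
  have hG0 : f Q ≤ f Sg := hmono _ _ (Amono _ _ (Fin.le_last _))
  have hco : b - q < c (u t) := by linarith [htrej]
  set cR : ℝ := ∑ v ∈ R, c v with hcR
  have hut_nO : u t ∉ O' := by
    rw [hO', mem_sdiff]
    rintro ⟨-, hc⟩
    exact hc (mem_union_right _ (mem_singleton_self _))
  have hut_nR : u t ∉ R := by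
    rw [hR, mem_filter]
    rintro ⟨hc, -⟩
    exact hut_nO hc
  have hRO : R ⊆ OPT := by
    intro x hx
    have hxO : x ∈ O' := (mem_filter.1 (by rwa [hR] at hx)).1
    exact (sdiff_subset) hxO
  have hcRb : c (u t) + cR ≤ b := by
    have hsub2 : insert (u t) R ⊆ OPT := insert_subset htO hRO
    have h1 : ∑ v ∈ insert (u t) R, c v ≤ ∑ v ∈ OPT, c v :=
      sum_le_sum_of_subset_of_nonneg hsub2 (fun i _ _ => (hcpos i).le)
    rw [sum_insert hut_nR] at h1
    linarith
  have hcR0 : 0 ≤ cR := sum_nonneg (fun v _ => (hcpos v).le)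
  have hcRq : cR < q := by linarith
  have hpart1 : (b - q) * (f Sg - f Q) ≥ (b - 2 * q) * (f (Q ∪ O') - f Q) := by
    by_cases hcase : b - 2 * q ≤ 0
    · have h1 : (b - 2 * q) * (f (Q ∪ O') - f Q) ≤ 0 :=
        mul_nonpos_of_nonpos_of_nonneg hcase (by linarith)
      have h2 : 0 ≤ (b - q) * (f Sg - f Q) :=
        mul_nonneg (by linarith) (by linarith)
      linarith
    · push_neg at hcase
      have hsum1 : (∑ r ∈ R, m r) * (b - q - cR) ≤ cR * (f Sg - f Q) := by
        have hterm : ∀ r ∈ R, m r * (b - q - cR) ≤ c r * (f Sg - f Q) := by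
          intro r hr
          have hcr_le : c r ≤ cR :=
            single_le_sum (fun i _ => (hcpos i).le) hr
          have h3r := h3 r hr
          nlinarith [m_nonneg r]
        calc (∑ r ∈ R, m r) * (b - q - cR) = ∑ r ∈ R, m r * (b - q - cR) := by
              rw [sum_mul]
          _ ≤ ∑ r ∈ R, c r * (f Sg - f Q) := sum_le_sum hterm
          _ = cR * (f Sg - f Q) := by rw [← sum_mul]
      have hΔG : f (Q ∪ O') - f Sg ≤ ∑ r ∈ R, m r := by linarith [h4]
      have hbq2 : 0 < b - q - cR := by linarith
      by_cases hdg : f (Q ∪ O') - f Sg ≤ 0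
      · nlinarith [hΔ0, hG0]
      · push_neg at hdg
        have hkey : (f (Q ∪ O') - f Sg) * (b - q - cR) ≤ cR * (f Sg - f Q) := by
          have := mul_le_mul_of_nonneg_right hΔG (le_of_lt hbq2)
          linarith
        have e1 : (f (Q ∪ O') - f Sg) * (b - 2 * q) ≤
            (f (Q ∪ O') - f Sg) * (b - q - cR) :=
          mul_le_mul_of_nonneg_left (by linarith) hdg.le
        have e2 : cR * (f Sg - f Q) ≤ q * (f Sg - f Q) :=
          mul_le_mul_of_nonneg_right hcRq.le (by linarith)
        have chain : (f (Q ∪ O') - f Sg) * (b - 2 * q) ≤ q * (f Sg - f Q) :=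
          le_trans e1 (le_trans hkey e2)
        have hiden : (b - 2 * q) * (f (Q ∪ O') - f Q) -
            (b - q) * (f Sg - f Q) =
            (f (Q ∪ O') - f Sg) * (b - 2 * q) - q * (f Sg - f Q) := by ring
        linarith [chain, hiden]
  refine ⟨hpart1, ?_⟩
  intro hqlt
  have hbq' : 0 < b - q := by linarith
  have hfrac : 1 - q / (b - q) = (b - 2 * q) / (b - q) := by
    field_simp
    ring
  rw [hfrac]
  have hdiv : (b - 2 * q) / (b - q) * (f (Q ∪ O') - f Q) ≤ f Sg - f Q := by
    rw [div_mul_eq_mul_div, div_le_iff₀ hbq']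
    have hiden2 : (f Sg - f Q) * (b - q) = (b - q) * (f Sg - f Q) := by ring
    linarith [hpart1, hiden2]
  linarith
end

section
/- For every run of the modified greedy algorithm and every OPT ⊆ V with c(OPT) ≤ b, it holds that f(S_m) ≥ ᾱ* · f(OPT), where ᾱ* := sInf { α ∈ [0,1] | ∃ x1 x2 x3 ∈ [0,1] such that: α ≥ x1; α ≥ 1 − x1 − x2; (1 − x3)·α ≥ (1 − x3)·x1 + (1 − 2·x3)·x2; and x1 ≥ 1 − exp(−x3) }. -/
open Finset

lemma exp_half_lt : Real.exp (1/2 : ℝ) < 7/4 := by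
  have h := Real.exp_one_lt_d9
  have h2 : Real.exp (1/2 : ℝ) * Real.exp (1/2 : ℝ) = Real.exp 1 := by
    rw [← Real.exp_add]; norm_num
  nlinarith [Real.exp_pos (1/2 : ℝ)]

lemma exp_half_gt : (3/2 : ℝ) < Real.exp (1/2 : ℝ) := by
  have h := Real.exp_one_gt_d9
  have h2 : Real.exp (1/2 : ℝ) * Real.exp (1/2 : ℝ) = Real.exp 1 := by
    rw [← Real.exp_add]; norm_num
  nlinarith [Real.exp_pos (1/2 : ℝ)]

lemma kappa_bounds : 4/7 < Real.exp (-(1/2) : ℝ) ∧ Real.exp (-(1/2) : ℝ) < 2/3 := by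
  have hK : Real.exp (-(1/2) : ℝ) * Real.exp (1/2 : ℝ) = 1 := by
    rw [← Real.exp_add]; norm_num
  have h1 := exp_half_lt
  have h2 := exp_half_gt
  have h3 := Real.exp_pos (-(1/2) : ℝ)
  constructor <;> nlinarith

lemma key_ineq (z q : ℝ) (hz : z ≤ 1/2) (hq1 : q < 1) (hzq : 1 - q < z) (hq0 : 1/2 < q) :
    (1 - Real.exp (-(1/2) : ℝ)) * (2 - Real.exp (-((q - z)/(1 - q)))) ≤
      1 - Real.exp (-z) * Real.exp (-((q - z)/(1 - q))) := by
  have hz0 : 0 < z := by linarith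
  have hq' : 0 < 1 - q := by linarith
  set K := Real.exp (-(1/2) : ℝ) with hKdef
  obtain ⟨hK1, hK2⟩ := kappa_bounds
  set E0 := Real.exp (-((q - z)/(1 - q))) with hE0def
  have hE0pos : 0 < E0 := Real.exp_pos _
  have h1 : E0 ≤ Real.exp (-((1 - 2*z)/z)) := by
    apply Real.exp_le_exp.2
    rw [neg_le_neg_iff, div_le_div_iff₀ hz0 hq']
    nlinarith [mul_nonneg (by linarith : (0:ℝ) ≤ 1 - z) (by linarith : (0:ℝ) ≤ z - (1 - q))]
  have h2 : Real.exp (-((1 - 2*z)/z)) ≤ z/(1 - z) := by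
    have hzz : (0:ℝ) < 1 - z := by linarith
    have hge : (1 - z)/z ≤ Real.exp ((1 - 2*z)/z) := by
      have h := Real.add_one_le_exp ((1 - 2*z)/z)
      have heq : (1 - 2*z)/z + 1 = (1 - z)/z := by field_simp; ring
      linarith [heq ▸ h]
    rw [Real.exp_neg]
    rw [inv_le_comm₀ (Real.exp_pos _) (by positivity)]
    calc (z/(1-z))⁻¹ = (1-z)/z := by rw [inv_div]
    _ ≤ _ := hge
  have h3 : Real.exp (-z) ≤ K/(1/2 + z) := by
    have hhz : (0:ℝ) < 1/2 + z := by linarith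
    have e1 : Real.exp (-z) = K * Real.exp (1/2 - z) := by
      rw [hKdef, ← Real.exp_add]; ring_nf
    have e2 : (1/2 + z) * Real.exp (1/2 - z) ≤ 1 := by
      have hx := Real.add_one_le_exp (-(1/2 - z))
      have hy : (1/2 + z) ≤ Real.exp (-(1/2 - z)) := by linarith
      have hmul : (1/2 + z) * Real.exp (1/2 - z) ≤ Real.exp (-(1/2 - z)) * Real.exp (1/2 - z) :=
        mul_le_mul_of_nonneg_right hy (le_of_lt (Real.exp_pos _))
      rw [← Real.exp_add] at hmul
      simpa using hmul
    rw [e1, le_div_iff₀ hhz]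
    nlinarith [Real.exp_pos (1/2 - z), Real.exp_pos (-(1/2):ℝ)]
  have h4 : 0 ≤ Real.exp (-z) - (1 - K) := by
    have := Real.add_one_le_exp (-z)
    nlinarith
  have hE0z : E0 ≤ z/(1-z) := le_trans h1 h2
  have hmain : (Real.exp (-z) - (1 - K)) * E0 ≤ (K/(1/2+z) - (1 - K)) * (z/(1-z)) := by
    apply mul_le_mul (by linarith) hE0z (le_of_lt hE0pos) (by nlinarith)
  have hhz : (0:ℝ) < 1/2 + z := by linarith
  have hzz : (0:ℝ) < 1 - z := by linarith
  have hfinal : (K/(1/2+z) - (1 - K)) * (z/(1-z)) ≤ 2*K - 1 := by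
    rw [div_sub' (ne_of_gt hhz), div_mul_div_comm, div_le_iff₀ (by positivity)]
    nlinarith [mul_nonneg (by linarith : (0:ℝ) ≤ 1/2 - z)
      (by nlinarith : (0:ℝ) ≤ (2*K - 1) - (2 - 3*K)*z)]
  nlinarith

section Helpers
variable {V : Type*} [DecidableEq V]

lemma gain_mono (f : Finset V → ℝ)
    (hsub : ∀ S T : Finset V, f (S ∪ T) + f (S ∩ T) ≤ f S + f T)
    {S T : Finset V} (hST : S ⊆ T) {v : V} (hv : v ∉ T) :
    f (insert v T) - f T ≤ f (insert v S) - f S := by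
  have h := hsub (insert v S) T
  have h1 : insert v S ∪ T = insert v T := by
    rw [insert_union, union_eq_right.2 hST]
  have h2 : insert v S ∩ T = S := by
    ext x
    simp only [mem_inter, mem_insert]
    constructor
    · rintro ⟨(rfl | hx), hT⟩
      · exact absurd hT hv
      · exact hx
    · intro hx; exact ⟨Or.inr hx, hST hx⟩
  rw [h1, h2] at h
  linarith

lemma expand_lemma (f : Finset V → ℝ)
    (hsub : ∀ S T : Finset V, f (S ∪ T) + f (S ∩ T) ≤ f S + f T)
    (W : Finset V) : ∀ S : Finset V,
    f (S ∪ W) - f S ≤ ∑ v ∈ W \ S, (f (insert v S) - f S) := by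
  induction W using Finset.induction_on with
  | empty => intro S; simp
  | @insert a W ha ih =>
    intro S
    by_cases haS : a ∈ S
    · rw [union_insert, insert_eq_self.2 (mem_union_left W haS),
        insert_sdiff_of_mem _ haS]
      exact ih S
    · rw [union_insert, insert_sdiff_of_notMem _ haS,
        sum_insert (by simp [ha] : a ∉ W \ S)]
      have key : f (insert a (S ∪ W)) - f (S ∪ W) ≤ f (insert a S) - f S := by
        apply gain_mono f hsub subset_union_left
        simp [haS, ha]
      have := ih S
      linarith

end Helpers

set_option maxHeartbeats 2000000 in
lemma greedy_core {V : Type*} [DecidableEq V]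
    (f : Finset V → ℝ) (c : V → ℝ) (b : ℝ)
    (hf0 : f ∅ = 0)
    (hmono : ∀ S T : Finset V, S ⊆ T → f S ≤ f T)
    (hsub : ∀ S T : Finset V, f (S ∪ T) + f (S ∩ T) ≤ f S + f T)
    (hcpos : ∀ v : V, 0 < c v)
    (hb : 0 < b)
    (hcb : ∀ v : V, c v ≤ b)
    (n : ℕ) (u : Fin n → V) (huinj : Function.Injective u)
    (A : Fin (n + 1) → Finset V)
    (hA0 : A 0 = ∅)
    (hstep : ∀ i : Fin n,
      ((∑ v ∈ A i.castSucc, c v) + c (u i) ≤ b →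
        A i.succ = insert (u i) (A i.castSucc)) ∧
      (¬ ((∑ v ∈ A i.castSucc, c v) + c (u i) ≤ b) →
        A i.succ = A i.castSucc))
    (hgreedy : ∀ i j : Fin n, i ≤ j →
      (f (insert (u i) (A i.castSucc)) - f (A i.castSucc)) * c (u j) ≥
      (f (insert (u j) (A i.castSucc)) - f (A i.castSucc)) * c (u i))
    (OPT : Finset V) (hOPT : ∑ v ∈ OPT, c v ≤ b)
    (hsur : ∀ v ∈ OPT, ∃ j, u j = v)
    (L : ℝ) (hLf : f (A (Fin.last n)) ≤ L) (hLs : ∀ v ∈ OPT, f {v} ≤ L)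
    (hL0 : 0 ≤ L) :
    (1 - Real.exp (-(1/2) : ℝ)) * f OPT ≤ L := by
  classical
  by_contra hcon
  push_neg at hcon
  set K := Real.exp (-(1/2) : ℝ) with hKdef
  obtain ⟨hK1, hK2⟩ := kappa_bounds
  rw [← hKdef] at hK1 hK2
  set F := f OPT with hFdef
  -- basic f facts
  have hf_nonneg : ∀ S : Finset V, 0 ≤ f S := fun S => hf0 ▸ hmono ∅ S (empty_subset S)
  have hgain_nonneg : ∀ (v : V) (S : Finset V), 0 ≤ f (insert v S) - f S :=
    fun v S => sub_nonneg.2 (hmono S _ (subset_insert v S))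
  have hF : 0 < F := by nlinarith [hf_nonneg OPT]
  -- the AN machinery
  set AN : ℕ → Finset V := fun k => A ⟨min k n, by omega⟩ with hANdef
  set cN : ℕ → ℝ := fun k => ∑ v ∈ AN k, c v with hcNdef
  have hbr1 : ∀ (k : ℕ) (hk : k < n), A (Fin.castSucc ⟨k, hk⟩) = AN k := by
    intro k hk
    simp only [hANdef]
    congr 1
    exact Fin.ext (by simp [Nat.min_eq_left hk.le])
  have hbr2 : ∀ (k : ℕ) (hk : k < n), A (Fin.succ ⟨k, hk⟩) = AN (k + 1) := by
    intro k hk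
    simp only [hANdef]
    congr 1
    exact Fin.ext (by simp [Nat.min_eq_left hk])
  have hAN0 : AN 0 = ∅ := by
    simp only [hANdef]
    have : (⟨min 0 n, by omega⟩ : Fin (n+1)) = 0 := Fin.ext (by simp)
    rw [this, hA0]
  have hANhigh : ∀ k : ℕ, n ≤ k → AN (k + 1) = AN k := by
    intro k hk
    simp only [hANdef]
    congr 1
    exact Fin.ext (by simp; omega)
  have haccA : ∀ (k : ℕ) (hk : k < n), cN k + c (u ⟨k, hk⟩) ≤ b →
      AN (k + 1) = insert (u ⟨k, hk⟩) (AN k) := by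
    intro k hk h
    rw [← hbr2 k hk, ← hbr1 k hk]
    exact (hstep ⟨k, hk⟩).1 (by rw [hbr1 k hk]; exact h)
  have hrejA : ∀ (k : ℕ) (hk : k < n), ¬ (cN k + c (u ⟨k, hk⟩) ≤ b) →
      AN (k + 1) = AN k := by
    intro k hk h
    rw [← hbr2 k hk, ← hbr1 k hk]
    exact (hstep ⟨k, hk⟩).2 (by rw [hbr1 k hk]; exact h)
  have hstepsub : ∀ k : ℕ, AN k ⊆ AN (k + 1) := by
    intro k
    by_cases hk : k < n
    · by_cases h : cN k + c (u ⟨k, hk⟩) ≤ b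
      · rw [haccA k hk h]; exact subset_insert _ _
      · rw [hrejA k hk h]
    · rw [hANhigh k (by omega)]
  have hANmono : ∀ k l : ℕ, k ≤ l → AN k ⊆ AN l := by
    intro k l hkl
    induction l with
    | zero => have : k = 0 := by omega
              subst this; exact subset_rfl
    | succ l ih =>
      rcases Nat.lt_or_ge k (l + 1) with h | h
      · exact (ih (by omega)).trans (hstepsub l)
      · have : k = l + 1 := by omega
        subst this; exact subset_rfl
  have hmem : ∀ (k : ℕ) (v : V), v ∈ AN k →
      ∃ (j : ℕ) (hj : j < n), j < k ∧ (cN j + c (u ⟨j, hj⟩) ≤ b) ∧ u ⟨j, hj⟩ = v := by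
    intro k
    induction k with
    | zero => intro v hv; rw [hAN0] at hv; exact absurd hv (notMem_empty v)
    | succ k ih =>
      intro v hv
      by_cases hk : k < n
      · by_cases h : cN k + c (u ⟨k, hk⟩) ≤ b
        · rw [haccA k hk h] at hv
          rcases mem_insert.1 hv with rfl | hv'
          · exact ⟨k, hk, by omega, h, rfl⟩
          · obtain ⟨j, hj, h1, h2, h3⟩ := ih v hv'
            exact ⟨j, hj, by omega, h2, h3⟩
        · rw [hrejA k hk h] at hv
          obtain ⟨j, hj, h1, h2, h3⟩ := ih v hv
          exact ⟨j, hj, by omega, h2, h3⟩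
      · rw [hANhigh k (by omega)] at hv
        obtain ⟨j, hj, h1, h2, h3⟩ := ih v hv
        exact ⟨j, hj, by omega, h2, h3⟩
  have hnotmem : ∀ (k : ℕ) (hk : k < n), u ⟨k, hk⟩ ∉ AN k := by
    intro k hk hm
    obtain ⟨j, hj, hjk, _, hje⟩ := hmem k _ hm
    have : j = k := congrArg Fin.val (huinj hje)
    omega
  have hcN0 : cN 0 = 0 := by simp [hcNdef, hAN0]
  have hcNacc : ∀ (k : ℕ) (hk : k < n), cN k + c (u ⟨k, hk⟩) ≤ b →
      cN (k + 1) = cN k + c (u ⟨k, hk⟩) := by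
    intro k hk h
    simp only [hcNdef]
    rw [haccA k hk h, sum_insert (hnotmem k hk)]
    ring
  have hfle : ∀ k : ℕ, k ≤ n → f (AN k) ≤ L := by
    intro k hk
    have hANn : AN n = A (Fin.last n) := by
      simp only [hANdef]; congr 1; exact Fin.ext (by simp [Fin.last])
    exact le_trans (hmono _ _ (hANmono k n hk)) (hANn ▸ hLf)
  have hgreedy' : ∀ (k l : ℕ) (hk : k < n) (hl : l < n), k ≤ l →
      (f (insert (u ⟨l, hl⟩) (AN k)) - f (AN k)) * c (u ⟨k, hk⟩) ≤
      (f (insert (u ⟨k, hk⟩) (AN k)) - f (AN k)) * c (u ⟨l, hl⟩) := by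
    intro k l hk hl hkl
    have h := hgreedy ⟨k, hk⟩ ⟨l, hl⟩ hkl
    rw [hbr1 k hk] at h
    exact h
  -- master per-step sum bound
  have step_master : ∀ (W : Finset V) (M : ℝ) (k : ℕ) (hk : k < n),
      (∀ v ∈ W, v ∉ AN k → ∃ (l : ℕ) (hl : l < n), k ≤ l ∧ u ⟨l, hl⟩ = v) →
      (∑ v ∈ W \ AN k, c v) ≤ M →
      ∑ v ∈ W \ AN k, (f (insert v (AN k)) - f (AN k)) ≤
        (M / c (u ⟨k, hk⟩)) * (f (insert (u ⟨k, hk⟩) (AN k)) - f (AN k)) := by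
    intro W M k hk hfut hM
    have hcpos' := hcpos (u ⟨k, hk⟩)
    have hgnn : 0 ≤ f (insert (u ⟨k, hk⟩) (AN k)) - f (AN k) := hgain_nonneg _ _
    calc ∑ v ∈ W \ AN k, (f (insert v (AN k)) - f (AN k))
        ≤ ∑ v ∈ W \ AN k,
            c v * ((f (insert (u ⟨k, hk⟩) (AN k)) - f (AN k)) / c (u ⟨k, hk⟩)) := by
          apply sum_le_sum
          intro v hv
          rw [mem_sdiff] at hv
          obtain ⟨l, hl, hkl, rfl⟩ := hfut v hv.1 hv.2
          have h := hgreedy' k l hk hl hkl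
          rw [show c (u ⟨l, hl⟩) * ((f (insert (u ⟨k, hk⟩) (AN k)) - f (AN k)) / c (u ⟨k, hk⟩)) =
              ((f (insert (u ⟨k, hk⟩) (AN k)) - f (AN k)) * c (u ⟨l, hl⟩)) / c (u ⟨k, hk⟩) from by
                ring, le_div_iff₀ hcpos']
          linarith
      _ = (∑ v ∈ W \ AN k, c v) *
            ((f (insert (u ⟨k, hk⟩) (AN k)) - f (AN k)) / c (u ⟨k, hk⟩)) := by
          rw [← sum_mul]
      _ ≤ M * ((f (insert (u ⟨k, hk⟩) (AN k)) - f (AN k)) / c (u ⟨k, hk⟩)) := by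
          apply mul_le_mul_of_nonneg_right hM (by positivity)
      _ = (M / c (u ⟨k, hk⟩)) * (f (insert (u ⟨k, hk⟩) (AN k)) - f (AN k)) := by
          ring
  -- phase recursion lemma
  have phase : ∀ (T M : ℝ), 0 < M → ∀ (a e : ℕ) (hae : a ≤ e), e ≤ n →
      (∀ (j : ℕ) (hj : j < n), a ≤ j → j < e → cN j + c (u ⟨j, hj⟩) ≤ b →
        T - f (AN j) ≤ (M / c (u ⟨j, hj⟩)) * (f (insert (u ⟨j, hj⟩) (AN j)) - f (AN j))) →
      (∃ k, a ≤ k ∧ k ≤ e ∧ T ≤ f (AN k)) ∨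
        T - f (AN e) ≤ (T - f (AN a)) * Real.exp (-((cN e - cN a) / M)) := by
    intro T M hM a e hae
    induction e, hae using Nat.le_induction with
    | base =>
      intro _ _
      right
      simp
    | succ e he ih =>
      intro hen hcond
      have hen' : e ≤ n := by omega
      have hlt : e < n := by omega
      rcases ih hen' (fun j hj h1 h2 h3 => hcond j hj h1 (by omega) h3) with hwin | hR
      · obtain ⟨k, h1, h2, h3⟩ := hwin
        exact Or.inl ⟨k, h1, by omega, h3⟩
      · by_cases hT : T ≤ f (AN e)
        · exact Or.inl ⟨e, he, by omega, hT⟩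
        · push_neg at hT
          by_cases haccj : cN e + c (u ⟨e, hlt⟩) ≤ b
          · have hgb := hcond e hlt he (by omega) haccj
            have hfeq : AN (e + 1) = insert (u ⟨e, hlt⟩) (AN e) := haccA e hlt haccj
            have hceq : cN (e + 1) = cN e + c (u ⟨e, hlt⟩) := hcNacc e hlt haccj
            set cj := c (u ⟨e, hlt⟩) with hcj
            have hcjpos : 0 < cj := hcpos _
            have hdivpos : 0 < cj / M := div_pos hcjpos hM
            have hgain2 : (cj / M) * (T - f (AN e)) ≤
                f (insert (u ⟨e, hlt⟩) (AN e)) - f (AN e) := by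
              have h1 := mul_le_mul_of_nonneg_left hgb hdivpos.le
              have h2 : (cj / M) * ((M / cj) *
                  (f (insert (u ⟨e, hlt⟩) (AN e)) - f (AN e))) =
                  f (insert (u ⟨e, hlt⟩) (AN e)) - f (AN e) := by
                field_simp
              linarith
            have key1 : T - f (AN (e + 1)) ≤ (T - f (AN e)) * (1 - cj / M) := by
              rw [hfeq]
              nlinarith [hgain2]
            have key2 : (T - f (AN e)) * (1 - cj / M) ≤
                (T - f (AN e)) * Real.exp (-(cj / M)) := by
              apply mul_le_mul_of_nonneg_left _ (by linarith)
              have := Real.add_one_le_exp (-(cj / M))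
              linarith
            have hchain : (T - f (AN e)) * Real.exp (-(cj / M)) ≤
                ((T - f (AN a)) * Real.exp (-((cN e - cN a) / M))) * Real.exp (-(cj / M)) :=
              mul_le_mul_of_nonneg_right hR (Real.exp_pos _).le
            right
            have harg : -((cN e - cN a) / M) + -(cj / M) = -((cN e + cj - cN a) / M) := by
              field_simp
              ring
            have hfin : ((T - f (AN a)) * Real.exp (-((cN e - cN a) / M))) *
                Real.exp (-(cj / M)) =
                (T - f (AN a)) * Real.exp (-((cN (e + 1) - cN a) / M)) := by
              rw [mul_assoc, ← Real.exp_add, harg, hceq]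
            rw [← hfin]
            linarith
          · have hfeq : AN (e + 1) = AN e := hrejA e hlt haccj
            have hceq : cN (e + 1) = cN e := by simp only [hcNdef, hfeq]
            right
            rw [hfeq, hceq]
            exact hR
  
  -- ============ assembly ============
  by_cases hex : ∃ k : ℕ, ∃ hk : k < n, u ⟨k, hk⟩ ∈ OPT ∧ ¬ (cN k + c (u ⟨k, hk⟩) ≤ b)
  case neg =>
    -- no OPT element ever rejected: OPT ⊆ AN n
    have hOPTsub : OPT ⊆ AN n := by
      intro v hv
      obtain ⟨l, rfl⟩ := hsur v hv
      rcases l with ⟨lv, hlv⟩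
      by_cases hacc' : cN lv + c (u ⟨lv, hlv⟩) ≤ b
      · exact hANmono (lv + 1) n (by omega)
          (by rw [haccA lv hlv hacc']; exact mem_insert_self _ _)
      · exact absurd ⟨lv, hlv, hv, hacc'⟩ hex
    have h1 : F ≤ f (AN n) := hmono _ _ hOPTsub
    have h2 := hfle n le_rfl
    nlinarith [mul_pos (by linarith : (0:ℝ) < K) hF]
  case pos =>
    set tn := Nat.find hex with htndef
    obtain ⟨htn, htOPT, htrej⟩ := Nat.find_spec hex
    set w := u ⟨tn, htn⟩ with hwdef
    -- phase 1 step condition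
    have hstep1 : ∀ (j : ℕ) (hj : j < n), 0 ≤ j → j < tn → cN j + c (u ⟨j, hj⟩) ≤ b →
        F - f (AN j) ≤ (b / c (u ⟨j, hj⟩)) * (f (insert (u ⟨j, hj⟩) (AN j)) - f (AN j)) := by
      intro j hj _ hjt _
      have hfut : ∀ v ∈ OPT, v ∉ AN j → ∃ (l : ℕ) (hl : l < n), j ≤ l ∧ u ⟨l, hl⟩ = v := by
        intro v hvO hvA
        obtain ⟨l, rfl⟩ := hsur v hvO
        rcases l with ⟨lv, hlv⟩
        refine ⟨lv, hlv, ?_, rfl⟩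
        by_contra hlt'
        push_neg at hlt'
        by_cases hacc' : cN lv + c (u ⟨lv, hlv⟩) ≤ b
        · exact hvA (hANmono (lv + 1) j (by omega)
            (by rw [haccA lv hlv hacc']; exact mem_insert_self _ _))
        · exact Nat.find_min hex (by omega) ⟨hlv, hvO, hacc'⟩
      have hsum : (∑ v ∈ OPT \ AN j, c v) ≤ b :=
        le_trans (sum_le_sum_of_subset_of_nonneg sdiff_subset
          (fun v _ _ => (hcpos v).le)) hOPT
      have hmaster := step_master OPT b j hj hfut hsum
      have hexp := expand_lemma f hsub OPT (AN j)
      have hFle : F ≤ f (AN j ∪ OPT) := hmono OPT _ subset_union_right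
      linarith
    have hph1 := phase F b hb 0 tn (Nat.zero_le _) htn.le hstep1
    rcases hph1 with ⟨k, _, hk2, hk3⟩ | hph1b
    · have := hfle k (le_trans hk2 htn.le)
      nlinarith [mul_pos (by linarith : (0:ℝ) < K) hF]
    have hD : F - f (AN tn) ≤ F * Real.exp (-(cN tn / b)) := by
      rw [hAN0, hf0, hcN0] at hph1b
      simpa using hph1b
    have hreject : b < cN tn + c w := not_le.1 htrej
    by_cases hhalf : b / 2 ≤ cN tn
    · -- Case II: enough budget used already
      have hexple : Real.exp (-(cN tn / b)) ≤ K := by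
        rw [hKdef]
        apply Real.exp_le_exp.2
        apply neg_le_neg
        rw [le_div_iff₀ hb]
        linarith
      have hfAt : f (AN tn) ≤ L := hfle tn htn.le
      linarith [mul_le_mul_of_nonneg_left hexple hF.le]
    push_neg at hhalf
    have hcw_big : b / 2 < c w := by linarith
    have hcw_le : c w ≤ b := hcb w
    -- the big element is never in any AN k
    have hwnot : ∀ k : ℕ, w ∉ AN k := by
      intro k hm
      obtain ⟨j, hj, hjk, hjacc, hje⟩ := hmem k w hm
      have hjtn : j = tn := congrArg Fin.val (huinj hje)
      subst hjtn
      exact htrej hjacc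
    set g := f (insert w (AN tn)) - f (AN tn) with hgdef
    have hgL : g ≤ L := by
      have h1 : f (insert w (AN tn)) - f (AN tn) ≤ f (insert w ∅) - f ∅ :=
        gain_mono f hsub (empty_subset (AN tn)) (hwnot tn)
      have h2 : insert w (∅ : Finset V) = {w} := rfl
      rw [h2, hf0] at h1
      exact le_trans (by linarith) (hLs w htOPT)
    have hgnn : 0 ≤ g := hgain_nonneg _ _
    by_cases hex2 : ∃ k : ℕ, ∃ hk : k < n, u ⟨k, hk⟩ ∈ OPT.erase w ∧ ¬ (cN k + c (u ⟨k, hk⟩) ≤ b)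
    case neg =>
      -- all of OPT.erase w accepted
      have hsubn : OPT.erase w ⊆ AN n := by
        intro v hv
        obtain ⟨l, rfl⟩ := hsur v (mem_of_mem_erase hv)
        rcases l with ⟨lv, hlv⟩
        by_cases hacc' : cN lv + c (u ⟨lv, hlv⟩) ≤ b
        · exact hANmono (lv + 1) n (by omega)
            (by rw [haccA lv hlv hacc']; exact mem_insert_self _ _)
        · exact absurd ⟨lv, hlv, hv, hacc'⟩ hex2
      have hsplit : F ≤ f {w} + f (OPT.erase w) := by
        have h := hsub {w} (OPT.erase w)
        have h1 : {w} ∪ OPT.erase w = OPT := by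
          rw [← insert_eq, insert_erase htOPT]
        have h2 : {w} ∩ OPT.erase w = ∅ :=
          singleton_inter_of_notMem (notMem_erase w OPT)
        rw [h1, h2, hf0] at h
        linarith
      have h3 : f (OPT.erase w) ≤ f (AN n) := hmono _ _ hsubn
      have h4 := hfle n le_rfl
      have h5 := hLs w htOPT
      nlinarith [mul_pos hF (by linarith : (0:ℝ) < K - 1/2)]
    case pos =>
      set t2n := Nat.find hex2 with ht2ndef
      obtain ⟨ht2n, ht2mem, ht2rej⟩ := Nat.find_spec hex2
      have htn_le : tn ≤ t2n :=
        Nat.find_min' hex ⟨ht2n, mem_of_mem_erase ht2mem, ht2rej⟩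
      have htne : tn ≠ t2n := by
        intro h
        exact (mem_erase.1 ht2mem).1 (congrArg u (Fin.ext h.symm))
      have htlt : tn < t2n := lt_of_le_of_ne htn_le htne
      have hcu2 : c (u ⟨t2n, ht2n⟩) ≤ b - c w := by
        have h1 : c (u ⟨t2n, ht2n⟩) ≤ ∑ v ∈ OPT.erase w, c v :=
          single_le_sum (fun v _ => (hcpos v).le) ht2mem
        have h2 : ∑ v ∈ OPT.erase w, c v = (∑ v ∈ OPT, c v) - c w :=
          sum_erase_eq_sub htOPT
        linarith
      have hM : 0 < b - c w := lt_of_lt_of_le (hcpos _) hcu2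
      have hrej2 : b < cN t2n + c (u ⟨t2n, ht2n⟩) := not_le.1 ht2rej
      have hct2 : c w < cN t2n := by linarith
      -- phase 2 step condition
      have hstep2 : ∀ (j : ℕ) (hj : j < n), tn ≤ j → j < t2n → cN j + c (u ⟨j, hj⟩) ≤ b →
          (F - g) - f (AN j) ≤
            ((b - c w) / c (u ⟨j, hj⟩)) * (f (insert (u ⟨j, hj⟩) (AN j)) - f (AN j)) := by
        intro j hj hjt hjt2 _
        have hfut : ∀ v ∈ OPT.erase w, v ∉ AN j →
            ∃ (l : ℕ) (hl : l < n), j ≤ l ∧ u ⟨l, hl⟩ = v := by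
          intro v hvO hvA
          obtain ⟨l, rfl⟩ := hsur v (mem_of_mem_erase hvO)
          rcases l with ⟨lv, hlv⟩
          refine ⟨lv, hlv, ?_, rfl⟩
          by_contra hlt'
          push_neg at hlt'
          by_cases hacc' : cN lv + c (u ⟨lv, hlv⟩) ≤ b
          · exact hvA (hANmono (lv + 1) j (by omega)
              (by rw [haccA lv hlv hacc']; exact mem_insert_self _ _))
          · exact Nat.find_min hex2 (by omega) ⟨hlv, hvO, hacc'⟩
        have hsum : (∑ v ∈ (OPT.erase w) \ AN j, c v) ≤ b - c w := by
          refine le_trans (sum_le_sum_of_subset_of_nonneg sdiff_subset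
            (fun v _ _ => (hcpos v).le)) ?_
          rw [sum_erase_eq_sub htOPT]
          linarith
        have hmaster := step_master (OPT.erase w) (b - c w) j hj hfut hsum
        have hexp := expand_lemma f hsub OPT (AN j)
        have hFle : F ≤ f (AN j ∪ OPT) := hmono OPT _ subset_union_right
        have hwmem : w ∈ OPT \ AN j := mem_sdiff.2 ⟨htOPT, hwnot j⟩
        have hsplitsum : ∑ v ∈ OPT \ AN j, (f (insert v (AN j)) - f (AN j)) =
            (f (insert w (AN j)) - f (AN j)) +
              ∑ v ∈ (OPT \ AN j).erase w, (f (insert v (AN j)) - f (AN j)) :=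
          (Finset.add_sum_erase _ _ hwmem).symm
        have herase_eq : (OPT \ AN j).erase w = (OPT.erase w) \ AN j := by
          ext x
          simp only [mem_erase, mem_sdiff]
          tauto
        have hgainw : f (insert w (AN j)) - f (AN j) ≤ g := by
          rw [hgdef]
          exact gain_mono f hsub (hANmono tn j hjt) (hwnot j)
        rw [herase_eq] at hsplitsum
        rw [hsplitsum] at hexp
        linarith
      have hph2 := phase (F - g) (b - c w) hM tn t2n htlt.le ht2n.le hstep2
      have h2L : ¬ (F ≤ 2 * L) := by
        intro h
        nlinarith [mul_pos hF (by linarith : (0:ℝ) < K - 1/2)]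
      rcases hph2 with ⟨k, _, hk2, hk3⟩ | hph2b
      · exact h2L (by linarith [hfle k (le_trans hk2 ht2n.le), hgL])
      set E := Real.exp (-((cN t2n - cN tn) / (b - c w))) with hEdef
      set E0 := Real.exp (-((c w - cN tn) / (b - c w))) with hE0def
      have hEE0 : E ≤ E0 := by
        apply Real.exp_le_exp.2
        apply neg_le_neg
        rw [div_le_div_iff₀ hM hM]
        nlinarith [hct2, hM]
      by_cases hTneg : F - g - f (AN tn) ≤ 0
      · have hRHS : (F - g - f (AN tn)) * E ≤ 0 :=
          mul_nonpos_of_nonpos_of_nonneg hTneg (Real.exp_pos _).le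
        exact h2L (by nlinarith [hfle t2n ht2n.le, hgL, hph2b])
      · push_neg at hTneg
        have hchain : F - g - f (AN t2n) ≤ (F - g - f (AN tn)) * E0 := by
          calc F - g - f (AN t2n) ≤ (F - g - f (AN tn)) * E := by linarith [hph2b]
          _ ≤ (F - g - f (AN tn)) * E0 := mul_le_mul_of_nonneg_left hEE0 hTneg.le
        set z := cN tn / b with hzdef
        set q := c w / b with hqdef
        have hbne : (b : ℝ) ≠ 0 := ne_of_gt hb
        have hMne : b - c w ≠ 0 := ne_of_gt hM
        have hE0eq : E0 = Real.exp (-((q - z) / (1 - q))) := by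
          rw [hE0def]
          congr 1
          rw [hqdef, hzdef]
          field_simp
        have hc1 : z ≤ 1/2 := by
          rw [hzdef, div_le_iff₀ hb]
          linarith
        have hc2 : q < 1 := by
          rw [hqdef, div_lt_one hb]
          linarith
        have hc3 : 1 - q < z := by
          rw [hqdef, hzdef]
          have h2 : 1 - c w / b = (b - c w) / b := by field_simp
          rw [h2, div_lt_div_iff₀ hb hb]
          nlinarith [hreject, hb]
        have hc4 : 1/2 < q := by
          rw [hqdef, lt_div_iff₀ hb]
          linarith
        have hkey := key_ineq z q hc1 hc2 hc3 hc4
        rw [← hE0eq, ← hKdef] at hkey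
        have hfAt2 : f (AN t2n) ≤ L := hfle t2n ht2n.le
        have hE0le1 : E0 ≤ 1 := by
          rw [hE0def]
          have harg : -((c w - cN tn) / (b - c w)) ≤ 0 :=
            neg_nonpos.2 (div_nonneg (by linarith) hM.le)
          calc Real.exp (-((c w - cN tn) / (b - c w))) ≤ Real.exp 0 := Real.exp_le_exp.2 harg
          _ = 1 := Real.exp_zero
        have hE0pos : 0 < E0 := Real.exp_pos _
        have s0 : g * (1 - E0) ≤ L * (1 - E0) :=
          mul_le_mul_of_nonneg_right hgL (by linarith)
        have s1 : F - (F - f (AN tn)) * E0 ≤ L * (2 - E0) := by nlinarith [hchain, hfAt2, s0]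
        have s2 : (F - f (AN tn)) * E0 ≤ (F * Real.exp (-z)) * E0 :=
          mul_le_mul_of_nonneg_right hD hE0pos.le
        have s3 := mul_le_mul_of_nonneg_left hkey hF.le
        nlinarith [mul_pos (sub_pos.2 hcon) (by linarith : (0 : ℝ) < 2 - E0)]

/-- Lemma 5.4: f(S_m) ≥ ᾱ* · f(OPT), where ᾱ* is the infimum of the simplified
optimization problem. -/
theorem stmt16 {V : Type*} [Fintype V] [DecidableEq V] [Nonempty V]
    (f : Finset V → ℝ) (c : V → ℝ) (b : ℝ)
    (hf0 : f ∅ = 0)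
    (hmono : ∀ S T : Finset V, S ⊆ T → f S ≤ f T)
    (hsub : ∀ S T : Finset V, f (S ∪ T) + f (S ∩ T) ≤ f S + f T)
    (hcpos : ∀ v : V, 0 < c v)
    (hb : 0 < b)
    (hcb : ∀ v : V, c v ≤ b)
    (u : Fin (Fintype.card V) → V) (hu : Function.Bijective u)
    (A : Fin (Fintype.card V + 1) → Finset V)
    (hA0 : A 0 = ∅)
    (hstep : ∀ i : Fin (Fintype.card V),
      ((∑ v ∈ A i.castSucc, c v) + c (u i) ≤ b →
        A i.succ = insert (u i) (A i.castSucc)) ∧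
      (¬ ((∑ v ∈ A i.castSucc, c v) + c (u i) ≤ b) →
        A i.succ = A i.castSucc))
    (hgreedy : ∀ i j : Fin (Fintype.card V), i ≤ j →
      (f (insert (u i) (A i.castSucc)) - f (A i.castSucc)) * c (u j) ≥
      (f (insert (u j) (A i.castSucc)) - f (A i.castSucc)) * c (u i))
    (OPT : Finset V) (hOPT : ∑ v ∈ OPT, c v ≤ b) :
    max (f (A (Fin.last (Fintype.card V))))
      (Finset.univ.sup' Finset.univ_nonempty fun v : V => f {v}) ≥
    sInf {α : ℝ | α ∈ Set.Icc (0 : ℝ) 1 ∧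
      ∃ x1 x2 x3 : ℝ,
        x1 ∈ Set.Icc (0 : ℝ) 1 ∧ x2 ∈ Set.Icc (0 : ℝ) 1 ∧ x3 ∈ Set.Icc (0 : ℝ) 1 ∧
        α ≥ x1 ∧
        α ≥ 1 - x1 - x2 ∧
        (1 - x3) * α ≥ (1 - x3) * x1 + (1 - 2 * x3) * x2 ∧
        x1 ≥ 1 - Real.exp (-x3)} * f OPT := by
  classical
  set S : Set ℝ := {α : ℝ | α ∈ Set.Icc (0 : ℝ) 1 ∧
      ∃ x1 x2 x3 : ℝ,
        x1 ∈ Set.Icc (0 : ℝ) 1 ∧ x2 ∈ Set.Icc (0 : ℝ) 1 ∧ x3 ∈ Set.Icc (0 : ℝ) 1 ∧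
        α ≥ x1 ∧
        α ≥ 1 - x1 - x2 ∧
        (1 - x3) * α ≥ (1 - x3) * x1 + (1 - 2 * x3) * x2 ∧
        x1 ≥ 1 - Real.exp (-x3)} with hSdef
  set L := max (f (A (Fin.last (Fintype.card V))))
      (Finset.univ.sup' Finset.univ_nonempty fun v : V => f {v}) with hLdef
  obtain ⟨hK1, hK2⟩ := kappa_bounds
  have hf_nonneg : ∀ T : Finset V, 0 ≤ f T := fun T => hf0 ▸ hmono ∅ T (empty_subset T)
  have hL0 : 0 ≤ L := le_trans (hf_nonneg _) (le_max_left _ _)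
  have hβS : (1 - Real.exp (-(1/2) : ℝ)) ∈ S := by
    refine ⟨⟨by linarith, by linarith [Real.exp_pos (-(1/2) : ℝ)]⟩,
      1 - Real.exp (-(1/2) : ℝ), 1, 1/2, ⟨by linarith, by linarith [Real.exp_pos (-(1/2) : ℝ)]⟩,
      ⟨zero_le_one, le_refl 1⟩, ⟨by norm_num, by norm_num⟩, le_refl _, by linarith, by norm_num,
      ?_⟩
    norm_num
  have hne : S.Nonempty := ⟨_, hβS⟩
  have hbdd : BddBelow S := ⟨0, fun α hα => hα.1.1⟩
  have hsinfβ : sInf S ≤ 1 - Real.exp (-(1/2) : ℝ) := csInf_le hbdd hβS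
  have hsinf0 : 0 ≤ sInf S := le_csInf hne (fun α hα => hα.1.1)
  rw [ge_iff_le]
  by_cases hF : f OPT ≤ 0
  · calc sInf S * f OPT ≤ 0 := mul_nonpos_of_nonneg_of_nonpos hsinf0 hF
    _ ≤ L := hL0
  · push_neg at hF
    have hcore := greedy_core f c b hf0 hmono hsub hcpos hb hcb (Fintype.card V) u
      hu.injective A hA0 hstep hgreedy OPT hOPT (fun v _ => hu.surjective v) L
      (le_max_left _ _)
      (fun v _ => le_trans (le_sup' (fun v : V => f {v}) (mem_univ v)) (le_max_right _ _)) hL0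
    calc sInf S * f OPT ≤ (1 - Real.exp (-(1/2) : ℝ)) * f OPT :=
          mul_le_mul_of_nonneg_right hsinfβ hF.le
    _ ≤ L := hcore
end

section
/- Let α, x1, x2, x3 ∈ [0,1] be reals satisfying: α ≥ x1; α ≥ 1 − x1 − x2; (1 − x3)·α ≥ (1 − x3)·x1 + (1 − 2·x3)·x2; and x1 ≥ 1 − exp(−x3). Then α ≥ 1 − 1/√e, i.e., α ≥ 1 − exp(−1/2). -/
lemma exp_half_bound : Real.exp (-(1/2 : ℝ)) > 3/5 := by
  rw [Real.exp_neg]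
  rw [gt_iff_lt, lt_inv_comm₀ (by norm_num) (Real.exp_pos _)]
  have h : Real.exp (1/2 : ℝ) ^ 2 = Real.exp 1 := by
    rw [← Real.exp_nat_mul]; norm_num
  nlinarith [Real.exp_one_lt_d9, Real.exp_pos (1/2 : ℝ), h]

lemma chord (t : ℝ) (h0 : 0 ≤ t) (h1 : t ≤ 1/2) :
    Real.exp (-t) ≤ 1 - 2 * (1 - Real.exp (-(1/2 : ℝ))) * t := by
  have hc := convexOn_exp.2 (Set.mem_univ (0 : ℝ)) (Set.mem_univ (-(1/2) : ℝ))
    (show (0:ℝ) ≤ 1 - 2*t by linarith) (show (0:ℝ) ≤ 2*t by linarith)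
    (show (1 - 2*t) + 2*t = 1 by ring)
  have he : (1 - 2*t) • (0:ℝ) + (2*t) • (-(1/2):ℝ) = -t := by
    simp [smul_eq_mul]; ring
  rw [he] at hc
  simp only [smul_eq_mul, Real.exp_zero] at hc
  linarith

/-- Lemma 5.5: any feasible point of the simplified optimization problem
satisfies α ≥ 1 − 1/√e = 1 − exp(−1/2). -/
theorem stmt17 (α x1 x2 x3 : ℝ)
    (hα : α ∈ Set.Icc (0 : ℝ) 1)
    (hx1 : x1 ∈ Set.Icc (0 : ℝ) 1) (hx2 : x2 ∈ Set.Icc (0 : ℝ) 1)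
    (hx3 : x3 ∈ Set.Icc (0 : ℝ) 1)
    (h1 : α ≥ x1)
    (h2 : α ≥ 1 - x1 - x2)
    (h3 : (1 - x3) * α ≥ (1 - x3) * x1 + (1 - 2 * x3) * x2)
    (h4 : x1 ≥ 1 - Real.exp (-x3)) :
    α ≥ 1 - Real.exp (-(1 / 2)) := by
  obtain ⟨hx30, hx31⟩ := hx3
  set E := Real.exp (-(1/2 : ℝ)) with hE
  have hE3 : E > 3/5 := exp_half_bound
  rcases le_or_gt (1/2 : ℝ) x3 with hc | hc
  · -- x3 ≥ 1/2
    have : Real.exp (-x3) ≤ E := by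
      apply Real.exp_le_exp.mpr; linarith
    linarith
  · -- x3 < 1/2
    have hch := chord x3 hx30 (le_of_lt hc)
    -- from h2: x2 ≥ 1 - x1 - α
    have h2' : x2 ≥ 1 - x1 - α := by linarith
    have hnn : (0:ℝ) ≤ 1 - 2*x3 := by linarith
    have key : (1 - x3) * α ≥ (1 - x3) * x1 + (1 - 2*x3) * (1 - x1 - α) := by
      nlinarith [mul_le_mul_of_nonneg_left h2' hnn]
    -- (2-3x3)α ≥ x3*x1 + 1-2x3
    have key2 : (2 - 3*x3) * α ≥ x3 * x1 + 1 - 2*x3 := by nlinarith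
    -- x1 ≥ 1 - e^{-x3} ≥ 2(1-E)x3
    have hx1b : x1 ≥ 2 * (1 - E) * x3 := by linarith
    have key3 : (2 - 3*x3) * α ≥ 2 * (1 - E) * x3^2 + 1 - 2*x3 := by
      nlinarith [mul_le_mul_of_nonneg_left hx1b hx30]
    -- quadratic: 2(1-E)x3² + 1 - 2x3 ≥ (2-3x3)(1-E) since (2x3-1)((1-E)x3-(2E-1)) ≥ 0
    have hq : 2 * (1 - E) * x3^2 + 1 - 2*x3 ≥ (2 - 3*x3) * (1 - E) := by
      nlinarith [mul_nonneg (by linarith : (0:ℝ) ≤ 1 - 2*x3)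
        (by nlinarith : (0:ℝ) ≤ (2*E - 1) - (1 - E)*x3)]
    have hpos : (0:ℝ) < 2 - 3*x3 := by linarith
    nlinarith [key3, hq, hpos]
end

section
/- Let k ≥ 1 and let u_1, …, u_k be distinct elements of V with prefix sets S_i := {u_1, …, u_i} (S_0 = ∅), satisfying the greedy rule: for every 0 ≤ i < k and every v ∈ V \ S_i, f(u_{i+1} ∣ S_i) ≥ f(v ∣ S_i). Define Δ_k(S) := max over finsets T ⊆ V \ S with |T| ≤ k of ∑_{v ∈ T} f(v∣S), and Λ := min over 0 ≤ i ≤ k of ( f(S_i) + Δ_k(S_i) ). Then for every OPT ⊆ V with |OPT| ≤ k, it holds that f(OPT) ≤ Λ and (1 − 1/e)·Λ ≤ f(S_k). -/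
open Finset

/-- Theorem 5.6 (cardinality constraint): with Λ := min_{0 ≤ i ≤ k} (f(S_i) + Δ_k(S_i)),
where Δ_k(S) is the max of ∑_{v ∈ T} f(v∣S) over T ⊆ V \ S with |T| ≤ k,
every OPT with |OPT| ≤ k satisfies f(OPT) ≤ Λ and (1 − 1/e)·Λ ≤ f(S_k). -/
theorem stmt18 {V : Type*} [Fintype V] [DecidableEq V]
    (f : Finset V → ℝ)
    (hf0 : f ∅ = 0)
    (hmono : ∀ S T : Finset V, S ⊆ T → f S ≤ f T)
    (hsub : ∀ S T : Finset V, f (S ∪ T) + f (S ∩ T) ≤ f S + f T)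
    (k : ℕ) (hk : 1 ≤ k)
    (u : ℕ → V)
    (hinj : ∀ i j : ℕ, i < k → j < k → u i = u j → i = j)
    (S : ℕ → Finset V) (hS : ∀ i : ℕ, S i = (Finset.range i).image u)
    (hgreedy : ∀ i : ℕ, i < k → ∀ v ∈ (Finset.univ : Finset V) \ S i,
      f (insert (u i) (S i)) - f (S i) ≥ f (insert v (S i)) - f (S i))
    (Δ : Finset V → ℝ)
    (hΔ : ∀ X : Finset V, IsGreatest
      {y : ℝ | ∃ T : Finset V, T ⊆ Finset.univ \ X ∧ T.card ≤ k ∧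
        y = ∑ v ∈ T, (f (insert v X) - f X)} (Δ X)) :
    ∀ OPT : Finset V, OPT.card ≤ k →
      f OPT ≤ (Finset.range (k + 1)).inf' Finset.nonempty_range_add_one
        (fun i => f (S i) + Δ (S i)) ∧
      (1 - 1 / Real.exp 1) * (Finset.range (k + 1)).inf' Finset.nonempty_range_add_one
        (fun i => f (S i) + Δ (S i)) ≤ f (S k) := by
  intro OPT hOPT
  -- marginal gains are nonnegative
  have hmarg : ∀ (v : V) (X : Finset V), 0 ≤ f (insert v X) - f X := by
    intro v X
    have := hmono X (insert v X) (Finset.subset_insert v X)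
    linarith
  -- diminishing returns
  have hdim : ∀ (a : V) (X U : Finset V), X ⊆ U →
      f (insert a U) - f U ≤ f (insert a X) - f X := by
    intro a X U hXU
    by_cases ha : a ∈ U
    · rw [Finset.insert_eq_self.mpr ha]
      simpa using hmarg a X
    · have h1 : insert a X ∪ U = insert a U := by
        rw [Finset.insert_union, Finset.union_eq_right.mpr hXU]
      have h2 : insert a X ∩ U = X := by
        ext x
        simp only [Finset.mem_inter, Finset.mem_insert]
        constructor
        · rintro ⟨(rfl | hx), hxU⟩
          · exact absurd hxU ha
          · exact hx
        · intro hx; exact ⟨Or.inr hx, hXU hx⟩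
      have := hsub (insert a X) U
      rw [h1, h2] at this
      linarith
  -- subadditivity over marginals
  have hsum : ∀ (X T : Finset V), f (X ∪ T) ≤ f X + ∑ v ∈ T, (f (insert v X) - f X) := by
    intro X T
    induction T using Finset.induction with
    | empty => simp
    | @insert a T ha ih =>
      have h1 : X ∪ insert a T = insert a (X ∪ T) := by
        rw [Finset.union_insert]
      have h2 := hdim a X (X ∪ T) Finset.subset_union_left
      rw [Finset.sum_insert ha, h1]
      linarith
  -- Δ is nonnegative
  have hΔ0 : ∀ X : Finset V, 0 ≤ Δ X := by
    intro X
    apply (hΔ X).2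
    exact ⟨∅, by simp, by simp, by simp⟩
  -- each term f(S i) + Δ(S i) is nonnegative
  have hterm0 : ∀ i : ℕ, 0 ≤ f (S i) + Δ (S i) := by
    intro i
    have h1 : f ∅ ≤ f (S i) := hmono ∅ (S i) (Finset.empty_subset _)
    have := hΔ0 (S i)
    linarith [h1, hf0]
  set Λ := (Finset.range (k + 1)).inf' Finset.nonempty_range_add_one
      (fun i => f (S i) + Δ (S i)) with hΛdef
  have hΛ0 : 0 ≤ Λ := by
    apply Finset.le_inf'
    intro i _
    exact hterm0 i
  have hΛle : ∀ i : ℕ, i ≤ k → Λ ≤ f (S i) + Δ (S i) := by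
    intro i hi
    exact Finset.inf'_le _ (Finset.mem_range.mpr (by omega))
  constructor
  · -- Part 1
    apply Finset.le_inf'
    intro i _
    have h1 : f OPT ≤ f (S i ∪ (OPT \ S i)) := by
      apply hmono
      intro x hx
      by_cases h : x ∈ S i
      · exact Finset.mem_union_left _ h
      · exact Finset.mem_union_right _ (Finset.mem_sdiff.mpr ⟨hx, h⟩)
    have h2 := hsum (S i) (OPT \ S i)
    have h3 : ∑ v ∈ OPT \ S i, (f (insert v (S i)) - f (S i)) ≤ Δ (S i) := by
      apply (hΔ (S i)).2
      refine ⟨OPT \ S i, ?_, ?_, rfl⟩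
      · intro x hx
        simp only [Finset.mem_sdiff, Finset.mem_univ, true_and] at *
        exact hx.2
      · exact le_trans (Finset.card_le_card (Finset.sdiff_subset)) hOPT
    show f OPT ≤ f (S i) + Δ (S i)
    linarith
  · -- Part 2
    have hSsucc : ∀ i : ℕ, S (i + 1) = insert (u i) (S i) := by
      intro i
      rw [hS, hS, Finset.range_add_one, Finset.image_insert]
    -- key recursion
    have hstep : ∀ i : ℕ, i < k →
        Λ - f (S (i + 1)) ≤ (1 - 1 / (k : ℝ)) * (Λ - f (S i)) := by
      intro i hi
      set g := f (insert (u i) (S i)) - f (S i) with hg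
      have hg0 : 0 ≤ g := hmarg _ _
      -- Δ (S i) ≤ k * g
      have hΔg : Δ (S i) ≤ (k : ℝ) * g := by
        obtain ⟨T, hT1, hT2, hT3⟩ := (hΔ (S i)).1
        rw [hT3]
        have hle : ∀ v ∈ T, f (insert v (S i)) - f (S i) ≤ g := by
          intro v hv
          exact hgreedy i hi v (hT1 hv)
        calc ∑ v ∈ T, (f (insert v (S i)) - f (S i)) ≤ ∑ _v ∈ T, g :=
              Finset.sum_le_sum hle
          _ = (T.card : ℝ) * g := by rw [Finset.sum_const, nsmul_eq_mul]
          _ ≤ (k : ℝ) * g := by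
              apply mul_le_mul_of_nonneg_right _ hg0
              exact_mod_cast hT2
      have h1 : Λ ≤ f (S i) + (k : ℝ) * g := le_trans (hΛle i (le_of_lt hi)) (by linarith)
      have hkpos : (0 : ℝ) < (k : ℝ) := by exact_mod_cast hk
      have h2 : (Λ - f (S i)) / (k : ℝ) ≤ g := by
        rw [div_le_iff₀ hkpos]
        linarith [mul_comm g (k : ℝ)]
      rw [hSsucc i]
      have : Λ - f (insert (u i) (S i)) = (Λ - f (S i)) - g := by ring
      rw [this]
      have h3 : (1 - 1 / (k : ℝ)) * (Λ - f (S i)) = (Λ - f (S i)) - (Λ - f (S i)) / (k : ℝ) := by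
        field_simp
      rw [h3]
      linarith
    have hc0 : (0 : ℝ) ≤ 1 - 1 / (k : ℝ) := by
      have hk1 : (1 : ℝ) ≤ (k : ℝ) := by exact_mod_cast hk
      have : 1 / (k : ℝ) ≤ 1 := by
        apply div_le_one_of_le₀ hk1
        linarith
      linarith
    -- iterate
    have hiter : ∀ i : ℕ, i ≤ k → Λ - f (S i) ≤ (1 - 1 / (k : ℝ)) ^ i * Λ := by
      intro i
      induction i with
      | zero =>
        intro _
        have : S 0 = ∅ := by rw [hS]; simp
        rw [this, hf0]
        simp
      | succ n ih =>
        intro hn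
        have h1 := hstep n (by omega)
        have h2 := ih (by omega)
        calc Λ - f (S (n + 1)) ≤ (1 - 1 / (k : ℝ)) * (Λ - f (S n)) := h1
          _ ≤ (1 - 1 / (k : ℝ)) * ((1 - 1 / (k : ℝ)) ^ n * Λ) :=
              mul_le_mul_of_nonneg_left h2 hc0
          _ = (1 - 1 / (k : ℝ)) ^ (n + 1) * Λ := by ring
    have hfinal := hiter k le_rfl
    -- (1 - 1/k)^k ≤ exp (-1)
    have hexp : (1 - 1 / (k : ℝ)) ^ k ≤ Real.exp (-1) := by
      have h1 : 1 - 1 / (k : ℝ) ≤ Real.exp (-(1 / (k : ℝ))) := by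
        have := Real.add_one_le_exp (-(1 / (k : ℝ)))
        linarith
      calc (1 - 1 / (k : ℝ)) ^ k ≤ (Real.exp (-(1 / (k : ℝ)))) ^ k :=
            pow_le_pow_left₀ hc0 h1 k
        _ = Real.exp ((k : ℝ) * (-(1 / (k : ℝ)))) := by
            rw [← Real.exp_nat_mul]
        _ = Real.exp (-1) := by
            congr 1
            have hkne : (k : ℝ) ≠ 0 := by positivity
            field_simp
    have h4 : (1 - 1 / (k : ℝ)) ^ k * Λ ≤ Real.exp (-1) * Λ :=
      mul_le_mul_of_nonneg_right hexp hΛ0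
    have h5 : Real.exp (-1) = 1 / Real.exp 1 := by
      rw [Real.exp_neg]; ring
    rw [h5] at h4
    nlinarith [hfinal, h4]
end
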